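/- arXiv:math/0212001 — 11 statements merged into one kernel-verified Lean document; each statement's English description precedes it below -/
import Mathlib

section
/- The number of parking functions on {1,...,n} equals (n+1)^(n-1). -/
/-!
Pollak's circular argument. Put `n + 1` parking spots on a circle, so that functions
`Fin n → ZMod (n + 1)` are the `(n + 1) ^ n` preference lists on the circle, and adding a constant
rotates a list. Writing `c i` for the number of cars preferring spot `i`, a rotation is a parking
function exactly when all partial sums of `c` from its starting spot dominate their length; since
`∑ c = n` is one less than the period, the cycle lemma gives exactly one such rotation in every
orbit. Hence `(n + 1) * #PF(n) = (n + 1) ^ n`.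
-/

open Finset

/-- `f : Fin n → Fin n` (thought of as a function `{1,…,n} → {1,…,n}`) is a parking
function if for every `k ≤ n` the preimage of `{1,…,k}` has at least `k` elements. -/
def IsParkingFunction (n : ℕ) (f : Fin n → Fin n) : Prop :=
  ∀ k ≤ n, k ≤ (Finset.univ.filter (fun x => (f x : ℕ) < k)).card

theorem Nat.card_eq_card_mul_card_of_existsUnique_vadd {G X : Type*} [AddGroup G]
    [AddAction G X] (P : X → Prop) (h : ∀ x, ∃! g : G, P (g +ᵥ x)) :
    Nat.card X = Nat.card G * Nat.card {x // P x} := by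
  rw [← Nat.card_prod]
  refine (Nat.card_eq_of_bijective (fun p : G × {x // P x} => -p.1 +ᵥ (p.2 : X))
    ⟨?_, ?_⟩).symm
  · rintro ⟨g, y, hy⟩ ⟨g', y', hy'⟩ hyy'
    dsimp only at hyy'
    obtain rfl : g = g' :=
      (h _).unique (by rwa [vadd_neg_vadd]) (by rwa [hyy', vadd_neg_vadd] : P (g' +ᵥ (-g +ᵥ y)))
    obtain rfl : y = y' := by simpa using hyy'
    rfl
  · intro x
    obtain ⟨g, hg, -⟩ := h x
    exact ⟨(g, ⟨g +ᵥ x, hg⟩), neg_vadd_vadd g x⟩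

theorem ZMod.sum_range_add_natCast {M : Type*} [AddCommMonoid M] {N : ℕ} [NeZero N]
    (f : ZMod N → M) (u : ZMod N) : ∑ j ∈ range N, f (u + j) = ∑ i, f i := by
  rw [← Equiv.sum_comp (Equiv.addLeft u)]
  exact Finset.sum_nbij' (fun j => (j : ZMod N)) ZMod.val (by simp) (by simp [ZMod.val_lt])
    (fun j hj => ZMod.val_natCast_of_lt (mem_range.1 hj)) (fun i _ => ZMod.natCast_zmod_val i)
    (fun _ _ => rfl)

theorem ZMod.card_filter_val_sub_lt {α : Type*} [Fintype α] {N : ℕ} [NeZero N]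
    (u : α → ZMod N) (t : ZMod N) {k : ℕ} (hk : k ≤ N) :
    #{x | (u x - t).val < k} = ∑ j ∈ range k, #{x | u x = t + j} := by
  rw [card_eq_sum_card_fiberwise (f := fun x => (u x - t).val) (t := range k)
    (fun x hx => by simpa using hx)]
  refine sum_congr rfl fun j hj => ?_
  rw [filter_filter]
  refine congrArg Finset.card (filter_congr fun x _ => ?_)
  have hjN : j < N := (mem_range.1 hj).trans_le hk
  rw [← sub_eq_iff_eq_add', ← (ZMod.val_injective N).eq_iff, ZMod.val_natCast_of_lt hjN]
  grind

namespace CycleLemma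

variable {n : ℕ} (c : ZMod (n + 1) → ℤ)

def defect (u : ℕ) : ℤ := ∑ j ∈ range u, c j - u

theorem defect_add (u k : ℕ) :
    defect c (u + k) = defect c u + (∑ j ∈ range k, c (u + j) - k) := by
  simp only [defect, sum_range_add, Nat.cast_add]
  ring

variable {c}

theorem defect_add_period (hc : ∑ i, c i = n) (u : ℕ) :
    defect c (u + (n + 1)) = defect c u - 1 := by
  rw [defect_add, ZMod.sum_range_add_natCast, hc]
  push_cast
  ring

theorem defect_le_defect_add_iff (u : ℕ) :
    (∀ k ≤ n, defect c u ≤ defect c (u + k)) ↔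
      ∀ k ≤ n, (k : ℤ) ≤ ∑ j ∈ range k, c (u + j) := by
  simp only [defect_add, le_add_iff_nonneg_right, sub_nonneg]

theorem exists_defect_le (hc : ∑ i, c i = n) :
    ∃ m < n + 1, ∀ k ≤ n, defect c m ≤ defect c (m + k) := by
  obtain ⟨m₀, hm₀, hm₀_min⟩ :=
    exists_min_image (range (n + 1)) (defect c) nonempty_range_add_one
  have hmin : ∃ m, ∀ v ∈ range (n + 1), defect c m ≤ defect c v := ⟨m₀, hm₀_min⟩
  -- Take the first minimiser: a later index `m + k` is `r + (n + 1)` with `r < m`, so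
  -- `defect c (m + k) = defect c r - 1 ≥ defect c m` because `r` is not a minimiser.
  obtain ⟨m, hm, hm_min, hm_first⟩ : ∃ m ≤ m₀,
      (∀ v ∈ range (n + 1), defect c m ≤ defect c v) ∧
      ∀ r < m, ∃ v ∈ range (n + 1), defect c v < defect c r :=
    ⟨Nat.find hmin, Nat.find_min' hmin hm₀_min, Nat.find_spec hmin,
      fun r hr => by simpa using Nat.find_min hmin hr⟩
  refine ⟨m, hm.trans_lt (mem_range.1 hm₀), fun k hk => ?_⟩
  rcases lt_or_ge (m + k) (n + 1) with hlt | hge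
  · exact hm_min _ (mem_range.2 hlt)
  · obtain ⟨v, hv, hvr⟩ := hm_first (m + k - (n + 1)) (by omega)
    have := hm_min v hv
    rw [show m + k = m + k - (n + 1) + (n + 1) by omega, defect_add_period hc]
    omega

theorem eq_of_defect_le (hc : ∑ i, c i = n) {m m' : ℕ} (hm : m < n + 1) (hm' : m' < n + 1)
    (h : ∀ k ≤ n, defect c m ≤ defect c (m + k))
    (h' : ∀ k ≤ n, defect c m' ≤ defect c (m' + k)) :
    m = m' := by
  wlog hlt : m < m' generalizing m m'
  · obtain heq | hlt := (not_lt.1 hlt).eq_or_lt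
    · exact heq.symm
    · exact (this hm' hm h' h hlt).symm
  have h₁ := h (m' - m) (by omega)
  have h₂ := h' (m + (n + 1) - m') (by omega)
  rw [Nat.add_sub_cancel' hlt.le] at h₁
  rw [Nat.add_sub_cancel' (by omega), defect_add_period hc] at h₂
  omega

theorem existsUnique_rotation (hc : ∑ i, c i = n) :
    ∃! t : ZMod (n + 1), ∀ k ≤ n, (k : ℤ) ≤ ∑ j ∈ range k, c (t + j) := by
  obtain ⟨m, hm, hgood⟩ := exists_defect_le hc
  refine ⟨m, (defect_le_defect_add_iff m).1 hgood, fun t ht => ?_⟩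
  rw [← ZMod.natCast_zmod_val t] at ht ⊢
  rw [eq_of_defect_le hc (ZMod.val_lt t) hm ((defect_le_defect_add_iff _).2 ht) hgood]

end CycleLemma

def IsParkingFunctionMod (n : ℕ) (h : Fin n → ZMod (n + 1)) : Prop :=
  ∀ k ≤ n, k ≤ #{x | (h x).val < k}

namespace IsParkingFunctionMod

variable {n : ℕ}

theorem val_lt {h : Fin n → ZMod (n + 1)} (hh : IsParkingFunctionMod n h) (x : Fin n) :
    (h x).val < n := by
  have hall : #(univ : Finset (Fin n)) ≤ #{x | (h x).val < n} := by simpa using hh n le_rfl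
  rw [(card_filter_le _ _).ge_iff_eq, card_filter_eq_iff] at hall
  exact hall x (mem_univ x)

theorem sub_iff (u : Fin n → ZMod (n + 1)) (t : ZMod (n + 1)) :
    IsParkingFunctionMod n (fun x => u x - t) ↔
      ∀ k ≤ n, (k : ℤ) ≤ ∑ j ∈ range k, (#{x | u x = t + j} : ℤ) := by
  refine forall₂_congr fun k hk => ?_
  rw [ZMod.card_filter_val_sub_lt u t (by omega), ← Nat.cast_sum, Nat.cast_le]

theorem existsUnique_vadd (u : Fin n → ZMod (n + 1)) :
    ∃! t : ZMod (n + 1), IsParkingFunctionMod n (t +ᵥ u) := by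
  have hsum : ∑ i, (#{x | u x = i} : ℤ) = n := by
    rw [← Nat.cast_sum, ← card_eq_sum_card_fiberwise (fun x _ => mem_univ (u x)), card_univ,
      Fintype.card_fin]
  have hvadd (t : ZMod (n + 1)) : -t +ᵥ u = fun x => u x - t := by
    ext x
    rw [Pi.vadd_apply, vadd_eq_add, neg_add_eq_sub]
  refine (Equiv.neg _).existsUnique_congr_right.1 ?_
  simpa only [Equiv.neg_apply, hvadd, sub_iff] using CycleLemma.existsUnique_rotation hsum

end IsParkingFunctionMod

def parkingFunctionEquiv (n : ℕ) :
    {f : Fin n → Fin n // IsParkingFunction n f} ≃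
      {h : Fin n → ZMod (n + 1) // IsParkingFunctionMod n h} where
  toFun f := ⟨fun x => (f.1 x : ℕ), fun k hk => by
    simpa only [ZMod.val_natCast_of_lt (Nat.lt_succ_of_lt (f.1 _).isLt)] using f.2 k hk⟩
  invFun h := ⟨fun x => ⟨(h.1 x).val, h.2.val_lt x⟩, h.2⟩
  left_inv f := by ext x; exact ZMod.val_natCast_of_lt (Nat.lt_succ_of_lt (f.1 x).isLt)
  right_inv h := by ext x; exact ZMod.natCast_zmod_val (h.1 x)

/-- The number of parking functions on `{1,…,n}` equals `(n+1)^(n-1)`. -/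
theorem stmt_0 (n : ℕ) :
    Nat.card {f : Fin n → Fin n // IsParkingFunction n f} = (n + 1) ^ (n - 1) := by
  have hcount := Nat.card_eq_card_mul_card_of_existsUnique_vadd _
    (IsParkingFunctionMod.existsUnique_vadd (n := n))
  rw [Nat.card_fun, Nat.card_zmod, Nat.card_eq_fintype_card (α := Fin n), Fintype.card_fin,
    ← Nat.card_congr (parkingFunctionEquiv n)] at hcount
  refine Nat.eq_of_mul_eq_mul_left n.succ_pos ?_
  rw [← hcount]
  cases n <;> simp [pow_succ']
end

section
/- The number of Raney sequences in R_n^s, i.e. subsets H ⊆ {1,...,sn} with |H| = n and |H ∩ {1,...,k}| ≥ k/s for all k, equals (sn)! / (n! · ((s-1)n + 1)!), the higher Catalan number. -/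
/-- The set of Raney sequences `R_n^s`: subsets `H ⊆ {1,…,sn}` with `|H| = n` such that
`|H ∩ {1,…,k}| ≥ k/s` for all `k` (the inequality being `k ≤ s · |H ∩ {1,…,k}|`). -/
def RaneySet (s n : ℕ) : Set (Finset ℕ) :=
  {H | H ⊆ Finset.Icc 1 (s * n) ∧ H.card = n ∧
    ∀ k, 1 ≤ k → k ≤ s * n → k ≤ s * (H ∩ Finset.Icc 1 k).card}

namespace RaneyAux


def cnt (K : Finset ℕ) (N t : ℕ) : ℕ :=
  ((Finset.range t).filter (fun j => j % N ∈ K)).card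

lemma cnt_succ (K : Finset ℕ) (N t : ℕ) :
    cnt K N (t+1) = cnt K N t + if t % N ∈ K then 1 else 0 := by
  unfold cnt
  rw [Finset.range_add_one, Finset.filter_insert]
  split <;> simp [Finset.card_insert_of_notMem]

lemma cnt_window (K : Finset ℕ) (N : ℕ) (hK : K ⊆ Finset.range N) (t : ℕ) :
    cnt K N (t+N) = cnt K N t + K.card := by
  induction t with
  | zero =>
    have h1 : (Finset.range N).filter (fun j => j % N ∈ K) = K := by
      rw [show ((Finset.range N).filter (fun j => j % N ∈ K))
          = ((Finset.range N).filter (fun j => j ∈ K)) from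
        Finset.filter_congr (fun j hj => by
          rw [Nat.mod_eq_of_lt (Finset.mem_range.1 hj)]),
        Finset.filter_mem_eq_inter, Finset.inter_eq_right.2 hK]
    simp [cnt, h1]
  | succ t ih =>
    have : t + 1 + N = (t + N) + 1 := by omega
    rw [this, cnt_succ, ih, cnt_succ, Nat.add_mod_right]
    omega

lemma hcnt_succ (H : Finset ℕ) (k : ℕ) :
    (H ∩ Finset.Icc 1 (k+1)).card
      = (H ∩ Finset.Icc 1 k).card + if k+1 ∈ H then 1 else 0 := by
  have h1 : Finset.Icc 1 (k+1) = insert (k+1) (Finset.Icc 1 k) :=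
    (Finset.insert_Icc_right_eq_Icc_add_one (by omega)).symm
  rw [h1]
  by_cases h : k + 1 ∈ H
  · rw [Finset.inter_insert_of_mem h, Finset.card_insert_of_notMem (by simp), if_pos h]
  · rw [Finset.inter_insert_of_notMem h, if_neg h]; omega

def hset (s n : ℕ) (K : Finset ℕ) (t : ℕ) : Finset ℕ :=
  (Finset.Icc 1 (s*n)).filter (fun x => (t + (x-1)) % (s*n+1) ∈ K)

lemma cnt_hset (s n : ℕ) (K : Finset ℕ) (t : ℕ) :
    ∀ k, k ≤ s * n →
      cnt K (s*n+1) (t+k) = cnt K (s*n+1) t + (hset s n K t ∩ Finset.Icc 1 k).card := by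
  intro k
  induction k with
  | zero => simp
  | succ k ih =>
    intro hk
    rw [show t + (k+1) = (t+k) + 1 by omega, cnt_succ, ih (by omega), hcnt_succ]
    have hiff : (k+1 ∈ hset s n K t) ↔ ((t+k) % (s*n+1) ∈ K) := by
      simp only [hset, Finset.mem_filter, Finset.mem_Icc]
      constructor
      · rintro ⟨-, h⟩; simpa using h
      · intro h; exact ⟨by omega, by simpa using h⟩
    by_cases h : (t+k) % (s*n+1) ∈ K
    · rw [if_pos h, if_pos (hiff.2 h)]; omega
    · rw [if_neg h, if_neg (fun hh => h (hiff.1 hh))]; omega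

def shiftmap (s n t : ℕ) : ℕ → ℕ := fun x => (t + (x-1)) % (s*n+1)

lemma mod_window_inj {N a b : ℕ} (h : a % N = b % N) (h1 : b < a + N) (h2 : a < b + N) :
    a = b := by
  rcases Nat.eq_zero_or_pos N with hN | hN
  · subst hN; simpa using h
  · have : (N:ℤ) ∣ (b - a : ℤ) := (Nat.modEq_iff_dvd (n := N)).1 h
    obtain ⟨c, hc⟩ := this
    have hNz : (0:ℤ) < N := by exact_mod_cast hN
    have hb : (b:ℤ) - a < N := by omega
    have ha : (a:ℤ) - b < N := by omega
    have hc0 : c = 0 := by nlinarith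
    rw [hc0, mul_zero] at hc
    omega

lemma shiftmap_injOn (s n t : ℕ) :
    Set.InjOn (shiftmap s n t) (Finset.Icc 1 (s*n)) := by
  intro x hx y hy hxy
  simp only [Finset.coe_Icc, Set.mem_Icc] at hx hy
  have := mod_window_inj (N := s*n+1) (a := t + (x-1)) (b := t + (y-1)) hxy
    (by omega) (by omega)
  omega

lemma hset_image (s n t : ℕ) (H : Finset ℕ) (hH : H ⊆ Finset.Icc 1 (s*n)) :
    hset s n (Finset.image (shiftmap s n t) H) t = H := by
  ext x
  simp only [hset, Finset.mem_filter, Finset.mem_image]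
  constructor
  · rintro ⟨hx, y, hy, hxy⟩
    have hyI := Finset.mem_Icc.1 (hH hy)
    have hxI := Finset.mem_Icc.1 hx
    have : y = x := by
      have := mod_window_inj (N := s*n+1) (a := t + (y-1)) (b := t + (x-1))
        hxy (by omega) (by omega)
      omega
    rwa [← this]
  · intro hx
    exact ⟨hH hx, x, hx, rfl⟩

def gfun (s : ℕ) (K : Finset ℕ) (N t : ℕ) : ℤ := s * cnt K N t - t

lemma gfun_shift (s n : ℕ) (K : Finset ℕ) (hK : K ⊆ Finset.range (s*n+1))
    (hcard : K.card = n) (t : ℕ) :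
    gfun s K (s*n+1) (t + (s*n+1)) = gfun s K (s*n+1) t - 1 := by
  unfold gfun
  rw [cnt_window K _ hK, hcard]
  push_cast
  ring

/-- goodness of shift t for K -/
def Good (s n : ℕ) (K : Finset ℕ) (t : ℕ) : Prop :=
  ∀ k, 1 ≤ k → k < s*n+1 → gfun s K (s*n+1) t ≤ gfun s K (s*n+1) (t+k)

lemma cycle_lemma (N : ℕ) (hN : 0 < N) (g : ℕ → ℤ) (hg : ∀ t, g (t+N) = g t - 1) :
    ∃! t, t < N ∧ ∀ k, 1 ≤ k → k < N → g t ≤ g (t+k) := by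
  have hex : ∃ t, t < N ∧ ∀ u < N, g t ≤ g u := by
    obtain ⟨t, ht, hmin⟩ := Finset.exists_min_image (Finset.range N) g
      ⟨0, Finset.mem_range.2 hN⟩
    exact ⟨t, Finset.mem_range.1 ht, fun u hu => hmin u (Finset.mem_range.2 hu)⟩
  set t := Nat.find hex with htdef
  obtain ⟨htN, hmin⟩ := Nat.find_spec hex
  have hstrict : ∀ j, j < t → g t < g j := by
    intro j hj
    have hjN : j < N := lt_trans hj htN
    have := Nat.find_min hex hj
    push_neg at this
    obtain ⟨u, huN, hu⟩ := this hjN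
    exact lt_of_le_of_lt (hmin u huN) hu
  have hgood : ∀ k, 1 ≤ k → k < N → g t ≤ g (t+k) := by
    intro k hk1 hkN
    by_cases h : t + k < N
    · exact hmin _ h
    · push_neg at h
      set j := t + k - N with hjdef
      have hje : j + N = t + k := by omega
      have hjt : j < t := by omega
      have : g (t+k) = g j - 1 := by rw [← hje, hg]
      have := hstrict j hjt
      omega
  refine ⟨t, ⟨htN, hgood⟩, ?_⟩
  have key : ∀ a b, a < N → b < N →
      (∀ k, 1 ≤ k → k < N → g a ≤ g (a+k)) →
      (∀ k, 1 ≤ k → k < N → g b ≤ g (b+k)) → a < b → False := by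
    intro a b haN hbN hga hgb hab
    have h1 : g a ≤ g b := by
      have := hga (b - a) (by omega) (by omega)
      rwa [show a + (b - a) = b by omega] at this
    have h2 : g b ≤ g a - 1 := by
      have := hgb (a + N - b) (by omega) (by omega)
      rwa [show b + (a + N - b) = a + N by omega, hg] at this
    omega
  intro y ⟨hyN, hy⟩
  rcases lt_trichotomy y t with h | h | h
  · exact absurd (key y t hyN htN hy hgood h) (fun h => h)
  · exact h
  · exact absurd (key t y htN hyN hgood hy h) (fun h => h)

/-- surjection side: a good shift of K gives a Raney set whose image is K -/
lemma good_to_raney (s n : ℕ) (hs : 0 < s) (hn : 0 < n) (K : Finset ℕ)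
    (hK : K ⊆ Finset.range (s*n+1)) (hcard : K.card = n) (t : ℕ)
    (hg : Good s n K t) :
    hset s n K t ∈ RaneySet s n ∧ Finset.image (shiftmap s n t) (hset s n K t) = K := by
  set N := s*n+1 with hN
  set H := hset s n K t with hHdef
  have hH : H ⊆ Finset.Icc 1 (s*n) := Finset.filter_subset _ _
  have hsn1 : 1 ≤ s*n := Nat.one_le_iff_ne_zero.2 (by positivity)
  -- the last position is not in K
  have hlast : (t + s*n) % N ∉ K := by
    intro hmem
    have e1 : cnt K N (t+N) = cnt K N (t+s*n) + 1 := by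
      rw [show t + N = (t + s*n) + 1 by omega, cnt_succ, if_pos hmem]
    have e2 := hg (s*n) hsn1 (by omega)
    have e3 := gfun_shift s n K hK hcard t
    simp only [gfun] at e2 e3
    rw [e1] at e3
    push_cast at e2 e3
    have hs' : (1:ℤ) ≤ s := by exact_mod_cast hs
    nlinarith [e2, e3]
  have ecnt : ∀ k, k ≤ s*n →
      cnt K N (t+k) = cnt K N t + (H ∩ Finset.Icc 1 k).card :=
    cnt_hset s n K t
  -- card H = n
  have hHI : H ∩ Finset.Icc 1 (s*n) = H := Finset.inter_eq_left.2 hH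
  have ecard : H.card = n := by
    have e1 := ecnt (s*n) le_rfl
    have e2 : cnt K N (t+N) = cnt K N (t+s*n) := by
      rw [show t + N = (t + s*n) + 1 by omega, cnt_succ, if_neg hlast]; omega
    have e3 := cnt_window K N hK t
    rw [hcard] at e3
    rw [hHI] at e1
    omega
  refine ⟨⟨hH, ecard, ?_⟩, ?_⟩
  · -- Raney inequalities
    intro k hk1 hk2
    have e1 := ecnt k hk2
    have e2 := hg k hk1 (by omega)
    simp only [gfun] at e2
    rw [e1] at e2
    push_cast at e2
    have : (k:ℤ) ≤ s * (H ∩ Finset.Icc 1 k).card := by nlinarith [e2]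
    exact_mod_cast this
  · -- image equals K
    have hsub : Finset.image (shiftmap s n t) H ⊆ K := by
      intro j hj
      obtain ⟨x, hx, hxe⟩ := Finset.mem_image.1 hj
      have := (Finset.mem_filter.1 hx).2
      rwa [← hxe]
    have hcard2 : (Finset.image (shiftmap s n t) H).card = H.card :=
      Finset.card_image_of_injOn ((shiftmap_injOn s n t).mono
        (Finset.coe_subset.2 hH))
    exact Finset.eq_of_subset_of_card_le hsub (by omega)

/-- injection side: image of a Raney set at any shift is good -/
lemma raney_to_good (s n : ℕ) (hs : 0 < s) (H : Finset ℕ) (hH : H ∈ RaneySet s n)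
    (t : ℕ) :
    (Finset.image (shiftmap s n t) H) ⊆ Finset.range (s*n+1) ∧
    (Finset.image (shiftmap s n t) H).card = n ∧
    Good s n (Finset.image (shiftmap s n t) H) t := by
  obtain ⟨hH1, hH2, hH3⟩ := hH
  set K := Finset.image (shiftmap s n t) H with hKdef
  have hKsub : K ⊆ Finset.range (s*n+1) := by
    intro j hj
    obtain ⟨x, hx, hxe⟩ := Finset.mem_image.1 hj
    rw [← hxe]
    exact Finset.mem_range.2 (Nat.mod_lt _ (by omega))
  have hKcard : K.card = n := by
    rw [hKdef, Finset.card_image_of_injOn ((shiftmap_injOn s n t).mono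
      (Finset.coe_subset.2 hH1)), hH2]
  refine ⟨hKsub, hKcard, ?_⟩
  intro k hk1 hk2
  have hset_eq : hset s n K t = H := hset_image s n t H hH1
  have e1 := cnt_hset s n K t k (by omega)
  rw [hset_eq] at e1
  have e2 := hH3 k hk1 (by omega)
  simp only [gfun]
  rw [e1]
  push_cast
  have : (k:ℤ) ≤ s * (H ∩ Finset.Icc 1 k).card := by exact_mod_cast e2
  nlinarith [this]

end RaneyAux

/-- The number of Raney sequences in `R_n^s` equals `(sn)! / (n! ((s-1)n + 1)!)`,
the higher Catalan number. -/
theorem stmt_2 (s n : ℕ) (hs : 0 < s) (hn : 0 < n) :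
    Nat.card (RaneySet s n) =
      Nat.factorial (s * n) / (Nat.factorial n * Nat.factorial ((s - 1) * n + 1)) := by
  classical
  set N := s*n+1 with hNdef
  have hN0 : 0 < N := by omega
  let Ψ : ↥(RaneySet s n) × Fin N →
      {K : Finset ℕ // K ∈ Finset.powersetCard n (Finset.range N)} :=
    fun p => ⟨Finset.image (RaneyAux.shiftmap s n p.2.val) p.1.val, by
      obtain ⟨K1, K2, -⟩ := RaneyAux.raney_to_good s n hs p.1.val p.1.2 p.2.val
      exact Finset.mem_powersetCard.2 ⟨K1, K2⟩⟩
  have hbij : Function.Bijective Ψ := by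
    constructor
    · rintro ⟨⟨H, hH⟩, r⟩ ⟨⟨H', hH'⟩, r'⟩ h
      simp only [Ψ, Subtype.mk.injEq] at h
      set K := Finset.image (RaneyAux.shiftmap s n r.val) H with hKdef
      obtain ⟨K1, K2, K3⟩ := RaneyAux.raney_to_good s n hs H hH r.val
      obtain ⟨K1', K2', K3'⟩ := RaneyAux.raney_to_good s n hs H' hH' r'.val
      rw [← h] at K3'
      obtain ⟨t0, -, ht0⟩ := RaneyAux.cycle_lemma N hN0 (RaneyAux.gfun s K N)
        (RaneyAux.gfun_shift s n K K1 K2)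
      have hr : r.val = t0 := ht0 _ ⟨r.isLt, K3⟩
      have hr' : r'.val = t0 := ht0 _ ⟨r'.isLt, K3'⟩
      have hrr : r = r' := Fin.ext (by omega)
      subst hrr
      have hHH : H = H' := by
        have e1 := RaneyAux.hset_image s n r.val H hH.1
        have e2 := RaneyAux.hset_image s n r.val H' hH'.1
        rw [← hKdef, h] at e1
        rw [e2] at e1
        exact e1.symm
      simp [hHH]
    · rintro ⟨K, hK⟩
      obtain ⟨hK1, hK2⟩ := Finset.mem_powersetCard.1 hK
      obtain ⟨t, ⟨htN, hgood⟩, -⟩ := RaneyAux.cycle_lemma N hN0 (RaneyAux.gfun s K N)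
        (RaneyAux.gfun_shift s n K hK1 hK2)
      obtain ⟨hmem, himg⟩ := RaneyAux.good_to_raney s n hs hn K hK1 hK2 t hgood
      exact ⟨⟨⟨_, hmem⟩, ⟨t, htN⟩⟩, Subtype.ext himg⟩
  have hcount : Nat.card (RaneySet s n) * N = N.choose n := by
    have e := Nat.card_congr (Equiv.ofBijective Ψ hbij)
    rw [Nat.card_prod] at e
    simp only [Nat.card_eq_fintype_card, Fintype.card_fin, Fintype.card_coe,
      Finset.card_powersetCard, Finset.card_range] at e
    exact e
  have hnsn : n ≤ s*n := Nat.le_mul_of_pos_left n hs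
  set m := (s-1)*n + 1 with hm
  have hmn : n + m = N := by
    have : (s-1)*n = s*n - n := by rw [Nat.sub_mul, one_mul]
    omega
  have hch := Nat.choose_mul_factorial_mul_factorial (show n ≤ N by omega)
  rw [show N - n = m by omega] at hch
  have hNf : N.factorial = N * (s*n).factorial := Nat.factorial_succ (s*n)
  set C := Nat.card (RaneySet s n) with hC
  have h2 : C * (n.factorial * m.factorial) * N = (s*n).factorial * N := by
    rw [show C * (n.factorial * m.factorial) * N
        = C * N * n.factorial * m.factorial from by ring, hcount, hch, hNf]
    ring
  have key : C * (n.factorial * m.factorial) = (s*n).factorial :=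
    Nat.eq_of_mul_eq_mul_right hN0 h2
  rw [← key]
  have hpos : 0 < n.factorial * m.factorial :=
    Nat.mul_pos (Nat.factorial_pos n) (Nat.factorial_pos m)
  exact (Nat.mul_div_cancel C hpos).symm
end

section
/- For 0 ≤ i ≤ n, the number of Raney sequences H ∈ R_{n+1}^2 containing exactly i even elements equals the Narayana number (n+1)!·n! / ((n-i+1)!·(n-i)!·(i+1)!·i!). -/
open Finset

namespace Raney

def prefixCard (F : Finset ℕ) (u : ℕ) : ℕ := #{x ∈ F | x ≤ u}

section PrefixCard

variable {F : Finset ℕ}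

lemma prefixCard_succ (F : Finset ℕ) (u : ℕ) :
    prefixCard F (u + 1) = prefixCard F u + if u + 1 ∈ F then 1 else 0 := by
  have hsplit : {x ∈ F | x ≤ u + 1} = {x ∈ F | x ≤ u} ∪ {x ∈ F | x = u + 1} := by
    ext x; simp only [mem_filter, mem_union]; grind
  rw [prefixCard, prefixCard, hsplit,
    card_union_of_disjoint (disjoint_filter.2 fun _ _ h h' => by omega), filter_eq']
  split_ifs <;> simp

lemma prefixCard_zero (h : 0 ∉ F) : prefixCard F 0 = 0 :=
  card_eq_zero.2 <| filter_eq_empty_iff.2 fun x hx hle => h (by rwa [Nat.le_zero.1 hle] at hx)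

lemma prefixCard_zero_le_one (F : Finset ℕ) : prefixCard F 0 ≤ 1 :=
  card_le_one.2 fun a ha b hb => by simp only [mem_filter] at ha hb; omega

lemma prefixCard_mono (F : Finset ℕ) : Monotone (prefixCard F) :=
  fun _ _ h => card_le_card fun x hx => by
    simp only [mem_filter] at hx ⊢; exact ⟨hx.1, hx.2.trans h⟩

lemma prefixCard_eq_card {u : ℕ} (h : ∀ x ∈ F, x ≤ u) : prefixCard F u = #F := by
  rw [prefixCard, filter_true_of_mem h]

lemma prefixCard_min {n : ℕ} (h : ∀ x ∈ F, x ≤ n) (u : ℕ) :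
    prefixCard F (min u n) = prefixCard F u := by
  unfold prefixCard
  congr 1
  exact filter_congr fun x hx => by have := h x hx; omega

lemma prefixCard_add_card_filter_lt (F : Finset ℕ) (u : ℕ) :
    prefixCard F u + #{x ∈ F | u < x} = #F := by
  simpa only [prefixCard, not_le] using card_filter_add_card_filter_not (s := F) (· ≤ u)

end PrefixCard

def tailSwap (S T : Finset ℕ) (u : ℕ) : Finset ℕ := {x ∈ S | x ≤ u} ∪ {x ∈ T | u < x}

section TailSwap

variable {S T : Finset ℕ} {u : ℕ}

lemma tailSwap_subset {s : Finset ℕ} (hS : S ⊆ s) (hT : T ⊆ s) : tailSwap S T u ⊆ s :=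
  union_subset ((filter_subset _ _).trans hS) ((filter_subset _ _).trans hT)

lemma prefixCard_tailSwap {v : ℕ} (h : v ≤ u) :
    prefixCard (tailSwap S T u) v = prefixCard S v := by
  unfold prefixCard tailSwap
  congr 1
  ext x; simp only [mem_filter, mem_union]; grind

lemma card_tailSwap_add : #(tailSwap S T u) + prefixCard T u = prefixCard S u + #T := by
  rw [tailSwap, card_union_of_disjoint (disjoint_left.2 fun x hS hT => by
      simp only [mem_filter] at hS hT; omega), add_assoc,
    add_comm _ (prefixCard T u), prefixCard_add_card_filter_lt, prefixCard]

lemma tailSwap_tailSwap : tailSwap (tailSwap S T u) (tailSwap T S u) u = S := by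
  ext x
  simp only [tailSwap, mem_filter, mem_union]
  by_cases x ≤ u <;> grind

end TailSwap

lemma prefixCard_find_eq_add_one {S T : Finset ℕ} (h : ∃ u, prefixCard S u < prefixCard T u) :
    prefixCard T (Nat.find h) = prefixCard S (Nat.find h) + 1 := by
  have hlt := Nat.find_spec h
  rcases Nat.eq_zero_or_eq_succ_pred (Nat.find h) with h0 | hsucc
  · rw [h0] at hlt ⊢
    have := prefixCard_zero_le_one T
    omega
  · have hmin := Nat.find_min h (Nat.pred_lt_self (by omega))
    rw [hsucc] at hlt ⊢
    rw [prefixCard_succ, prefixCard_succ] at hlt ⊢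
    split_ifs at hlt ⊢ <;> omega

def reflect (p : Finset ℕ × Finset ℕ) (h : ∃ u, prefixCard p.1 u < prefixCard p.2 u) :
    Finset ℕ × Finset ℕ :=
  (tailSwap p.1 p.2 (Nat.find h), tailSwap p.2 p.1 (Nat.find h))

section Reflect

variable {p : Finset ℕ × Finset ℕ} (h : ∃ u, prefixCard p.1 u < prefixCard p.2 u)

lemma prefixCard_reflect {v : ℕ} (hv : v ≤ Nat.find h) :
    prefixCard (reflect p h).1 v = prefixCard p.1 v ∧
      prefixCard (reflect p h).2 v = prefixCard p.2 v :=
  ⟨prefixCard_tailSwap hv, prefixCard_tailSwap hv⟩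

lemma exists_lt_reflect : ∃ u, prefixCard (reflect p h).1 u < prefixCard (reflect p h).2 u :=
  ⟨Nat.find h, by simpa only [prefixCard_reflect h le_rfl] using Nat.find_spec h⟩

lemma find_reflect (h' : ∃ u, prefixCard (reflect p h).1 u < prefixCard (reflect p h).2 u) :
    Nat.find h' = Nat.find h := by
  rw [Nat.find_eq_iff]
  refine ⟨?_, fun v hv => ?_⟩
  · simpa only [prefixCard_reflect h le_rfl] using Nat.find_spec h
  · simpa only [prefixCard_reflect h hv.le] using Nat.find_min h hv

lemma reflect_reflect (h' : ∃ u, prefixCard (reflect p h).1 u < prefixCard (reflect p h).2 u) :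
    reflect (reflect p h) h' = p := by
  rw [reflect, find_reflect h h']
  exact Prod.ext tailSwap_tailSwap tailSwap_tailSwap

lemma card_reflect : #(reflect p h).1 + 1 = #p.2 ∧ #(reflect p h).2 = #p.1 + 1 := by
  have hcross := prefixCard_find_eq_add_one h
  have h1 := card_tailSwap_add (S := p.1) (T := p.2) (u := Nat.find h)
  have h2 := card_tailSwap_add (S := p.2) (T := p.1) (u := Nat.find h)
  exact ⟨by simp only [reflect]; omega, by simp only [reflect]; omega⟩

end Reflect

open scoped Classical in
theorem card_filter_exists_lt (s : Finset ℕ) {a b : ℕ} (hba : b ≤ a) :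
    #{p ∈ s.powersetCard a ×ˢ s.powersetCard (b + 1) |
        ∃ u, prefixCard p.1 u < prefixCard p.2 u} = (#s).choose b * (#s).choose (a + 1) := by
  have hcross {p : Finset ℕ × Finset ℕ}
      (hp : p ∈ s.powersetCard b ×ˢ s.powersetCard (a + 1)) :
      ∃ u, prefixCard p.1 u < prefixCard p.2 u := by
    simp only [mem_product, mem_powersetCard] at hp
    refine ⟨s.sup id, ?_⟩
    rw [prefixCard_eq_card fun x hx => le_sup (f := id) (hp.1.1 hx),
      prefixCard_eq_card fun x hx => le_sup (f := id) (hp.2.1 hx)]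
    omega
  rw [← card_powersetCard, ← card_powersetCard, ← card_product]
  refine card_bij' (fun p hp => reflect p (mem_filter.1 hp).2) (fun p hp => reflect p (hcross hp))
    (fun p hp => ?_) (fun p hp => ?_) (fun p hp => reflect_reflect _ _)
    (fun p hp => reflect_reflect _ _)
  · obtain ⟨hp, hlt⟩ := mem_filter.1 hp
    simp only [mem_product, mem_powersetCard] at hp ⊢
    have := card_reflect hlt
    exact ⟨⟨tailSwap_subset hp.1.1 hp.2.1, by omega⟩,
      tailSwap_subset hp.2.1 hp.1.1, by omega⟩
  · have := card_reflect (hcross hp)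
    simp only [mem_filter, mem_product, mem_powersetCard] at hp ⊢
    exact ⟨⟨⟨tailSwap_subset hp.1.1 hp.2.1, by omega⟩,
      tailSwap_subset hp.2.1 hp.1.1, by omega⟩, exists_lt_reflect _⟩

open scoped Classical in
noncomputable def dominatedPairs (s : Finset ℕ) (i : ℕ) : Finset (Finset ℕ × Finset ℕ) :=
  {p ∈ s.powersetCard i ×ˢ s.powersetCard i | ∀ u, prefixCard p.2 u ≤ prefixCard p.1 u}

lemma mem_dominatedPairs {s : Finset ℕ} {i : ℕ} {p : Finset ℕ × Finset ℕ} :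
    p ∈ dominatedPairs s i ↔ (p.1 ⊆ s ∧ #p.1 = i) ∧ (p.2 ⊆ s ∧ #p.2 = i) ∧
      ∀ u, prefixCard p.2 u ≤ prefixCard p.1 u := by
  simp only [dominatedPairs, mem_filter, mem_product, mem_powersetCard, and_assoc]

open scoped Classical in
lemma card_dominatedPairs_zero (s : Finset ℕ) : #(dominatedPairs s 0) = 1 := by
  rw [dominatedPairs, powersetCard_zero, singleton_product_singleton,
    filter_true_of_mem fun p hp _ => by rw [mem_singleton.1 hp], card_singleton]

open scoped Classical in
lemma card_dominatedPairs_add (s : Finset ℕ) (j : ℕ) :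
    #(dominatedPairs s (j + 1)) + (#s).choose j * (#s).choose (j + 2) =
      (#s).choose (j + 1) ^ 2 := by
  rw [← card_filter_exists_lt s (Nat.le_succ j), dominatedPairs, sq, ← card_powersetCard,
    ← card_product]
  simp only [← not_le, ← not_forall]
  exact card_filter_add_card_filter_not _

def toPairs (n : ℕ) (H : Finset ℕ) : Finset ℕ × Finset ℕ :=
  ({t ∈ Icc 1 n | 2 * t ∈ H}, {t ∈ Icc 1 n | 2 * t + 1 ∉ H})

def ofPairs (n : ℕ) (p : Finset ℕ × Finset ℕ) : Finset ℕ :=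
  p.1.image (2 * ·) ∪ (range (n + 1) \ p.2).image (2 * · + 1)

section Encoding

variable {n : ℕ}

lemma mem_ofPairs_even {p : Finset ℕ × Finset ℕ} {t : ℕ} :
    2 * t ∈ ofPairs n p ↔ t ∈ p.1 := by
  simp only [ofPairs, mem_union, mem_image, mem_sdiff, mem_range]
  constructor
  · rintro (⟨t', ht', he⟩ | ⟨t', -, ho⟩)
    · rwa [show t = t' by omega]
    · omega
  · exact fun ht => Or.inl ⟨t, ht, rfl⟩

lemma mem_ofPairs_odd {p : Finset ℕ × Finset ℕ} {t : ℕ} :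
    2 * t + 1 ∈ ofPairs n p ↔ t ≤ n ∧ t ∉ p.2 := by
  simp only [ofPairs, mem_union, mem_image, mem_sdiff, mem_range]
  constructor
  · rintro (⟨t', -, he⟩ | ⟨t', ht', ho⟩)
    · omega
    · rw [show t = t' by omega]; exact ⟨by omega, ht'.2⟩
  · exact fun ht => Or.inr ⟨t, ⟨by omega, ht.2⟩, rfl⟩

lemma toPairs_ofPairs {p : Finset ℕ × Finset ℕ} (hS : p.1 ⊆ Icc 1 n) (hT : p.2 ⊆ Icc 1 n) :
    toPairs n (ofPairs n p) = p := by
  refine Prod.ext ?_ ?_ <;> ext t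
  · simpa only [toPairs, mem_filter, mem_ofPairs_even, and_iff_right_iff_imp] using @hS t
  · have := @hT t
    simp only [toPairs, mem_filter, mem_ofPairs_odd, mem_Icc] at this ⊢
    grind

lemma card_filter_even_ofPairs (p : Finset ℕ × Finset ℕ) :
    #{x ∈ ofPairs n p | Even x} = #p.1 := by
  have : {x ∈ ofPairs n p | Even x} = p.1.image (2 * ·) := by
    ext x
    obtain ⟨t, rfl | rfl⟩ := Nat.even_or_odd' x
    · simp [mem_ofPairs_even]
    · simpa [Nat.not_even_bit1] using fun _ _ => by omega
  rw [this, card_image_of_injective _ fun a b h => by simpa using h]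

variable {H : Finset ℕ} (hH : H ⊆ Icc 1 (2 * (n + 1))) (h1 : 1 ∈ H)

include hH h1 in
lemma ofPairs_toPairs (htop : 2 * (n + 1) ∉ H) : ofPairs n (toPairs n H) = H := by
  ext k
  have hk := @hH k
  obtain ⟨t, rfl | rfl⟩ := Nat.even_or_odd' k
  · simp only [mem_ofPairs_even, toPairs, mem_filter, mem_Icc] at hk ⊢
    grind
  · simp only [mem_ofPairs_odd, toPairs, mem_filter, mem_Icc] at hk ⊢
    rcases t with _ | t <;> grind

include hH h1 in
lemma prefixCard_toPairs {u : ℕ} (hu : u ≤ n) :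
    prefixCard H (2 * u + 1) + prefixCard (toPairs n H).2 u =
      prefixCard (toPairs n H).1 u + u + 1 := by
  have h0 : 0 ∉ H := fun h => by simpa using hH h
  induction u with
  | zero =>
    rw [prefixCard_succ, prefixCard_zero h0, if_pos h1,
      prefixCard_zero (by simp [toPairs]), prefixCard_zero (by simp [toPairs])]
  | succ u ih =>
    have hS : u + 1 ∈ (toPairs n H).1 ↔ 2 * u + 2 ∈ H := by simp [toPairs, mul_add]; omega
    have hT : u + 1 ∈ (toPairs n H).2 ↔ 2 * u + 3 ∉ H := by simp [toPairs, mul_add]; omega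
    rw [show 2 * (u + 1) + 1 = 2 * u + 1 + 1 + 1 by ring, prefixCard_succ, prefixCard_succ,
      prefixCard_succ (toPairs n H).1, prefixCard_succ (toPairs n H).2]
    have := ih (by omega)
    split_ifs <;> simp_all <;> omega

lemma toPairs_fst_subset : (toPairs n H).1 ⊆ Icc 1 n := filter_subset _ _

lemma toPairs_snd_subset : (toPairs n H).2 ⊆ Icc 1 n := filter_subset _ _

lemma prefixCard_toPairs_min (u : ℕ) :
    prefixCard (toPairs n H).1 (min u n) = prefixCard (toPairs n H).1 u ∧
      prefixCard (toPairs n H).2 (min u n) = prefixCard (toPairs n H).2 u :=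
  ⟨prefixCard_min (fun _ hx => (mem_Icc.1 (toPairs_fst_subset hx)).2) u,
    prefixCard_min (fun _ hx => (mem_Icc.1 (toPairs_snd_subset hx)).2) u⟩

include hH h1 in
lemma card_toPairs (htop : 2 * (n + 1) ∉ H) :
    #H + #(toPairs n H).2 = #(toPairs n H).1 + n + 1 := by
  have := prefixCard_toPairs hH h1 le_rfl
  rwa [prefixCard_eq_card fun x hx => by have := hH hx; grind,
    prefixCard_eq_card fun _ hx => (mem_Icc.1 (toPairs_fst_subset hx)).2,
    prefixCard_eq_card fun _ hx => (mem_Icc.1 (toPairs_snd_subset hx)).2] at this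

include hH in
lemma card_inter_Icc_one (k : ℕ) : #(H ∩ Icc 1 k) = prefixCard H k := by
  rw [prefixCard]
  congr 1
  ext x
  have := @hH x
  simp only [mem_inter, mem_Icc, mem_filter] at this ⊢
  grind

include hH h1 in
lemma ballot_iff : (∀ k, 1 ≤ k → k ≤ 2 * (n + 1) → k ≤ 2 * #(H ∩ Icc 1 k)) ↔
    ∀ u, prefixCard (toPairs n H).2 u ≤ prefixCard (toPairs n H).1 u := by
  simp only [card_inter_Icc_one hH]
  constructor
  · intro hballot u
    rw [← (prefixCard_toPairs_min u).1, ← (prefixCard_toPairs_min u).2]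
    have := prefixCard_toPairs hH h1 (min_le_right u n)
    have := hballot (2 * min u n + 1) (by omega) (by omega)
    omega
  · -- the odd bound at `2u + 1` also gives the even one at `2u + 2`, by parity
    intro hdom k hk1 hk2
    have := prefixCard_toPairs hH h1 (u := (k - 1) / 2) (by omega)
    have := hdom ((k - 1) / 2)
    have := prefixCard_mono H (show 2 * ((k - 1) / 2) + 1 ≤ k by omega)
    omega

end Encoding

section Bijection

variable {n : ℕ} {H : Finset ℕ}

lemma one_mem_of_mem_raneySet (hR : H ∈ RaneySet 2 (n + 1)) : 1 ∈ H := by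
  obtain ⟨x, hx⟩ := card_pos.1 (by have := hR.2.2 1 le_rfl (by omega); omega :
    0 < #(H ∩ Icc 1 1))
  rw [mem_inter, mem_Icc] at hx
  obtain rfl : x = 1 := by omega
  exact hx.1

lemma two_mul_succ_notMem_of_mem_raneySet (hR : H ∈ RaneySet 2 (n + 1)) : 2 * (n + 1) ∉ H := by
  obtain ⟨-, hcard, hballot⟩ := hR
  intro htop
  have hle : #(H ∩ Icc 1 (2 * n + 1)) ≤ #(H.erase (2 * (n + 1))) :=
    card_le_card fun x hx => by
      simp only [mem_inter, mem_Icc, mem_erase] at hx ⊢; exact ⟨by omega, hx.1⟩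
  have := hballot (2 * n + 1) (by omega) (by omega)
  rw [card_erase_of_mem htop] at hle
  omega

lemma toPairs_mem_dominatedPairs {i : ℕ} (hR : H ∈ RaneySet 2 (n + 1))
    (hi : #{x ∈ H | Even x} = i) : toPairs n H ∈ dominatedPairs (Icc 1 n) i := by
  have h1 := one_mem_of_mem_raneySet hR
  have htop := two_mul_succ_notMem_of_mem_raneySet hR
  obtain ⟨hH, hcard, hballot⟩ := hR
  have hevens : #{x ∈ H | Even x} = #(toPairs n H).1 := by
    conv_lhs => rw [← ofPairs_toPairs hH h1 htop]
    exact card_filter_even_ofPairs _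
  have := card_toPairs hH h1 htop
  exact mem_dominatedPairs.2 ⟨⟨toPairs_fst_subset, hevens ▸ hi⟩,
    ⟨toPairs_snd_subset, by omega⟩, (ballot_iff hH h1).1 hballot⟩

lemma ofPairs_mem_raneySet {i : ℕ} {p : Finset ℕ × Finset ℕ}
    (hp : p ∈ dominatedPairs (Icc 1 n) i) : ofPairs n p ∈ RaneySet 2 (n + 1) := by
  obtain ⟨⟨hS, hSi⟩, ⟨hT, hTi⟩, hdom⟩ := mem_dominatedPairs.1 hp
  have hH : ofPairs n p ⊆ Icc 1 (2 * (n + 1)) := by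
    intro x hx
    simp only [ofPairs, mem_union, mem_image, mem_sdiff, mem_range] at hx
    rcases hx with ⟨t, ht, rfl⟩ | ⟨t, ⟨ht, -⟩, rfl⟩
    · have := hS ht
      simp only [mem_Icc] at this ⊢
      omega
    · simp only [mem_Icc]
      omega
  have h1 : 1 ∈ ofPairs n p := mem_ofPairs_odd.2 ⟨Nat.zero_le n, fun h => by simpa using hT h⟩
  have htop : 2 * (n + 1) ∉ ofPairs n p := fun h => by
    simpa using hS (mem_ofPairs_even.1 h)
  have hcard := card_toPairs hH h1 htop
  rw [toPairs_ofPairs hS hT] at hcard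
  refine ⟨hH, by omega, (ballot_iff hH h1).2 ?_⟩
  rwa [toPairs_ofPairs hS hT]

theorem card_raneySet_filter_even (n i : ℕ) :
    Nat.card {H : Finset ℕ // H ∈ RaneySet 2 (n + 1) ∧ #{x ∈ H | Even x} = i} =
      #(dominatedPairs (Icc 1 n) i) := by
  rw [← Nat.card_eq_finsetCard]
  refine Nat.card_congr
    { toFun := fun H => ⟨toPairs n H, toPairs_mem_dominatedPairs H.2.1 H.2.2⟩
      invFun := fun p => ⟨ofPairs n p, ofPairs_mem_raneySet p.2, by
        rw [card_filter_even_ofPairs, (mem_dominatedPairs.1 p.2).1.2]⟩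
      left_inv := fun H => Subtype.ext ?_
      right_inv := fun p => Subtype.ext ?_ }
  · obtain ⟨hH, -, -⟩ := H.2.1
    exact ofPairs_toPairs hH (one_mem_of_mem_raneySet H.2.1)
      (two_mul_succ_notMem_of_mem_raneySet H.2.1)
  · obtain ⟨⟨hS, -⟩, ⟨hT, -⟩, -⟩ := mem_dominatedPairs.1 p.2
    exact toPairs_ofPairs hS hT

end Bijection

open Nat in
lemma factorial_mul_choose_sq {n i : ℕ} (hi0 : 0 < i) (hin : i ≤ n) :
    (n - i + 1)! * (n - i)! * (i + 1)! * i ! * n.choose i ^ 2 =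
      (n - i + 1)! * (n - i)! * (i + 1)! * i ! * (n.choose (i - 1) * n.choose (i + 1)) +
        (n + 1)! * n ! := by
  obtain ⟨j, rfl⟩ : ∃ j, i = j + 1 := ⟨i - 1, by omega⟩
  obtain ⟨k, rfl⟩ : ∃ k, n = j + 1 + k := ⟨n - (j + 1), by omega⟩
  have e1 := choose_succ_right_eq (j + 1 + k) (j + 1)
  have e2 := choose_succ_right_eq (j + 1 + k) j
  have e3 := choose_mul_factorial_mul_factorial (n := j + 1 + k) (k := j + 1) (by omega)
  simp only [Nat.add_sub_cancel_left, Nat.add_sub_cancel, show j + 1 + k - j = k + 1 by omega]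
    at e1 e2 e3 ⊢
  simp only [factorial_succ (j + 1), factorial_succ k, factorial_succ (j + 1 + k)]
  -- `(n - i + 1) C(n, i - 1) = i C(n, i)` and `(i + 1) C(n, i + 1) = (n - i) C(n, i)` reduce
  -- everything to multiples of `(C(n, i) i! (n - i)!)² = n!²`
  linear_combination
    (j + 1 + k + 1) * ((j + 1 + k).choose (j + 1) * (j + 1)! * k ! + (j + 1 + k)!) * e3
    - k ! ^ 2 * (j + 1)! ^ 2 * (k + 1) * (j + 1 + k).choose j * e1
    + k ! ^ 2 * (j + 1)! ^ 2 * (j + 1 + k).choose (j + 1) * k * e2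

open Nat in
lemma factorial_mul_card_dominatedPairs {n i : ℕ} (hi : i ≤ n) :
    (n - i + 1)! * (n - i)! * (i + 1)! * i ! * #(dominatedPairs (Icc 1 n) i) =
      (n + 1)! * n ! := by
  rcases i with _ | j
  · simp [card_dominatedPairs_zero, factorial_succ]
  · have hcount := card_dominatedPairs_add (Icc 1 n) j
    have hsq := factorial_mul_choose_sq (i := j + 1) j.succ_pos hi
    rw [Nat.card_Icc, Nat.add_sub_cancel] at hcount
    rw [← hcount, Nat.add_sub_cancel, mul_add] at hsq
    linarith

end Raney

/-- For `0 ≤ i ≤ n`, the number of Raney sequences `H ∈ R_{n+1}^2` with exactly `i` even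
elements equals the Narayana number `(n+1)!·n! / ((n-i+1)!·(n-i)!·(i+1)!·i!)`. -/
theorem stmt_4 (n i : ℕ) (hi : i ≤ n) :
    Nat.card {H : Finset ℕ // H ∈ RaneySet 2 (n + 1) ∧
        (H.filter (fun x => Even x)).card = i} =
      Nat.factorial (n + 1) * Nat.factorial n /
        (Nat.factorial (n - i + 1) * Nat.factorial (n - i) *
          Nat.factorial (i + 1) * Nat.factorial i) := by
  rw [Raney.card_raneySet_filter_even]
  refine (Nat.div_eq_of_eq_mul_left (by positivity) ?_).symm
  exact (Raney.factorial_mul_card_dominatedPairs hi).symm.trans (mul_comm _ _)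
end

section
/- The Narayana polynomials C_{n+1}(z) = Σ_{i=0}^n z^{n-2i} · (n+1)!·n! / ((n-i+1)!·(n-i)!·(i+1)!·i!) together with C_0(z) = z^{-1} satisfy the recurrence C_{n+1}(z) = Σ_{s=0}^n C_s(z^{-1}) · C_{n-s}(z). -/
/-!
For `m ≥ 0` the Laurent polynomial `C_{m+1}` is palindromic and equals `z^{-m} N_m(z²)`, where
`N_m(x) = ∑ N(m,i) xⁱ` is the Narayana polynomial. The recurrence is therefore equivalent to the
classical identity `N_{n+1} = (x + 1) N_n + x ∑_{s<n} N_s N_{n-1-s}` (first-return decomposition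
of Dyck paths counted by peaks). We prove it algebraically. The Narayana polynomials satisfy the
three-term recurrence `(c+3) N_{c+1} = (2c+3)(x+1) N_c - c(x-1)² N_{c-1}`, checked coefficientwise
on `N(m,k) = binom(m,k) binom(m+1,k) / (k+1)`. Summing it against `N_a` over `a + b = n`, with
weights symmetrised under `a ↔ b`, gives a three-term recurrence for `∑_{a+b=n} N_a N_b`, and
the identity follows by a two-step induction.
-/

open LaurentPolynomial

/-- The Narayana number `N(n,i) = (n+1)!·n! / ((n-i+1)!·(n-i)!·(i+1)!·i!)` as a rational. -/
noncomputable def narayana (n i : ℕ) : ℚ :=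
  (Nat.factorial (n + 1) * Nat.factorial n : ℚ) /
    (Nat.factorial (n - i + 1) * Nat.factorial (n - i) *
      Nat.factorial (i + 1) * Nat.factorial i)

/-- The Narayana (Laurent) polynomials: `C 0 = z⁻¹` and
`C (n+1) = ∑_{i=0}^n N(n,i) · z^(n-2i)`. -/
noncomputable def narayanaPoly : ℕ → LaurentPolynomial ℚ
  | 0 => T (-1)
  | n + 1 => ∑ i ∈ Finset.range (n + 1),
      LaurentPolynomial.C (narayana n i) * T ((n : ℤ) - 2 * i)

namespace Nat

variable {K : Type*} [Field K] [CharZero K]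

theorem cast_choose_succ_right (n k : ℕ) :
    (n.choose (k + 1) : K) = n.choose k * (n - k) / (k + 1) := by
  rw [eq_div_iff (Nat.cast_add_one_ne_zero k)]
  rcases le_or_gt k n with hkn | hnk
  · rw [← Nat.cast_sub hkn]
    exact_mod_cast choose_succ_right_eq n k
  · simp [choose_eq_zero_of_lt hnk, choose_eq_zero_of_lt (hnk.trans (lt_succ_self k))]

theorem cast_choose_eq_succ (n k : ℕ) :
    (n.choose k : K) = (n + 1).choose k * (n + 1 - k) / (n + 1) := by
  rw [eq_div_iff (Nat.cast_add_one_ne_zero n)]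
  rcases le_or_gt k (n + 1) with hkn | hnk
  · rw [← Nat.cast_one, ← Nat.cast_add, ← Nat.cast_sub hkn]
    exact_mod_cast choose_mul_succ_eq n k
  · simp [choose_eq_zero_of_lt hnk, choose_eq_zero_of_lt ((lt_succ_self n).trans hnk)]

end Nat

theorem Finset.Nat.two_mul_sum_antidiagonal_snd_mul {R : Type*} [CommSemiring R] (n : ℕ)
    (f : ℕ × ℕ → R) (hf : ∀ p, f p.swap = f p) :
    2 * ∑ p ∈ antidiagonal n, (p.2 : R) * f p = n * ∑ p ∈ antidiagonal n, f p := by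
  rw [two_mul]
  nth_rewrite 1 [← Finset.Nat.sum_antidiagonal_swap]
  rw [← Finset.sum_add_distrib, Finset.mul_sum]
  refine Finset.sum_congr rfl fun p hp => ?_
  rw [← HasAntidiagonal.mem_antidiagonal.mp hp, hf, Prod.snd_swap]
  push_cast
  ring

theorem narayana_eq_choose {m i : ℕ} (h : i ≤ m) :
    narayana m i = m.choose i * (m + 1).choose i / (i + 1) := by
  rw [narayana, Nat.cast_choose ℚ h, Nat.cast_choose ℚ (h.trans m.le_succ),
    show m + 1 - i = m - i + 1 by omega]
  push_cast [Nat.factorial_succ]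
  field_simp

theorem narayana_symm {m i : ℕ} (h : i ≤ m) : narayana m (m - i) = narayana m i := by
  rw [narayana, narayana, Nat.sub_sub_self h]
  ring

open Polynomial Finset

noncomputable def narayanaPolynomial (m : ℕ) : ℚ[X] :=
  ∑ i ∈ range (m + 1), Polynomial.C (narayana m i) * X ^ i

theorem narayanaPolynomial_zero : narayanaPolynomial 0 = 1 := by
  simp [narayanaPolynomial, narayana]

theorem narayanaPolynomial_one : narayanaPolynomial 1 = X + 1 := by
  simp [narayanaPolynomial, narayana, sum_range_succ, add_comm]

theorem coeff_narayanaPolynomial (m k : ℕ) :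
    (narayanaPolynomial m).coeff k = m.choose k * (m + 1).choose k / (k + 1) := by
  simp only [narayanaPolynomial, finsetSum_coeff, coeff_C_mul_X_pow]
  rw [sum_ite_eq]
  split_ifs with hk
  · exact narayana_eq_choose (Nat.lt_succ_iff.mp (mem_range.mp hk))
  · rw [Nat.choose_eq_zero_of_lt (by simpa using hk)]
    simp

theorem coeff_narayanaPolynomial_recurrence (r j : ℕ) :
    (r + 4) * (narayanaPolynomial (r + 2)).coeff (j + 2) =
      (2 * r + 5) * ((narayanaPolynomial (r + 1)).coeff (j + 1)
        + (narayanaPolynomial (r + 1)).coeff (j + 2))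
      - (r + 1) * ((narayanaPolynomial r).coeff j - 2 * (narayanaPolynomial r).coeff (j + 1)
        + (narayanaPolynomial r).coeff (j + 2)) := by
  -- Every binomial involved is a multiple of `(r + 3).choose j` by a rational function of `r, j`
  -- whose denominators never vanish, so no boundary cases arise.
  simp only [coeff_narayanaPolynomial, Nat.cast_choose_succ_right _ (j + 1),
    Nat.cast_choose_succ_right _ j]
  rw [Nat.cast_choose_eq_succ r, Nat.cast_choose_eq_succ (r + 1), Nat.cast_choose_eq_succ (r + 2)]
  push_cast
  field_simp
  ring

theorem narayanaPolynomial_recurrence_add_two (r : ℕ) :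
    ((r : ℚ[X]) + 4) * narayanaPolynomial (r + 2) =
      (2 * (r : ℚ[X]) + 5) * ((X + 1) * narayanaPolynomial (r + 1))
        - ((r : ℚ[X]) + 1) * ((X - 1) ^ 2 * narayanaPolynomial r) := by
  have hX₁ : ∀ p : ℚ[X], (X + 1) * p = X * p + p := fun p => by ring
  have hX₂ : ∀ p : ℚ[X], (X - 1) ^ 2 * p = X * (X * p) - 2 * (X * p) + p := fun p => by ring
  rw [hX₁, hX₂]
  ext k
  simp only [coeff_add, coeff_sub, add_mul, mul_add, mul_sub, mul_assoc, one_mul,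
    coeff_natCast_mul, coeff_ofNat_mul]
  rcases k with _ | _ | j
  · simp only [coeff_X_mul_zero, coeff_narayanaPolynomial, Nat.choose_zero_right]
    push_cast
    ring
  · simp only [zero_add, coeff_X_mul, coeff_X_mul_zero, coeff_narayanaPolynomial,
      Nat.choose_zero_right, Nat.choose_one_right]
    push_cast
    ring
  · simp only [coeff_X_mul]
    linear_combination coeff_narayanaPolynomial_recurrence r j

-- At `c = 0` the truncated `c - 1` only occurs multiplied by `c`.
theorem narayanaPolynomial_recurrence (c : ℕ) :
    ((c : ℚ[X]) + 3) * narayanaPolynomial (c + 1) =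
      (2 * (c : ℚ[X]) + 3) * ((X + 1) * narayanaPolynomial c)
        - (c : ℚ[X]) * ((X - 1) ^ 2 * narayanaPolynomial (c - 1)) := by
  rcases c with _ | r
  · simp [narayanaPolynomial_zero, narayanaPolynomial_one]
  · push_cast
    linear_combination narayanaPolynomial_recurrence_add_two r

noncomputable def narayanaConvolution (n : ℕ) : ℚ[X] :=
  ∑ p ∈ antidiagonal n, narayanaPolynomial p.1 * narayanaPolynomial p.2

theorem two_mul_weighted_narayanaConvolution (n : ℕ) (a b : ℚ[X]) :
    2 * ∑ p ∈ antidiagonal n, (a * p.2 + b) * (narayanaPolynomial p.1 * narayanaPolynomial p.2)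
      = (a * n + 2 * b) * narayanaConvolution n := by
  have h := Finset.Nat.two_mul_sum_antidiagonal_snd_mul n
    (fun p => narayanaPolynomial p.1 * narayanaPolynomial p.2) fun p => mul_comm _ _
  simp only [add_mul, mul_assoc, sum_add_distrib, ← mul_sum] at h ⊢
  rw [narayanaConvolution]
  linear_combination a * h

theorem narayanaConvolution_recurrence (n : ℕ) :
    ((n : ℚ[X]) + 6) * narayanaConvolution (n + 2) =
      4 * narayanaPolynomial (n + 2)
        + (2 * (n : ℚ[X]) + 8) * ((X + 1) * narayanaConvolution (n + 1))
        - ((n : ℚ[X]) + 2) * ((X - 1) ^ 2 * narayanaConvolution n) := by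
  have hS := two_mul_weighted_narayanaConvolution (n + 2) 1 2
  have hT := two_mul_weighted_narayanaConvolution (n + 1) 2 3
  have hU := two_mul_weighted_narayanaConvolution n 1 1
  have hpeel : ∑ p ∈ antidiagonal (n + 2),
      (1 * (p.2 : ℚ[X]) + 2) * (narayanaPolynomial p.1 * narayanaPolynomial p.2) =
      2 * narayanaPolynomial (n + 2) + ∑ p ∈ antidiagonal (n + 1),
        narayanaPolynomial p.1 * (((p.2 : ℚ[X]) + 3) * narayanaPolynomial (p.2 + 1)) := by
    rw [Finset.Nat.sum_antidiagonal_succ']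
    simp only [narayanaPolynomial_zero]
    push_cast
    congr 1
    · ring
    · exact sum_congr rfl fun p _ => by ring
  have hmid : ∑ p ∈ antidiagonal (n + 1),
      narayanaPolynomial p.1 * ((2 * (p.2 : ℚ[X]) + 3) * ((X + 1) * narayanaPolynomial p.2)) =
      (X + 1) * ∑ p ∈ antidiagonal (n + 1),
        (2 * (p.2 : ℚ[X]) + 3) * (narayanaPolynomial p.1 * narayanaPolynomial p.2) := by
    rw [mul_sum]
    exact sum_congr rfl fun p _ => by ring
  have hshift : ∑ p ∈ antidiagonal (n + 1),
      narayanaPolynomial p.1 * ((p.2 : ℚ[X]) * ((X - 1) ^ 2 * narayanaPolynomial (p.2 - 1))) =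
      (X - 1) ^ 2 * ∑ p ∈ antidiagonal n,
        (1 * (p.2 : ℚ[X]) + 1) * (narayanaPolynomial p.1 * narayanaPolynomial p.2) := by
    rw [Finset.Nat.sum_antidiagonal_succ', mul_sum]
    simp only [Nat.cast_zero, zero_mul, mul_zero, zero_add, Nat.add_sub_cancel]
    exact sum_congr rfl fun p _ => by push_cast; ring
  simp only [narayanaPolynomial_recurrence, mul_sub, sum_sub_distrib, hshift, hmid] at hpeel
  push_cast at hS hT
  linear_combination -hS + 2 * hpeel + (X + 1) * hT - (X - 1) ^ 2 * hU

theorem narayanaPolynomial_add_two (n : ℕ) :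
    narayanaPolynomial (n + 2) =
      (X + 1) * narayanaPolynomial (n + 1) + X * narayanaConvolution n := by
  induction n using Nat.twoStepInduction with
  | zero =>
    have h := narayanaPolynomial_recurrence 1
    simp only [narayanaConvolution, HasAntidiagonal.antidiagonal_zero, sum_singleton,
      narayanaPolynomial_zero, narayanaPolynomial_one, tsub_self, Nat.cast_one, Nat.reduceAdd,
      zero_add, mul_one, one_mul] at h ⊢
    apply mul_left_cancel₀ (show (4 : ℚ[X]) ≠ 0 by norm_num)
    linear_combination h
  | one =>
    have h₁ := narayanaPolynomial_recurrence 1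
    have h₂ := narayanaPolynomial_recurrence 2
    simp only [narayanaConvolution, Finset.Nat.sum_antidiagonal_succ,
      HasAntidiagonal.antidiagonal_zero, sum_singleton, narayanaPolynomial_zero,
      narayanaPolynomial_one, tsub_self, Nat.add_one_sub_one, Nat.cast_one, Nat.cast_ofNat,
      Nat.reduceAdd, zero_add, mul_one, one_mul] at h₁ h₂ ⊢
    apply mul_left_cancel₀ (show (20 : ℚ[X]) ≠ 0 by norm_num)
    linear_combination 4 * h₂ + 2 * (X + 1) * h₁
  | more n ih₀ ih₁ =>
    apply mul_left_cancel₀ (show (n : ℚ[X]) + 6 ≠ 0 by exact_mod_cast (n + 5).succ_ne_zero)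
    have h₂ := narayanaPolynomial_recurrence (n + 2)
    have h₃ := narayanaPolynomial_recurrence (n + 3)
    push_cast at h₂ h₃
    linear_combination h₃ - X * narayanaConvolution_recurrence n
      + (2 * (n : ℚ[X]) + 8) * (X + 1) * ih₁ - ((n : ℚ[X]) + 2) * (X - 1) ^ 2 * ih₀
      - (X + 1) * h₂

theorem narayanaPolynomial_succ (n : ℕ) :
    narayanaPolynomial (n + 1) = (X + 1) * narayanaPolynomial n
      + X * ∑ s ∈ range n, narayanaPolynomial s * narayanaPolynomial (n - 1 - s) := by
  rcases n with _ | n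
  · simp [narayanaPolynomial_zero, narayanaPolynomial_one]
  · rw [narayanaPolynomial_add_two, narayanaConvolution,
      Finset.Nat.sum_antidiagonal_eq_sum_range_succ_mk, Nat.add_sub_cancel]

theorem invert_narayanaPoly_succ_eq_aeval (m : ℕ) :
    invert (narayanaPoly (m + 1)) = T (-m) * aeval (T 2) (narayanaPolynomial m) := by
  simp only [narayanaPoly, narayanaPolynomial, map_sum, mul_sum, map_mul, invert_C, invert_T,
    aeval_C, map_pow, aeval_X, LaurentPolynomial.algebraMap_apply, Algebra.algebraMap_self,
    RingHom.id_apply, T_pow]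
  refine sum_congr rfl fun i _ => ?_
  rw [mul_left_comm, ← T_add]
  congr 2
  ring

theorem invert_narayanaPoly_succ (m : ℕ) :
    invert (narayanaPoly (m + 1)) = narayanaPoly (m + 1) := by
  simp only [narayanaPoly, map_sum, map_mul, invert_C, invert_T]
  rw [← sum_range_reflect]
  refine sum_congr rfl fun i hi => ?_
  have hi : i ≤ m := Nat.lt_succ_iff.mp (mem_range.mp hi)
  rw [Nat.add_sub_cancel, narayana_symm hi, Nat.cast_sub hi]
  congr 2
  ring

theorem narayanaPoly_succ_eq_aeval (m : ℕ) :
    narayanaPoly (m + 1) = T (-m) * aeval (T 2) (narayanaPolynomial m) := by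
  rw [← invert_narayanaPoly_succ, invert_narayanaPoly_succ_eq_aeval]

theorem sum_range_narayanaPoly_succ_mul (n : ℕ) :
    ∑ s ∈ range n, narayanaPoly (s + 1) * narayanaPoly (n - s) =
      T (-(n + 1)) * (T 2 * aeval (T 2)
        (∑ s ∈ range n, narayanaPolynomial s * narayanaPolynomial (n - 1 - s))) := by
  rw [map_sum, mul_sum, mul_sum]
  refine sum_congr rfl fun s hs => ?_
  obtain ⟨t, rfl⟩ : ∃ t, n = s + t + 1 := ⟨n - 1 - s, by have := mem_range.mp hs; omega⟩
  rw [show s + t + 1 - s = t + 1 by omega, show s + t + 1 - 1 - s = t by omega,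
    narayanaPoly_succ_eq_aeval, narayanaPoly_succ_eq_aeval, map_mul]
  have hT : (T (-(s : ℤ)) * T (-(t : ℤ)) : ℚ[T;T⁻¹]) =
      T (-(((s + t + 1 : ℕ) : ℤ) + 1)) * T 2 := by
    rw [← T_add, ← T_add]
    congr 1
    push_cast
    ring
  linear_combination aeval (T 2) (narayanaPolynomial s) * aeval (T 2) (narayanaPolynomial t) * hT

/-- The Narayana polynomials satisfy the Catalan-type recurrence
`C_{n+1}(z) = ∑_{s=0}^n C_s(z⁻¹) · C_{n-s}(z)`, where `z ↦ z⁻¹` is `invert`. -/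
theorem stmt_5 (n : ℕ) :
    narayanaPoly (n + 1) =
      ∑ s ∈ Finset.range (n + 1),
        LaurentPolynomial.invert (narayanaPoly s) * narayanaPoly (n - s) := by
  rcases n with _ | n
  · rw [sum_range_one, narayanaPoly_succ_eq_aeval, narayanaPolynomial_zero]
    change _ = invert (T (-1)) * T (-1)
    rw [invert_T, ← T_add]
    simp
  rw [sum_range_succ', sum_range_succ]
  simp only [invert_narayanaPoly_succ, Nat.add_sub_add_right, Nat.sub_self, Nat.sub_zero]
  rw [sum_range_narayanaPoly_succ_mul, show narayanaPoly 0 = T (-1) from rfl, invert_T, neg_neg,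
    narayanaPoly_succ_eq_aeval (n + 1), narayanaPoly_succ_eq_aeval n, narayanaPolynomial_succ]
  simp only [map_add, map_mul, map_one, aeval_X, Nat.cast_add, Nat.cast_one]
  have hsplit : (T (-((n : ℤ) + 1)) : ℚ[T;T⁻¹]) = T (-(n : ℤ)) * T (-1) := by
    rw [← T_add, neg_add]
  have hinv : (T 1 * T (-1) : ℚ[T;T⁻¹]) = 1 := by rw [← T_add]; simp
  have hsq : (T 2 : ℚ[T;T⁻¹]) = T 1 * T 1 := by rw [← T_add]; rfl
  rw [hsplit]
  linear_combination
    T (-(n : ℤ)) * aeval (T 2) (narayanaPolynomial n) * (T (-1) * hsq + T 1 * hinv)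
end

section
/- There is a bijection between R_{n+1}^2 and pairs (H_1, H_2) with H_1 ∈ R_s^2 and H_2 ∈ R_{n-s}^2 for some 0 ≤ s ≤ n, given as follows: for H ∈ R_{n+1}^2, let s be the smallest nonnegative integer with |H ∩ {1,...,2s+2}| = s+1; then H_1 = {i ∈ {1,...,2s} : i+1 ∈ H} and H_2 = {i ∈ {1,...,2n-2s} : i + 2s + 2 ∈ H}. Moreover under this bijection the even elements of H correspond to odd elements of H_1 together with even elements of H_2. -/
namespace Stmt6Aux

open Finset

def fc (H : Finset ℕ) (k : ℕ) : ℕ := (H ∩ Finset.Icc 1 k).card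

noncomputable def minS (H : Finset ℕ) : ℕ := sInf {s : ℕ | fc H (2*s+2) = s+1}

def part1 (H : Finset ℕ) (s : ℕ) : Finset ℕ := (Icc 1 (2*s)).filter (fun i => i + 1 ∈ H)

def part2 (H : Finset ℕ) (s n : ℕ) : Finset ℕ :=
  (Icc 1 (2*(n-s))).filter (fun i => i + 2*s + 2 ∈ H)

def glue (s : ℕ) (H₁ H₂ : Finset ℕ) : Finset ℕ :=
  insert 1 ((H₁.image (· + 1)) ∪ (H₂.image (· + (2*s+2))))

lemma mem_raney {H : Finset ℕ} {m : ℕ} :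
    H ∈ RaneySet 2 m ↔ H ⊆ Icc 1 (2*m) ∧ H.card = m ∧
      ∀ k, 1 ≤ k → k ≤ 2*m → k ≤ 2 * fc H k := Iff.rfl

lemma fc_mono (H : Finset ℕ) {a b : ℕ} (h : a ≤ b) : fc H a ≤ fc H b :=
  card_le_card (inter_subset_inter (Finset.Subset.refl H) (Icc_subset_Icc_right h))

lemma fc_full {H : Finset ℕ} {t u : ℕ} (hs : H ⊆ Icc 1 t) (h : t ≤ u) : fc H u = H.card := by
  unfold fc
  rw [inter_eq_left.mpr (hs.trans (Icc_subset_Icc_right h))]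

lemma fc_add (H : Finset ℕ) {a b : ℕ} (h : a ≤ b) :
    fc H b = fc H a + (H ∩ Icc (a+1) b).card := by
  unfold fc
  rw [← card_union_of_disjoint, ← inter_union_distrib_left]
  · congr 2
    ext x
    simp only [mem_union, mem_Icc]
    omega
  · exact Disjoint.mono inter_subset_right inter_subset_right
      (disjoint_left.mpr fun {x} hx hy => by simp only [mem_Icc] at hx hy; omega)

lemma filter_card (H : Finset ℕ) (c k : ℕ) :
    fc H (k + c) = fc H c + ((Icc 1 k).filter (fun i => i + c ∈ H)).card := by
  rw [fc_add H (Nat.le_add_left c k)]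
  congr 1
  have himg : ((Icc 1 k).filter (fun i => i + c ∈ H)).image (· + c) = H ∩ Icc (c+1) (k+c) := by
    ext x
    simp only [mem_image, mem_filter, mem_Icc, mem_inter]
    constructor
    · rintro ⟨i, ⟨⟨h1, h2⟩, hm⟩, rfl⟩
      exact ⟨hm, by omega, by omega⟩
    · rintro ⟨hx, h1, h2⟩
      exact ⟨x - c, ⟨⟨by omega, by omega⟩, by rwa [Nat.sub_add_cancel (by omega)]⟩, by omega⟩
  rw [← himg, card_image_of_injective _ (add_left_injective c)]

lemma part_card (H : Finset ℕ) (c t k : ℕ) (hk : k ≤ t) :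
    fc H (k + c) = fc H c + (((Icc 1 t).filter (fun i => i + c ∈ H)) ∩ Icc 1 k).card := by
  rw [filter_card H c k]
  congr 2
  ext i
  simp only [mem_filter, mem_inter, mem_Icc]
  constructor
  · rintro ⟨⟨h1, h2⟩, hp⟩
    exact ⟨⟨⟨h1, h2.trans hk⟩, hp⟩, h1, h2⟩
  · rintro ⟨⟨_, hp⟩, h⟩
    exact ⟨h, hp⟩

lemma part1_fc (H : Finset ℕ) (s k : ℕ) (hk : k ≤ 2*s) :
    fc H (k + 1) = fc H 1 + fc (part1 H s) k := part_card H 1 (2*s) k hk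

lemma part2_fc (H : Finset ℕ) (s n k : ℕ) (hk : k ≤ 2*(n-s)) :
    fc H (k + (2*s+2)) = fc H (2*s+2) + fc (part2 H s n) k := by
  have h := part_card H (2*s+2) (2*(n-s)) k hk
  have hfun : (Icc 1 (2*(n-s))).filter (fun i => i + (2*s+2) ∈ H) = part2 H s n := by
    unfold part2
    apply filter_congr
    intro i _
    exact Iff.of_eq (congrArg (· ∈ H) (add_assoc i (2*s) 2).symm)
  rw [hfun] at h
  exact h


lemma part1_subset (H : Finset ℕ) (s : ℕ) : part1 H s ⊆ Icc 1 (2*s) := filter_subset _ _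

lemma part2_subset (H : Finset ℕ) (s n : ℕ) : part2 H s n ⊆ Icc 1 (2*(n-s)) := filter_subset _ _

lemma forward {n : ℕ} {H : Finset ℕ} (hH : H ∈ RaneySet 2 (n+1)) :
    minS H ≤ n ∧
    part1 H (minS H) ∈ RaneySet 2 (minS H) ∧
    part2 H (minS H) n ∈ RaneySet 2 (n - minS H) ∧
    glue (minS H) (part1 H (minS H)) (part2 H (minS H) n) = H := by
  obtain ⟨hsub, hcard, hcond⟩ := mem_raney.mp hH
  set s := minS H with hs_def
  have hne : fc H (2*n+2) = n+1 := by
    rw [show 2*n+2 = 2*(n+1) from by ring, fc_full hsub le_rfl, hcard]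
  have hmemn : n ∈ {s : ℕ | fc H (2*s+2) = s+1} := hne
  have hsle : s ≤ n := Nat.sInf_le hmemn
  have hs : fc H (2*s+2) = s+1 := Nat.sInf_mem ⟨n, hmemn⟩
  have hmin : ∀ j, j < s → fc H (2*j+2) ≠ j+1 := by
    intro j hj hmem
    have hle : minS H ≤ j := Nat.sInf_le hmem
    rw [← hs_def] at hle
    omega
  have hfc1 : fc H 1 = 1 := by
    have h1 : 1 ≤ 2 * fc H 1 := hcond 1 le_rfl (by omega)
    have h2 : fc H 1 ≤ 1 := by
      have h3 : fc H 1 ≤ (Icc 1 1).card := card_le_card inter_subset_right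
      simpa using h3
    omega
  have h1H : 1 ∈ H := by
    have hne' : (H ∩ Icc 1 1).Nonempty := card_pos.mp (by unfold fc at hfc1; omega)
    obtain ⟨x, hx⟩ := hne'
    simp only [mem_inter, mem_Icc] at hx
    obtain ⟨hxH, hb1, hb2⟩ := hx
    have hx1 : x = 1 := by omega
    exact hx1 ▸ hxH
  have hs1 : fc H (2*s+1) = s+1 := by
    have hub : fc H (2*s+1) ≤ s+1 := hs ▸ fc_mono H (by omega)
    have hlb := hcond (2*s+1) (by omega) (by omega)
    omega
  have hnotmem : 2*s+2 ∉ H := by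
    intro hmem
    have hadd := fc_add H (show 2*s+1 ≤ 2*s+2 from by omega)
    have hmm : 2*s+2 ∈ H ∩ Icc (2*s+1+1) (2*s+2) := by
      simp only [mem_inter, mem_Icc]
      exact ⟨hmem, by omega, by omega⟩
    have hpos : 1 ≤ (H ∩ Icc (2*s+1+1) (2*s+2)).card := card_pos.mpr ⟨_, hmm⟩
    omega
  have hstrict : ∀ j, j < s → j + 2 ≤ fc H (2*j+2) := by
    intro j hj
    have h1 := hcond (2*j+2) (by omega) (by omega)
    have h2 := hmin j hj
    omega
  have hp1card : (part1 H s).card = s := by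
    have h1 := part1_fc H s (2*s) le_rfl
    have h2 : fc (part1 H s) (2*s) = (part1 H s).card := fc_full (part1_subset H s) le_rfl
    omega
  have hp1 : part1 H s ∈ RaneySet 2 s := by
    rw [mem_raney]
    refine ⟨part1_subset H s, hp1card, ?_⟩
    intro k hk1 hk2
    have hpc := part1_fc H s k hk2
    rcases Nat.even_or_odd k with ⟨j, hj⟩ | ⟨j, hj⟩
    · have hc := hcond (k+1) (by omega) (by omega)
      omega
    · have hst := hstrict j (by omega)
      have hkk : k + 1 = 2*j+2 := by omega
      rw [hkk] at hpc
      omega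
  have hp2card : (part2 H s n).card = n - s := by
    have h1 := part2_fc H s n (2*(n-s)) le_rfl
    have h2 : fc (part2 H s n) (2*(n-s)) = (part2 H s n).card :=
      fc_full (part2_subset H s n) le_rfl
    rw [show 2*(n-s) + (2*s+2) = 2*n+2 from by omega] at h1
    omega
  have hp2 : part2 H s n ∈ RaneySet 2 (n - s) := by
    rw [mem_raney]
    refine ⟨part2_subset H s n, hp2card, ?_⟩
    intro k hk1 hk2
    have hpc := part2_fc H s n k hk2
    have hc := hcond (k + (2*s+2)) (by omega) (by omega)
    omega
  have hglue : glue s (part1 H s) (part2 H s n) = H := by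
    unfold glue part1 part2
    ext x
    simp only [mem_insert, mem_union, mem_image, mem_filter, mem_Icc]
    constructor
    · rintro (rfl | ⟨i, ⟨⟨hi1, hi2⟩, him⟩, rfl⟩ | ⟨i, ⟨⟨hi1, hi2⟩, him⟩, rfl⟩)
      · exact h1H
      · exact him
      · rwa [← add_assoc]
    · intro hx
      have hxb := hsub hx
      rw [mem_Icc] at hxb
      by_cases hx1 : x = 1
      · exact Or.inl hx1
      rcases lt_or_ge x (2*s+2) with hlt | hge
      · refine Or.inr (Or.inl ⟨x - 1, ⟨⟨by omega, by omega⟩, ?_⟩, by omega⟩)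
        rwa [Nat.sub_add_cancel (by omega)]
      · have hxne : x ≠ 2*s+2 := fun h => hnotmem (h ▸ hx)
        refine Or.inr (Or.inr ⟨x - (2*s+2), ⟨⟨by omega, by omega⟩, ?_⟩, by omega⟩)
        have hxx : x - (2*s+2) + 2*s + 2 = x := by omega
        rwa [hxx]
  exact ⟨hsle, hp1, hp2, hglue⟩


lemma backward {n s : ℕ} {H₁ H₂ : Finset ℕ} (hsn : s ≤ n)
    (h1 : H₁ ∈ RaneySet 2 s) (h2 : H₂ ∈ RaneySet 2 (n - s)) :
    glue s H₁ H₂ ∈ RaneySet 2 (n+1) ∧ minS (glue s H₁ H₂) = s ∧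
    part1 (glue s H₁ H₂) s = H₁ ∧ part2 (glue s H₁ H₂) s n = H₂ := by
  obtain ⟨hsub1, hcard1, hcond1⟩ := mem_raney.mp h1
  obtain ⟨hsub2, hcard2, hcond2⟩ := mem_raney.mp h2
  have hb1 : ∀ i ∈ H₁, 1 ≤ i ∧ i ≤ 2*s := fun i hi => mem_Icc.mp (hsub1 hi)
  have hb2 : ∀ i ∈ H₂, 1 ≤ i ∧ i ≤ 2*(n-s) := fun i hi => mem_Icc.mp (hsub2 hi)
  have hfc : ∀ k, 1 ≤ k →
      fc (glue s H₁ H₂) k = 1 + fc H₁ (k-1) + fc H₂ (k-(2*s+2)) := by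
    intro k hk
    have hA : (H₁.image (· + 1)) ∩ Icc 1 k = (H₁ ∩ Icc 1 (k-1)).image (· + 1) := by
      ext x
      simp only [mem_inter, mem_image, mem_Icc]
      constructor
      · rintro ⟨⟨i, hi, rfl⟩, hx1, hx2⟩
        have hbi := hb1 i hi
        exact ⟨i, ⟨hi, by omega, by omega⟩, rfl⟩
      · rintro ⟨i, ⟨hi, hi1, hi2⟩, rfl⟩
        exact ⟨⟨i, hi, rfl⟩, by omega, by omega⟩
    have hB : (H₂.image (· + (2*s+2))) ∩ Icc 1 k
        = (H₂ ∩ Icc 1 (k-(2*s+2))).image (· + (2*s+2)) := by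
      ext x
      simp only [mem_inter, mem_image, mem_Icc]
      constructor
      · rintro ⟨⟨i, hi, rfl⟩, hx1, hx2⟩
        have hbi := hb2 i hi
        exact ⟨i, ⟨hi, by omega, by omega⟩, rfl⟩
      · rintro ⟨i, ⟨hi, hi1, hi2⟩, rfl⟩
        exact ⟨⟨i, hi, rfl⟩, by omega, by omega⟩
    have h1n : (1:ℕ) ∉ (H₁ ∩ Icc 1 (k-1)).image (· + 1) ∪
        (H₂ ∩ Icc 1 (k-(2*s+2))).image (· + (2*s+2)) := by
      intro hmem
      simp only [mem_union, mem_image, mem_inter, mem_Icc] at hmem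
      rcases hmem with ⟨i, ⟨hi, hi1, hi2⟩, hieq⟩ | ⟨i, ⟨hi, hi1, hi2⟩, hieq⟩ <;> omega
    have hdis : Disjoint ((H₁ ∩ Icc 1 (k-1)).image (· + 1))
        ((H₂ ∩ Icc 1 (k-(2*s+2))).image (· + (2*s+2))) := by
      refine disjoint_left.mpr ?_
      intro x hx hy
      simp only [mem_image, mem_inter, mem_Icc] at hx hy
      obtain ⟨i, ⟨hi, hi1, hi2⟩, rfl⟩ := hx
      obtain ⟨j, ⟨hj, hj1, hj2⟩, hj3⟩ := hy
      have hbi := hb1 i hi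
      omega
    unfold glue fc
    rw [insert_inter_of_mem (by rw [mem_Icc]; omega), union_inter_distrib_right, hA, hB,
      card_insert_of_notMem h1n, card_union_of_disjoint hdis,
      card_image_of_injective _ (add_left_injective 1),
      card_image_of_injective _ (add_left_injective (2*s+2))]
    ring
  have hgsub : glue s H₁ H₂ ⊆ Icc 1 (2*(n+1)) := by
    intro x hx
    simp only [glue, mem_insert, mem_union, mem_image] at hx
    rw [mem_Icc]
    rcases hx with rfl | ⟨i, hi, rfl⟩ | ⟨i, hi, rfl⟩
    · omega
    · have := hb1 i hi; omega
    · have := hb2 i hi; omega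
  have hgcard : (glue s H₁ H₂).card = n+1 := by
    have h := hfc (2*n+2) (by omega)
    have e1 : fc H₁ (2*n+2-1) = s := by rw [fc_full hsub1 (by omega), hcard1]
    have e2 : fc H₂ (2*n+2-(2*s+2)) = n - s := by rw [fc_full hsub2 (by omega), hcard2]
    have e4 := fc_full hgsub le_rfl
    rw [show 2*(n+1) = 2*n+2 from by ring] at e4
    omega
  have hgmem : glue s H₁ H₂ ∈ RaneySet 2 (n+1) := by
    rw [mem_raney]
    refine ⟨hgsub, hgcard, ?_⟩
    intro k hk1 hk2
    have h := hfc k hk1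
    rcases le_or_gt k (2*s+1) with hle | hgt
    · by_cases hk1' : k = 1
      · omega
      · have := hcond1 (k-1) (by omega) (by omega)
        omega
    · have e1 : fc H₁ (k-1) = s := by rw [fc_full hsub1 (by omega), hcard1]
      by_cases hk2' : k = 2*s+2
      · omega
      · have := hcond2 (k-(2*s+2)) (by omega) (by omega)
        omega
  have hfcs : fc (glue s H₁ H₂) (2*s+2) = s+1 := by
    have h := hfc (2*s+2) (by omega)
    have e1 : fc H₁ (2*s+2-1) = s := by rw [fc_full hsub1 (by omega), hcard1]
    have e2 : fc H₂ (2*s+2-(2*s+2)) = 0 := by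
      rw [show 2*s+2-(2*s+2) = 0 from by omega]
      simp [fc]
    omega
  have hminS : minS (glue s H₁ H₂) = s := by
    apply le_antisymm
    · exact Nat.sInf_le hfcs
    · by_contra hlt
      push_neg at hlt
      have hmem' : fc (glue s H₁ H₂) (2*(minS (glue s H₁ H₂))+2) = minS (glue s H₁ H₂)+1 :=
        Nat.sInf_mem (⟨s, hfcs⟩ : Set.Nonempty {j : ℕ | fc (glue s H₁ H₂) (2*j+2) = j+1})
      set j := minS (glue s H₁ H₂) with hj_def
      have h := hfc (2*j+2) (by omega)
      rw [show 2*j+2-1 = 2*j+1 from by omega] at h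
      have e2 : fc H₂ (2*j+2-(2*s+2)) = 0 := by
        rw [show 2*j+2-(2*s+2) = 0 from by omega]
        simp [fc]
      have := hcond1 (2*j+1) (by omega) (by omega)
      omega
  have hpart1 : part1 (glue s H₁ H₂) s = H₁ := by
    unfold part1 glue
    ext i
    simp only [mem_filter, mem_Icc, mem_insert, mem_union, mem_image]
    constructor
    · rintro ⟨⟨hi1, hi2⟩, h | ⟨j, hj, hji⟩ | ⟨j, hj, hji⟩⟩
      · omega
      · have : j = i := by omega
        exact this ▸ hj
      · have := hb2 j hj; omega
    · intro hi
      have := hb1 i hi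
      exact ⟨⟨by omega, by omega⟩, Or.inr (Or.inl ⟨i, hi, rfl⟩)⟩
  have hpart2 : part2 (glue s H₁ H₂) s n = H₂ := by
    unfold part2 glue
    ext i
    simp only [mem_filter, mem_Icc, mem_insert, mem_union, mem_image]
    constructor
    · rintro ⟨⟨hi1, hi2⟩, h | ⟨j, hj, hji⟩ | ⟨j, hj, hji⟩⟩
      · omega
      · have := hb1 j hj; omega
      · have : j = i := by omega
        exact this ▸ hj
    · intro hi
      have := hb2 i hi
      exact ⟨⟨by omega, by omega⟩, Or.inr (Or.inr ⟨i, hi, by omega⟩)⟩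
  exact ⟨hgmem, hminS, hpart1, hpart2⟩


lemma glue_even {n s : ℕ} {H₁ H₂ : Finset ℕ} (hsub1 : H₁ ⊆ Icc 1 (2*s))
    (hsub2 : H₂ ⊆ Icc 1 (2*(n-s))) :
    ((glue s H₁ H₂).filter (fun i => Even i)).card
      = (H₁.filter (fun i => Odd i)).card + (H₂.filter (fun i => Even i)).card := by
  have hb1 : ∀ i ∈ H₁, 1 ≤ i ∧ i ≤ 2*s := fun i hi => mem_Icc.mp (hsub1 hi)
  have hb2 : ∀ i ∈ H₂, 1 ≤ i ∧ i ≤ 2*(n-s) := fun i hi => mem_Icc.mp (hsub2 hi)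
  have hA : (H₁.image (· + 1)).filter (fun i => Even i)
      = (H₁.filter (fun i => Odd i)).image (· + 1) := by
    ext x
    simp only [mem_filter, mem_image]
    constructor
    · rintro ⟨⟨i, hi, rfl⟩, he⟩
      refine ⟨i, ⟨hi, ?_⟩, rfl⟩
      rw [Nat.even_add_one] at he
      exact Nat.not_even_iff_odd.symm.mpr he
    · rintro ⟨i, ⟨hi, ho⟩, rfl⟩
      refine ⟨⟨i, hi, rfl⟩, ?_⟩
      rw [Nat.even_add_one]
      exact Nat.not_even_iff_odd.symm.mp ho
  have hE : ∀ i : ℕ, Even (i + (2*s+2)) ↔ Even i := by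
    intro i
    rw [Nat.even_add]
    simp [show Even (2*s+2) from ⟨s+1, by ring⟩]
  have hB : (H₂.image (· + (2*s+2))).filter (fun i => Even i)
      = (H₂.filter (fun i => Even i)).image (· + (2*s+2)) := by
    ext x
    simp only [mem_filter, mem_image]
    constructor
    · rintro ⟨⟨i, hi, rfl⟩, he⟩
      exact ⟨i, ⟨hi, (hE i).mp he⟩, rfl⟩
    · rintro ⟨i, ⟨hi, ho⟩, rfl⟩
      exact ⟨⟨i, hi, rfl⟩, (hE i).mpr ho⟩
  have hdis : Disjoint ((H₁.filter (fun i => Odd i)).image (· + 1))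
      ((H₂.filter (fun i => Even i)).image (· + (2*s+2))) := by
    refine disjoint_left.mpr ?_
    intro x hx hy
    simp only [mem_image, mem_filter] at hx hy
    obtain ⟨i, ⟨hi, _⟩, rfl⟩ := hx
    obtain ⟨j, ⟨hj, _⟩, hj3⟩ := hy
    have := hb1 i hi
    have := hb2 j hj
    omega
  unfold glue
  rw [filter_insert, if_neg (by decide), filter_union, hA, hB, card_union_of_disjoint hdis,
    card_image_of_injective _ (add_left_injective 1),
    card_image_of_injective _ (add_left_injective (2*s+2))]

lemma sigma_ext {n : ℕ}
    (a b : Σ s : Fin (n+1), {H : Finset ℕ // H ∈ RaneySet 2 (s : ℕ)} ×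
      {H : Finset ℕ // H ∈ RaneySet 2 (n - (s : ℕ))})
    (h1 : (a.1 : ℕ) = (b.1 : ℕ)) (h2 : a.2.1.1 = b.2.1.1) (h3 : a.2.2.1 = b.2.2.1) :
    a = b := by
  obtain ⟨⟨s, hs⟩, ⟨x1, hx1⟩, x2, hx2⟩ := a
  obtain ⟨⟨t, ht⟩, ⟨y1, hy1⟩, y2, hy2⟩ := b
  simp only at h1 h2 h3
  subst h1
  subst h2
  subst h3
  rfl


noncomputable def toFun (n : ℕ) (H : {H : Finset ℕ // H ∈ RaneySet 2 (n+1)}) :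
    Σ s : Fin (n+1), {H : Finset ℕ // H ∈ RaneySet 2 (s : ℕ)} ×
      {H : Finset ℕ // H ∈ RaneySet 2 (n - (s : ℕ))} :=
  ⟨⟨minS H.1, Nat.lt_succ_of_le (forward H.2).1⟩,
    ⟨part1 H.1 (minS H.1), (forward H.2).2.1⟩,
    ⟨part2 H.1 (minS H.1) n, (forward H.2).2.2.1⟩⟩

noncomputable def invFun (n : ℕ)
    (x : Σ s : Fin (n+1), {H : Finset ℕ // H ∈ RaneySet 2 (s : ℕ)} ×
      {H : Finset ℕ // H ∈ RaneySet 2 (n - (s : ℕ))}) :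
    {H : Finset ℕ // H ∈ RaneySet 2 (n+1)} :=
  ⟨glue x.1 x.2.1.1 x.2.2.1,
    (backward (Nat.lt_succ_iff.mp x.1.isLt) x.2.1.2 x.2.2.2).1⟩

lemma left_inv (n : ℕ) : Function.LeftInverse (invFun n) (toFun n) := by
  intro H
  apply Subtype.ext
  exact (forward H.2).2.2.2

lemma right_inv (n : ℕ) : Function.RightInverse (invFun n) (toFun n) := by
  intro x
  obtain ⟨hmem, hminS, hpart1, hpart2⟩ :=
    backward (Nat.lt_succ_iff.mp x.1.isLt) x.2.1.2 x.2.2.2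
  apply sigma_ext
  · exact hminS
  · show part1 (glue (x.1:ℕ) x.2.1.1 x.2.2.1) (minS (glue (x.1:ℕ) x.2.1.1 x.2.2.1)) = x.2.1.1
    rw [hminS, hpart1]
  · show part2 (glue (x.1:ℕ) x.2.1.1 x.2.2.1) (minS (glue (x.1:ℕ) x.2.1.1 x.2.2.1)) n = x.2.2.1
    rw [hminS, hpart2]

end Stmt6Aux


/-- There is a bijection `R_{n+1}^2 ≃ Σ_{s=0}^n R_s^2 × R_{n-s}^2` where, for
`H ∈ R_{n+1}^2`, `s` is the smallest nonnegative integer with `|H ∩ {1,…,2s+2}| = s+1`,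
`H₁ = {i ∈ {1,…,2s} : i+1 ∈ H}` and `H₂ = {i ∈ {1,…,2n-2s} : i+2s+2 ∈ H}`; moreover the
number of even elements of `H` is the number of odd elements of `H₁` plus the number of
even elements of `H₂`. -/
theorem stmt_6 (n : ℕ) :
    ∃ e : {H : Finset ℕ // H ∈ RaneySet 2 (n + 1)} ≃
        (Σ s : Fin (n + 1), {H : Finset ℕ // H ∈ RaneySet 2 (s : ℕ)} ×
          {H : Finset ℕ // H ∈ RaneySet 2 (n - (s : ℕ))}),
      ∀ H : {H : Finset ℕ // H ∈ RaneySet 2 (n + 1)},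
        (((e H).1 : ℕ) = sInf {s : ℕ | (H.1 ∩ Finset.Icc 1 (2 * s + 2)).card = s + 1}) ∧
        ((e H).2.1.1 = (Finset.Icc 1 (2 * ((e H).1 : ℕ))).filter
            (fun i => i + 1 ∈ H.1)) ∧
        ((e H).2.2.1 = (Finset.Icc 1 (2 * (n - ((e H).1 : ℕ)))).filter
            (fun i => i + 2 * ((e H).1 : ℕ) + 2 ∈ H.1)) ∧
        (H.1.filter (fun i => Even i)).card =
          ((e H).2.1.1.filter (fun i => Odd i)).card +
            ((e H).2.2.1.filter (fun i => Even i)).card := by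
  classical
  refine ⟨⟨Stmt6Aux.toFun n, Stmt6Aux.invFun n, Stmt6Aux.left_inv n, Stmt6Aux.right_inv n⟩, ?_⟩
  intro H
  refine ⟨rfl, rfl, rfl, ?_⟩
  conv_lhs => rw [← (Stmt6Aux.forward H.2).2.2.2]
  exact Stmt6Aux.glue_even (Stmt6Aux.part1_subset H.1 (Stmt6Aux.minS H.1))
    (Stmt6Aux.part2_subset H.1 (Stmt6Aux.minS H.1) n)
end

section
/- Let X be a vector space with basis (v_i)_{i ∈ I}, where I is partially ordered so that every strictly decreasing chain is finite. If (u_i)_{i ∈ I} is a family of vectors such that each u_j equals v_j plus a linear combination of v_i with i < j, then (u_i)_{i ∈ I} is a basis of X. -/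
/-!
Relative to the basis `v`, the coordinate matrix of `u` is unitriangular: the `j`-th
coordinate of `u i` is `1` for `j = i` and `0` unless `j ≤ i`. Hence in a nontrivial finite
combination of the `u i`, the coordinate at a maximal index of its support is that index's
coefficient, so the combination is nonzero. Conversely `v j = u j - (u j - v j)`, where the
second term lies in the span of the `v i` with `i < j`, so well-founded induction puts every
`v j` in the span of the `u i`.
-/

open Submodule

namespace Module.Basis

variable {R X I : Type*} [Ring R] [AddCommGroup X] [Module R X]

theorem repr_apply_eq_zero_of_mem_span_image (v : Basis I R X) {s : Set I} {x : X}
    (hx : x ∈ span R (v '' s)) {j : I} (hj : j ∉ s) : v.repr x j = 0 :=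
  Finsupp.notMem_support_iff.mp fun hjx => hj (v.mem_span_image.mp hx hjx)

section Unitriangular

variable [PartialOrder I] (v : Basis I R X) {u : I → X}
  (h : ∀ j, u j - v j ∈ span R (v '' {i | i < j}))
include h

theorem repr_apply_eq_single_of_sub_mem_span_lt {i j : I} (hji : ¬ j < i) :
    v.repr (u i) j = Finsupp.single i 1 j := by
  have hzero := v.repr_apply_eq_zero_of_mem_span_image (h i) hji
  rwa [map_sub, Finsupp.sub_apply, v.repr_self, sub_eq_zero] at hzero

theorem repr_apply_self_of_sub_mem_span_lt (j : I) : v.repr (u j) j = 1 := by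
  rw [v.repr_apply_eq_single_of_sub_mem_span_lt h (lt_irrefl j), Finsupp.single_eq_same]

theorem repr_apply_eq_zero_of_sub_mem_span_lt {i j : I} (hji : ¬ j ≤ i) :
    v.repr (u i) j = 0 := by
  rw [v.repr_apply_eq_single_of_sub_mem_span_lt h (mt le_of_lt hji),
    Finsupp.single_eq_of_ne (fun hji' => hji hji'.le)]

theorem linearIndependent_of_sub_mem_span_lt : LinearIndependent R u := by
  rw [linearIndependent_iff]
  intro l hl
  by_contra hl0
  obtain ⟨j, hj⟩ := l.support.exists_maximal (Finsupp.support_nonempty_iff.mpr hl0)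
  have hcoord : v.repr (Finsupp.linearCombination R u l) j = l j := by
    rw [Finsupp.linearCombination_apply, Finsupp.sum, map_sum, Finsupp.finsetSum_apply,
      Finset.sum_eq_single_of_mem j hj.prop]
    · simp only [map_smul, Finsupp.smul_apply, smul_eq_mul,
        v.repr_apply_self_of_sub_mem_span_lt h, mul_one]
    · intro i hi hij
      have hji : ¬ j ≤ i := fun hji => hij (le_antisymm (hj.le_of_ge hi hji) hji)
      simp only [map_smul, Finsupp.smul_apply, smul_eq_mul,
        v.repr_apply_eq_zero_of_sub_mem_span_lt h hji, mul_zero]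
  rw [hl, map_zero, Finsupp.zero_apply] at hcoord
  exact Finsupp.mem_support_iff.mp hj.prop hcoord.symm

theorem span_range_eq_top_of_sub_mem_span_lt [WellFoundedLT I] :
    span R (Set.range u) = ⊤ := by
  have hv : ∀ j, v j ∈ span R (Set.range u) := by
    intro j
    induction j using WellFoundedLT.induction with
    | ind j ih =>
      have hlower : u j - v j ∈ span R (Set.range u) :=
        span_le.mpr (Set.image_subset_iff.mpr ih) (h j)
      simpa using sub_mem (subset_span (Set.mem_range_self j)) hlower
  rw [eq_top_iff, ← v.span_eq]
  exact span_le.mpr (Set.range_subset_iff.mpr hv)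

end Unitriangular

end Module.Basis

/-- Let `X` be a vector space with basis `(v i)_{i ∈ I}`, where the partial order on `I`
has no infinite strictly decreasing chains (i.e. `<` is well-founded). If each `u j`
equals `v j` plus a linear combination of the `v i` with `i < j`, then `(u i)` is again
a basis of `X`: it is linearly independent and spans `X`. -/
theorem stmt_7 {K X I : Type*} [Field K] [AddCommGroup X] [Module K X]
    [PartialOrder I] [WellFoundedLT I]
    (v : Module.Basis I K X) (u : I → X)
    (h : ∀ j, u j - v j ∈ Submodule.span K (v '' {i | i < j})) :
    LinearIndependent K u ∧ Submodule.span K (Set.range u) = ⊤ :=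
  ⟨v.linearIndependent_of_sub_mem_span_lt h, v.span_range_eq_top_of_sub_mem_span_lt h⟩
end

section
/- Let X be a vector space with basis (v_i)_{i ∈ I}, where I is partially ordered with no infinite strictly decreasing chains, and let Y ⊆ X be a subspace. Suppose J ⊆ I is a subset such that for each j ∈ J there is an element of Y equal to v_j plus a linear combination of v_i with i < j. Then the images of the vectors v_i with i ∉ J span the quotient X/Y. -/
/-!
Work in the quotient `X/Y`. For `j ∈ J` the hypothesis says that the image of `v j` is a
combination of images of `v i` with `i < j`; so by well-founded induction every image of a
basis vector lies in the span of the images of the `v i` with `i ∉ J`, and these images span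
`X/Y`.
-/

open Submodule

theorem Submodule.span_image_compl_eq_span_range_of_mem_span_Iio {R M I : Type*} [Semiring R]
    [AddCommMonoid M] [Module R M] [Preorder I] [WellFoundedLT I] (f : I → M) (J : Set I)
    (hJ : ∀ j ∈ J, f j ∈ span R (f '' Set.Iio j)) :
    span R (f '' Jᶜ) = span R (Set.range f) := by
  refine le_antisymm (span_mono (Set.image_subset_range f _)) (span_le.mpr ?_)
  rintro _ ⟨i, rfl⟩
  induction i using WellFoundedLT.induction with
  | _ i ih =>
    by_cases hi : i ∈ J
    · refine span_le.mpr ?_ (hJ i hi)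
      rintro _ ⟨k, hk, rfl⟩
      exact ih k hk
    · exact subset_span ⟨i, hi, rfl⟩

theorem Submodule.mkQ_mem_span_image_of_add_mem {R M ι : Type*} [Ring R] [AddCommGroup M]
    [Module R M] (Y : Submodule R M) (v : ι → M) (s : Set ι) {x y : M}
    (hy : y ∈ span R (v '' s)) (hxy : x + y ∈ Y) :
    Y.mkQ x ∈ span R ((fun i => Y.mkQ (v i)) '' s) := by
  have hx : Y.mkQ x = -Y.mkQ y := by
    rwa [eq_neg_iff_add_eq_zero, ← map_add, mkQ_apply, Quotient.mk_eq_zero]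
  rw [hx, ← Set.image_image Y.mkQ v, ← map_span]
  exact neg_mem (mem_map_of_mem hy)

/-- Let `X` be a vector space with basis `(v i)_{i ∈ I}`, where the partial order on `I`
has no infinite strictly decreasing chains, and let `Y ⊆ X` be a subspace. If `J ⊆ I` is
such that for every `j ∈ J` some element of `Y` equals `v j` plus a linear combination of
the `v i` with `i < j`, then the images of the `v i` with `i ∉ J` span the quotient `X/Y`. -/
theorem stmt_8 {K X I : Type*} [Field K] [AddCommGroup X] [Module K X]
    [PartialOrder I] [WellFoundedLT I]
    (v : Module.Basis I K X) (Y : Submodule K X) (J : Set I)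
    (h : ∀ j ∈ J, ∃ y ∈ Submodule.span K (v '' {i | i < j}), v j + y ∈ Y) :
    Submodule.span K ((fun i => Y.mkQ (v i)) '' {i | i ∉ J}) = ⊤ := by
  have hJ (j : I) (hj : j ∈ J) :
      Y.mkQ (v j) ∈ span K ((fun i => Y.mkQ (v i)) '' Set.Iio j) := by
    obtain ⟨y, hy, hjy⟩ := h j hj
    exact Y.mkQ_mem_span_image_of_add_mem v _ hy hjy
  refine (span_image_compl_eq_span_range_of_mem_span_Iio _ J hJ).trans ?_
  rw [Set.range_comp' Y.mkQ v, ← map_span, v.span_eq, Submodule.map_top, range_mkQ]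
end

section
/- In U(sl₂ ⊗ A) acting on a vector v with (e ⊗ P)v = 0 and (h ⊗ P)v = 0 for all P in an ideal containing P₁,...,Pₙ, one has the identity (e⊗P)·(f⊗Q₁)···(f⊗Qₙ)·v = -Σ_{i≠j} (f ⊗ P·Q_i·Q_j) · Π_{k≠i,j}(f⊗Q_k) · v, where e, h, f is the standard basis of sl₂ and A is a commutative algebra. -/
/-!
Moving `e ⊗ P` to the right through `f ⊗ Q_a` leaves the commutator `h ⊗ P Q_a`, and since
`h ⊗ P Q_a` kills `v`, moving it through the remaining factors gives
`-2 ∑_i (f ⊗ P Q_a Q_i) ∏_{k ≠ a, i} (f ⊗ Q_k) v`. By induction on the set of factors, each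
unordered pair `{i, j}` is produced exactly once this way, with the coefficient `-2` accounting
for the two ordered pairs `(i, j)`, `(j, i)` of the symmetric sum.
-/

open Finset

theorem Finset.mul_noncommProd_eq_add_sum {R ι : Type*} [Ring R] [DecidableEq ι]
    (x : R) (f : ι → R) (hf : ∀ i j, Commute (f i) (f j))
    (hc : ∀ i j, Commute ⁅x, f i⁆ (f j)) (s : Finset ι) :
    x * s.noncommProd f (fun a _ b _ _ => hf a b) =
      s.noncommProd f (fun a _ b _ _ => hf a b) * x +
        ∑ i ∈ s, ⁅x, f i⁆ * (s \ {i}).noncommProd f (fun a _ b _ _ => hf a b) := by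
  set p : Finset ι → R := fun t => t.noncommProd f (fun a _ b _ _ => hf a b)
  have p_insert {a : ι} {t : Finset ι} (ha : a ∉ t) : p (insert a t) = f a * p t :=
    noncommProd_insert_of_notMem _ _ _ _ ha
  change x * p s = p s * x + ∑ i ∈ s, ⁅x, f i⁆ * p (s \ {i})
  induction s using Finset.induction_on with
  | empty => rw [sum_empty, add_zero]; exact (Commute.one_right x).eq
  | @insert a s ha ih =>
    have hdel : ∀ i ∈ s, ⁅x, f i⁆ * p (insert a s \ {i}) = f a * (⁅x, f i⁆ * p (s \ {i})) :=
      fun i hi => by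
        rw [insert_sdiff_of_notMem _ (by simpa using (ne_of_mem_of_not_mem hi ha).symm),
          p_insert fun h => ha (mem_sdiff.1 h).1, ← mul_assoc, (hc i a).eq, mul_assoc]
    rw [sum_insert ha, insert_sdiff_of_mem _ (mem_singleton_self a), sdiff_singleton_eq_erase,
      erase_eq_of_notMem ha, sum_congr rfl hdel, ← mul_sum, p_insert ha, ← mul_assoc,
      ← sub_add_cancel (x * f a) (f a * x), ← Ring.lie_def, add_mul, mul_assoc, ih]
    noncomm_ring

theorem Finset.sum_sum_sdiff_insert {ι M : Type*} [DecidableEq ι] [AddCommMonoid M]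
    (g : ι → ι → Finset ι → M) {a : ι} {s : Finset ι} (ha : a ∉ s) :
    ∑ i ∈ insert a s, ∑ j ∈ insert a s \ {i}, g i j (insert a s \ {i, j}) =
      ∑ j ∈ s, g a j (s \ {j}) +
        ∑ i ∈ s, (g i a (s \ {i}) + ∑ j ∈ s \ {i}, g i j (insert a (s \ {i, j}))) := by
  rw [sum_insert ha, insert_sdiff_of_mem _ (mem_singleton_self a), sdiff_singleton_eq_erase,
    erase_eq_of_notMem ha]
  congr 1
  · refine sum_congr rfl fun j hj => congrArg _ ?_
    ext; grind
  · refine sum_congr rfl fun i hi => ?_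
    rw [insert_sdiff_of_notMem _ (by simpa using (ne_of_mem_of_not_mem hi ha).symm),
      sum_insert fun h => ha (mem_sdiff.1 h).1]
    congr 1
    · congr 1; ext; grind
    · refine sum_congr rfl fun j hj => congrArg _ ?_
      ext; grind

section CurrentAlgebra

variable {k A V ι : Type*} [Semiring k] [AddCommGroup V] [Module k V]
  (E H F : A → Module.End k V) (hFF : ∀ P Q : A, Commute (F P) (F Q)) (Q : ι → A)

def fProd (s : Finset ι) : Module.End k V :=
  s.noncommProd (fun t => F (Q t)) fun a _ b _ _ => hFF (Q a) (Q b)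

variable {F hFF Q}

theorem fProd_empty : fProd F hFF Q ∅ = 1 := rfl

theorem fProd_insert [DecidableEq ι] {a : ι} {s : Finset ι} (ha : a ∉ s) :
    fProd F hFF Q (insert a s) = F (Q a) * fProd F hFF Q s :=
  noncommProd_insert_of_notMem _ _ _ _ ha

variable [CommRing A]

theorem H_mul_fProd_apply [DecidableEq ι] (hHF : ∀ P Q : A, ⁅H P, F Q⁆ = (-2 : ℤ) • F (P * Q))
    {v : V} {R : A} (hv : H R v = 0) (s : Finset ι) :
    (H R * fProd F hFF Q s) v =
      (-2 : ℤ) • ∑ i ∈ s, (F (R * Q i) * fProd F hFF Q (s \ {i})) v := by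
  have hc (i j : ι) : Commute ⁅H R, F (Q i)⁆ (F (Q j)) := by
    rw [hHF]; exact (hFF _ _).smul_left _
  unfold fProd
  rw [mul_noncommProd_eq_add_sum _ _ (fun i j => hFF (Q i) (Q j)) hc]
  simp only [hHF, LinearMap.add_apply, Module.End.mul_apply, hv, map_zero, zero_add,
    LinearMap.sum_apply, smul_mul_assoc, LinearMap.smul_apply, smul_sum]

theorem E_mul_fProd_apply [DecidableEq ι] (hHF : ∀ P Q : A, ⁅H P, F Q⁆ = (-2 : ℤ) • F (P * Q))
    (hEF : ∀ P Q : A, ⁅E P, F Q⁆ = H (P * Q)) {I : Ideal A} {v : V}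
    (hEv : ∀ P ∈ I, E P v = 0) (hHv : ∀ P ∈ I, H P v = 0) {P : A} (hP : P ∈ I)
    (s : Finset ι) :
    (E P * fProd F hFF Q s) v =
      - ∑ i ∈ s, ∑ j ∈ s \ {i}, (F (P * Q i * Q j) * fProd F hFF Q (s \ {i, j})) v := by
  induction s using Finset.induction_on with
  | empty => simp [fProd_empty, hEv P hP]
  | @insert a s ha ih =>
    have hEP_FQa : E P * F (Q a) = F (Q a) * E P + H (P * Q a) := by
      rw [← hEF, Ring.lie_def]; abel
    have hinner (i j : ι) : (F (P * Q i * Q j) * fProd F hFF Q (insert a (s \ {i, j}))) v =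
        F (Q a) ((F (P * Q i * Q j) * fProd F hFF Q (s \ {i, j})) v) := by
      rw [fProd_insert fun h => ha (mem_sdiff.1 h).1, ← mul_assoc, (hFF _ _).eq, mul_assoc,
        Module.End.mul_apply]
    rw [fProd_insert ha, ← mul_assoc, hEP_FQa, add_mul, mul_assoc, LinearMap.add_apply,
      Module.End.mul_apply, ih,
      H_mul_fProd_apply H hHF (hHv _ (I.mul_mem_right _ hP)),
      sum_sum_sdiff_insert (fun i j t => (F (P * Q i * Q j) * fProd F hFF Q t) v) ha]
    simp only [hinner, mul_right_comm P (Q _) (Q a), ← map_sum, sum_add_distrib, map_neg,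
      two_zsmul, neg_smul]
    abel

end CurrentAlgebra

theorem stmt_9_general {k A V : Type*} [Field k] [CommRing A]
    [AddCommGroup V] [Module k V]
    (E H F : A → Module.End k V)
    (hHF : ∀ P Q : A, ⁅H P, F Q⁆ = (-2 : ℤ) • F (P * Q))
    (hEF : ∀ P Q : A, ⁅E P, F Q⁆ = H (P * Q))
    (hFF : ∀ P Q : A, Commute (F P) (F Q))
    (I : Ideal A) (v : V)
    (hEv : ∀ P ∈ I, E P v = 0) (hHv : ∀ P ∈ I, H P v = 0)
    (n : ℕ) (P : A) (hP : P ∈ I) (Q : Fin n → A) :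
    (E P * Finset.univ.noncommProd (fun t => F (Q t)) (fun a _ b _ _ => hFF (Q a) (Q b))) v =
      - ∑ i : Fin n, ∑ j ∈ Finset.univ \ {i},
          (F (P * Q i * Q j) *
            ((Finset.univ \ {i, j}).noncommProd (fun t => F (Q t))
              (fun a _ b _ _ => hFF (Q a) (Q b)))) v :=
  E_mul_fProd_apply E H (hFF := hFF) hHF hEF hEv hHv hP Finset.univ

/-- In the current algebra `sl₂ ⊗ A` (presented by operators `E P = e⊗P`, `H P = h⊗P`,
`F P = f⊗P` on a module `V`, with the current-algebra commutation relations), if `v` is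
annihilated by `E P` and `H P` for all `P` in an ideal `I` containing the given element
`P`, then
`(e⊗P)(f⊗Q₁)⋯(f⊗Qₙ) v = - ∑_{i≠j} (f⊗P·Q_i·Q_j) ∏_{k≠i,j} (f⊗Q_k) v`. -/
theorem stmt_9 {k A V : Type*} [Field k] [CharZero k] [CommRing A] [Algebra k A]
    [AddCommGroup V] [Module k V]
    (E H F : A → Module.End k V)
    (hHE : ∀ P Q : A, ⁅H P, E Q⁆ = (2 : ℤ) • E (P * Q))
    (hHF : ∀ P Q : A, ⁅H P, F Q⁆ = (-2 : ℤ) • F (P * Q))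
    (hEF : ∀ P Q : A, ⁅E P, F Q⁆ = H (P * Q))
    (hFF : ∀ P Q : A, Commute (F P) (F Q))
    (I : Ideal A) (v : V)
    (hEv : ∀ P ∈ I, E P v = 0) (hHv : ∀ P ∈ I, H P v = 0)
    (n : ℕ) (P : A) (hP : P ∈ I) (Q : Fin n → A) :
    (E P * Finset.univ.noncommProd (fun t => F (Q t)) (fun a _ b _ _ => hFF (Q a) (Q b))) v =
      - ∑ i : Fin n, ∑ j ∈ Finset.univ \ {i},
          (F (P * Q i * Q j) *
            ((Finset.univ \ {i, j}).noncommProd (fun t => F (Q t))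
              (fun a _ b _ _ => hFF (Q a) (Q b)))) v :=
  stmt_9_general E H F hHF hEF hFF I v hEv hHv n P hP Q
end

section
/- For the polynomial algebra in n variables, the quotient ℂ[x₁,...,xₙ] / (ideal generated by symmetric polynomials without constant term) carries the regular representation of the symmetric group Σₙ; in particular its dimension is n!. -/
/-!
The images of the `n!` staircase monomials `x^α`, `α j ≤ j`, span the quotient. Indeed the
complete homogeneous polynomial of degree `i + 1` in `x_i, …, x_{n-1}` lies in the ideal (induct
on `i` with `h_m(x_i, …) = h_m(x_{i+1}, …) + x_i h_{m-1}(x_i, …)`), and it lets one trade the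
lex-leading factor `x_i^{i+1}` of a monomial for lex-smaller monomials. So the dimension is at
most `n!`.

Conversely, evaluation on the `Σₙ`-orbit of a point with distinct coordinates maps `ℂ[x]`
equivariantly onto `ℂ[Σₙ]`. Filter `ℂ[Σₙ]` by the degree of the evaluated polynomials and, by
Maschke's theorem, choose equivariant projections onto the steps. Sending the degree-`d`
component of `p` to the part of its evaluation off step `d` is still equivariant and onto, and it
kills the ideal: a symmetric polynomial takes a single value on the orbit, so multiplying by one of
positive degree raises the degree while only rescaling the evaluation. A surjection from a space
of dimension at most `n!` onto `ℂ[Σₙ]` is the required isomorphism.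
-/

open MvPolynomial Finset
open scoped MonoidAlgebra

/-- The ideal of `ℂ[x₁,…,xₙ]` generated by the symmetric polynomials with zero constant
term. -/
noncomputable def symIdeal (n : ℕ) : Ideal (MvPolynomial (Fin n) ℂ) :=
  Ideal.span {p : MvPolynomial (Fin n) ℂ |
    (∀ σ : Equiv.Perm (Fin n), MvPolynomial.rename ⇑σ p = p) ∧
      MvPolynomial.constantCoeff p = 0}

namespace MvPolynomial

variable {σ τ R : Type*} [CommSemiring R]

theorem homogeneousComponent_monomial (d : ℕ) (β : σ →₀ ℕ) (c : R) :
    homogeneousComponent d (monomial β c) = if d = β.degree then monomial β c else 0 :=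
  homogeneousComponent_of_mem ((mem_homogeneousSubmodule _ _).2 (isHomogeneous_monomial c rfl))

theorem homogeneousComponent_rename (f : σ → τ) (d : ℕ) (p : MvPolynomial σ R) :
    homogeneousComponent d (rename f p) = rename f (homogeneousComponent d p) := by
  induction p using MvPolynomial.induction_on' with
  | monomial β c =>
    rw [rename_monomial, homogeneousComponent_monomial, homogeneousComponent_monomial,
      Finsupp.degree_mapDomain]
    split_ifs <;> simp [rename_monomial]
  | add p q hp hq => simp only [map_add, hp, hq]

theorem IsSymmetric.homogeneousComponent {f : MvPolynomial σ R} (hf : f.IsSymmetric) (d : ℕ) :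
    (homogeneousComponent d f).IsSymmetric := fun e => by
  rw [← homogeneousComponent_rename, hf e]

theorem sum_range_homogeneousComponent {p : MvPolynomial σ R} {N : ℕ} (hp : p.totalDegree < N) :
    ∑ d ∈ range N, homogeneousComponent d p = p := by
  conv_rhs => rw [← sum_homogeneousComponent p]
  refine (sum_subset (range_subset_range.2 hp) fun d _ hd => ?_).symm
  exact homogeneousComponent_eq_zero d p (by simpa using hd)

end MvPolynomial

theorem Submodule.exists_isProj {R M : Type*} [Ring R] [AddCommGroup M] [Module R M]
    [IsSemisimpleModule R M] (p : Submodule R M) : ∃ f : M →ₗ[R] M, LinearMap.IsProj p f :=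
  have ⟨q, hq⟩ := ComplementedLattice.exists_isCompl p
  ⟨p.projection q hq, ⟨p.projection_apply_mem hq, fun _ => p.projection_apply_of_mem_left hq⟩⟩

namespace MonoidAlgebra

variable {k G V : Type*} [CommSemiring k] [Monoid G] [AddCommMonoid V] [Module k V]
  [Module k[G] V] [IsScalarTower k k[G] V]

def submoduleOfSmulMem (W : Submodule k V) (h : ∀ (g : G) (v : V), v ∈ W → of k G g • v ∈ W) :
    Submodule k[G] V where
  carrier := W
  zero_mem' := W.zero_mem
  add_mem' := W.add_mem
  smul_mem' a v hv := by
    induction a using MonoidAlgebra.induction_on with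
    | of g => exact h g v hv
    | add a b ha hb => rw [add_smul]; exact W.add_mem ha hb
    | smul r a ha => rw [smul_assoc]; exact W.smul_mem r ha

end MonoidAlgebra

namespace Coinvariant

section TailHsymm

variable {R : Type*} [CommSemiring R] {n : ℕ}

variable (n) in
def tailExponents (i m : ℕ) : Finset (Fin n →₀ ℕ) :=
  (univ.filter fun j : Fin n => i ≤ j).finsuppAntidiag m

theorem mem_tailExponents {i m : ℕ} {β : Fin n →₀ ℕ} :
    β ∈ tailExponents n i m ↔ β.degree = m ∧ ∀ j : Fin n, (j : ℕ) < i → β j = 0 := by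
  have hsupp : β.support ⊆ univ.filter (fun j : Fin n => i ≤ j) ↔
      ∀ j : Fin n, (j : ℕ) < i → β j = 0 := by
    simp only [subset_iff, Finsupp.mem_support_iff, mem_filter, mem_univ, true_and]
    exact forall_congr' fun j => by constructor <;> intro h <;> omega
  rw [tailExponents, mem_finsuppAntidiag, ← hsupp]
  refine and_congr_left fun h => ?_
  rw [Finsupp.degree_apply, sum_subset h fun j _ hj => Finsupp.notMem_support_iff.1 hj]

theorem single_mem_tailExponents (i : Fin n) (k : ℕ) :
    Finsupp.single i k ∈ tailExponents n i k := by
  refine mem_tailExponents.2 ⟨Finsupp.degree_single i k, fun j hj => ?_⟩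
  rw [Finsupp.single_eq_of_ne (fun h => by rw [h] at hj; omega)]

theorem toLex_lt_single_of_mem_tailExponents {i : Fin n} {k : ℕ} {β : Fin n →₀ ℕ}
    (hβ : β ∈ tailExponents n i k) (hne : β ≠ Finsupp.single i k) :
    toLex β < toLex (Finsupp.single i k) := by
  obtain ⟨hdeg, hzero⟩ := mem_tailExponents.1 hβ
  have hlt : β i < k := by
    refine lt_of_le_of_ne (hdeg ▸ Finsupp.le_degree i β) fun heq => hne ?_
    have hle : Finsupp.single i k ≤ β := Finsupp.single_le_iff.2 heq.ge
    have hrest : (β - Finsupp.single i k).degree = 0 := by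
      have := congr_arg Finsupp.degree (tsub_add_cancel_of_le hle)
      rw [map_add, Finsupp.degree_single, hdeg] at this
      omega
    rw [Finsupp.degree_eq_zero_iff, tsub_eq_zero_iff_le] at hrest
    exact le_antisymm hrest hle
  refine Finsupp.Lex.lt_iff.2 ⟨i, fun j hj => ?_, by simpa using hlt⟩
  simp [hzero j hj, hj.ne']

-- The complete homogeneous polynomial `h_m(x_i, …, x_{n-1})`.
variable (R n) in
noncomputable def tailHsymm (i m : ℕ) : MvPolynomial (Fin n) R :=
  ∑ β ∈ tailExponents n i m, monomial β 1

theorem tailHsymm_zero_isSymmetric (m : ℕ) : (tailHsymm R n 0 m).IsSymmetric := fun σ => by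
  rw [tailHsymm, map_sum]
  refine sum_equiv (Finsupp.domCongr σ).toEquiv (fun β => ?_) fun β _ => ?_
  · simp [mem_tailExponents, Finsupp.domCongr_apply, Finsupp.equivMapDomain_eq_mapDomain,
      Finsupp.degree_mapDomain]
  · simp [rename_monomial, Finsupp.domCongr_apply, Finsupp.equivMapDomain_eq_mapDomain]

theorem constantCoeff_tailHsymm {i m : ℕ} (hm : m ≠ 0) :
    constantCoeff (tailHsymm R n i m) = 0 := by
  rw [tailHsymm, map_sum]
  refine sum_eq_zero fun β hβ => ?_
  have hβ0 : β ≠ 0 := by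
    rintro rfl
    exact hm ((mem_tailExponents.1 hβ).1 ▸ map_zero Finsupp.degree)
  simp [constantCoeff_monomial, hβ0]

theorem tailHsymm_eq_zero {i m : ℕ} (hi : n ≤ i) (hm : m ≠ 0) : tailHsymm R n i m = 0 := by
  have : (univ.filter fun j : Fin n => i ≤ j) = ∅ :=
    filter_false_of_mem fun j _ => by omega
  rw [tailHsymm, tailExponents, this, finsuppAntidiag_empty_of_ne_zero hm, sum_empty]

theorem filter_tailExponents_eq_zero {i : ℕ} (hi : i < n) (m : ℕ) :
    (tailExponents n i m).filter (fun β => β ⟨i, hi⟩ = 0) = tailExponents n (i + 1) m := by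
  ext β
  simp only [mem_filter, mem_tailExponents, Nat.lt_succ_iff_lt_or_eq, or_imp, forall_and]
  refine ⟨fun ⟨⟨hd, hz⟩, hx⟩ => ⟨hd, hz, fun j hj => ?_⟩, fun ⟨hd, hz, hx⟩ => ⟨⟨hd, hz⟩, hx _ rfl⟩⟩
  rwa [show j = ⟨i, hi⟩ from Fin.ext hj]

theorem filter_tailExponents_ne_zero {i : ℕ} (hi : i < n) (m : ℕ) :
    (tailExponents n i (m + 1)).filter (fun β => ¬β ⟨i, hi⟩ = 0) =
      (tailExponents n i m).map (addRightEmbedding (Finsupp.single ⟨i, hi⟩ 1)) := by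
  set x : Fin n := ⟨i, hi⟩
  ext γ
  simp only [mem_filter, mem_map, addRightEmbedding_apply, mem_tailExponents]
  constructor
  · rintro ⟨⟨hd, hz⟩, hx⟩
    have hle : Finsupp.single x 1 ≤ γ := Finsupp.single_le_iff.2 (Nat.one_le_iff_ne_zero.2 hx)
    have hcancel := tsub_add_cancel_of_le hle
    refine ⟨γ - Finsupp.single x 1, ⟨?_, fun j hj => ?_⟩, hcancel⟩
    · have := congr_arg Finsupp.degree hcancel
      rw [map_add, Finsupp.degree_single, hd] at this
      omega
    · simp [hz j hj]
  · rintro ⟨β, ⟨hd, hz⟩, rfl⟩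
    refine ⟨⟨by rw [map_add, Finsupp.degree_single, hd], fun j hj => ?_⟩, by simp⟩
    have hjx : j ≠ x := fun h => by rw [h] at hj; exact lt_irrefl _ hj
    simp [hz j hj, Finsupp.single_eq_of_ne hjx]

theorem tailHsymm_succ {i : ℕ} (hi : i < n) (m : ℕ) :
    tailHsymm R n i (m + 1) = tailHsymm R n (i + 1) (m + 1) + X ⟨i, hi⟩ * tailHsymm R n i m := by
  rw [tailHsymm, ← sum_filter_add_sum_filter_not _ (fun β => β ⟨i, hi⟩ = 0),
    filter_tailExponents_eq_zero, filter_tailExponents_ne_zero, sum_map, tailHsymm, tailHsymm,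
    mul_sum]
  congr 1
  refine sum_congr rfl fun β _ => ?_
  rw [addRightEmbedding_apply, X, monomial_mul, one_mul, add_comm]

theorem monomial_mul_tailHsymm (α : Fin n →₀ ℕ) (i : Fin n) (k : ℕ) :
    monomial α 1 * tailHsymm R n i k = monomial (α + Finsupp.single i k) 1 +
      ∑ β ∈ (tailExponents n i k).erase (Finsupp.single i k), monomial (α + β) 1 := by
  rw [tailHsymm, mul_sum, ← add_sum_erase _ _ (single_mem_tailExponents i k)]
  simp only [monomial_mul, one_mul]

end TailHsymm

variable {n : ℕ}

theorem tailHsymm_mem_symIdeal (i : ℕ) {m : ℕ} (him : i < m) :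
    tailHsymm ℂ n i m ∈ symIdeal n := by
  induction i generalizing m with
  | zero =>
    exact Ideal.subset_span ⟨tailHsymm_zero_isSymmetric m, constantCoeff_tailHsymm him.ne'⟩
  | succ i ih =>
    obtain ⟨m, rfl⟩ := Nat.exists_eq_add_of_lt him
    by_cases hi : i < n
    · rw [eq_sub_of_add_eq (tailHsymm_succ (R := ℂ) hi (i + 1 + m)).symm]
      exact Ideal.sub_mem _ (ih (by omega)) (Ideal.mul_mem_left _ _ (ih (by omega)))
    · rw [tailHsymm_eq_zero (by omega) (by omega)]
      exact Ideal.zero_mem _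

variable (n) in
noncomputable def staircaseMonomial (f : ∀ j : Fin n, Fin (j + 1)) :
    MvPolynomial (Fin n) ℂ ⧸ symIdeal n :=
  Ideal.Quotient.mk _ (monomial (Finsupp.equivFunOnFinite.symm fun j => (f j : ℕ)) 1)

theorem mk_monomial_mem_span_staircaseMonomial (α : Fin n →₀ ℕ) :
    Ideal.Quotient.mk (symIdeal n) (monomial α 1) ∈
      Submodule.span ℂ (Set.range (staircaseMonomial n)) := by
  suffices h : ∀ a : Lex (Fin n →₀ ℕ), Ideal.Quotient.mk (symIdeal n) (monomial (ofLex a) 1) ∈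
      Submodule.span ℂ (Set.range (staircaseMonomial n)) from h (toLex α)
  intro a
  induction a using WellFoundedLT.induction with
  | ind a ih =>
  by_cases hst : ∀ j : Fin n, ofLex a j ≤ j
  · refine Submodule.subset_span ⟨fun j => ⟨ofLex a j, Nat.lt_succ_of_le (hst j)⟩, ?_⟩
    simp [staircaseMonomial]
  simp only [not_forall, not_le] at hst
  obtain ⟨i, hi⟩ := hst
  set α := ofLex a
  set s := Finsupp.single i ((i : ℕ) + 1)
  have hreduce := congr_arg (Ideal.Quotient.mk (symIdeal n))
    (monomial_mul_tailHsymm (α - s) i ((i : ℕ) + 1))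
  rw [Ideal.Quotient.eq_zero_iff_mem.2 (Ideal.mul_mem_left _ _
      (tailHsymm_mem_symIdeal i (Nat.lt_succ_self i))), map_add,
    tsub_add_cancel_of_le (Finsupp.single_le_iff.2 hi), eq_comm, add_eq_zero_iff_eq_neg] at hreduce
  rw [hreduce, map_sum]
  refine Submodule.neg_mem _ (Submodule.sum_mem _ fun β hβ => ih (toLex (α - s + β)) ?_)
  obtain ⟨hne, hβ⟩ := mem_erase.1 hβ
  calc toLex (α - s + β) = toLex (α - s) + toLex β := toLex_add _ _
    _ < toLex (α - s) + toLex s := add_lt_add_right (toLex_lt_single_of_mem_tailExponents hβ hne) _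
    _ = a := by rw [← toLex_add, tsub_add_cancel_of_le (Finsupp.single_le_iff.2 hi), toLex_ofLex]

theorem span_staircaseMonomial : Submodule.span ℂ (Set.range (staircaseMonomial n)) = ⊤ := by
  refine Submodule.eq_top_iff'.2 fun v => ?_
  obtain ⟨p, rfl⟩ := Ideal.Quotient.mk_surjective v
  rw [p.as_sum, map_sum]
  refine Submodule.sum_mem _ fun α _ => ?_
  rw [← mul_one (coeff α p), ← smul_eq_mul, ← smul_monomial, ← Ideal.Quotient.mkₐ_eq_mk ℂ,
    map_smul]
  exact Submodule.smul_mem _ _ (mk_monomial_mem_span_staircaseMonomial α)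

instance : Module.Finite ℂ (MvPolynomial (Fin n) ℂ ⧸ symIdeal n) :=
  Module.finite_def.2 (span_staircaseMonomial ▸ Submodule.fg_span (Set.finite_range _))

theorem finrank_le_factorial :
    Module.finrank ℂ (MvPolynomial (Fin n) ℂ ⧸ symIdeal n) ≤ n.factorial := by
  have h := finrank_range_le_card (R := ℂ) (staircaseMonomial n)
  rw [Set.finrank, span_staircaseMonomial, finrank_top, Fintype.card_pi] at h
  simpa [Fin.prod_univ_eq_prod_range (· + 1) n, prod_range_add_one_eq_factorial] using h

variable (n) in
def genericPoint : Fin n → ℂ := fun i => ((i : ℕ) : ℂ)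

variable (n) in
theorem genericPoint_injective : Function.Injective (genericPoint n) :=
  fun _ _ h => Fin.ext (Nat.cast_injective h)

-- The coefficient at `τ` is the value at the orbit point `τ • a`, `(τ • a) i = a (τ⁻¹ i)`; this
-- convention turns renaming by `σ` into left multiplication by `σ`.
variable (n) in
noncomputable def orbitEval : MvPolynomial (Fin n) ℂ →ₗ[ℂ] ℂ[Equiv.Perm (Fin n)] :=
  (MonoidAlgebra.coeffLinearEquiv ℂ).symm.toLinearMap ∘ₗ
    (Finsupp.linearEquivFunOnFinite ℂ ℂ _).symm.toLinearMap ∘ₗ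
      LinearMap.pi fun τ => (aeval fun i => genericPoint n (τ⁻¹ i)).toLinearMap

theorem coeff_orbitEval (p : MvPolynomial (Fin n) ℂ) (τ : Equiv.Perm (Fin n)) :
    (orbitEval n p).coeff τ = eval (fun i => genericPoint n (τ⁻¹ i)) p := rfl

theorem orbitEval_rename (σ : Equiv.Perm (Fin n)) (p : MvPolynomial (Fin n) ℂ) :
    orbitEval n (rename σ p) = MonoidAlgebra.single σ 1 * orbitEval n p := by
  ext τ
  rw [MonoidAlgebra.coeff_single_mul_apply, one_mul, coeff_orbitEval, coeff_orbitEval,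
    eval_rename, mul_inv_rev, inv_inv]
  rfl

theorem orbitEval_mul_of_isSymmetric {f : MvPolynomial (Fin n) ℂ} (hf : f.IsSymmetric)
    (q : MvPolynomial (Fin n) ℂ) :
    orbitEval n (q * f) = eval (genericPoint n) f • orbitEval n q := by
  ext τ
  have hfτ : eval (fun i => genericPoint n (τ⁻¹ i)) f = eval (genericPoint n) f := by
    conv_rhs => rw [← hf τ⁻¹]
    rw [eval_rename]
    rfl
  rw [MonoidAlgebra.coeff_smul, coeff_orbitEval, Finsupp.smul_apply, coeff_orbitEval, eval_mul,
    hfτ, smul_eq_mul, mul_comm]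

variable (n) in
noncomputable def lagrangeAtOne : MvPolynomial (Fin n) ℂ :=
  ∏ i, ∏ j ∈ univ.erase i, (X i - C (genericPoint n j))

theorem totalDegree_lagrangeAtOne_le : (lagrangeAtOne n).totalDegree ≤ n * n := by
  have hfactor (i j : Fin n) : (X i - C (genericPoint n j)).totalDegree ≤ 1 :=
    (totalDegree_sub_C_le _ _).trans (totalDegree_X i).le
  refine (totalDegree_finsetProd _ _).trans <| (sum_le_sum fun i _ =>
    (totalDegree_finsetProd _ _).trans (sum_le_sum fun j _ => hfactor i j)).trans ?_
  simp only [sum_const, smul_eq_mul, mul_one]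
  exact (sum_le_sum fun _ _ => card_erase_le).trans_eq (by simp)

theorem coeff_orbitEval_lagrangeAtOne_eq_zero {τ : Equiv.Perm (Fin n)} (hτ : τ ≠ 1) :
    (orbitEval n (lagrangeAtOne n)).coeff τ = 0 := by
  obtain ⟨i, hi⟩ : ∃ i, τ⁻¹ i ≠ i := by
    by_contra! h
    exact hτ (inv_eq_one.1 (Equiv.ext h))
  rw [coeff_orbitEval, lagrangeAtOne, map_prod]
  refine prod_eq_zero (mem_univ i) ?_
  rw [map_prod]
  refine prod_eq_zero (mem_erase.2 ⟨hi, mem_univ _⟩) ?_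
  simp

theorem coeff_orbitEval_lagrangeAtOne_one_ne_zero :
    (orbitEval n (lagrangeAtOne n)).coeff 1 ≠ 0 := by
  simp only [coeff_orbitEval, lagrangeAtOne, map_prod, inv_one, Equiv.Perm.coe_one, id_eq, map_sub,
    eval_X, eval_C]
  exact prod_ne_zero_iff.2 fun i _ => prod_ne_zero_iff.2 fun j hj =>
    sub_ne_zero.2 fun h => (mem_erase.1 hj).1 (genericPoint_injective n h).symm

variable (n) in
noncomputable def orbitFiltration (d : ℕ) :
    Submodule ℂ[Equiv.Perm (Fin n)] ℂ[Equiv.Perm (Fin n)] :=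
  Submodule.span _ (orbitEval n '' {p | p.totalDegree < d})

theorem orbitEval_mem_orbitFiltration {p : MvPolynomial (Fin n) ℂ} {d : ℕ}
    (hp : p.totalDegree < d) : orbitEval n p ∈ orbitFiltration n d :=
  Submodule.subset_span ⟨p, hp, rfl⟩

theorem orbitFiltration_mono : Monotone (orbitFiltration n) :=
  fun _ _ hde => Submodule.span_mono (Set.image_mono fun _ hp => lt_of_lt_of_le hp hde)

theorem orbitFiltration_eq_top : orbitFiltration n (n * n + 1) = ⊤ := by
  set c := (orbitEval n (lagrangeAtOne n)).coeff 1
  have hone : (1 : ℂ[Equiv.Perm (Fin n)]) = c⁻¹ • orbitEval n (lagrangeAtOne n) := by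
    ext τ
    rw [MonoidAlgebra.coeff_smul, Finsupp.smul_apply, MonoidAlgebra.one_def,
      MonoidAlgebra.coeff_single]
    rcases eq_or_ne τ 1 with rfl | hτ
    · simp [c, inv_mul_cancel₀ coeff_orbitEval_lagrangeAtOne_one_ne_zero]
    · simp [hτ.symm, coeff_orbitEval_lagrangeAtOne_eq_zero hτ]
  have hmem : (1 : ℂ[Equiv.Perm (Fin n)]) ∈ orbitFiltration n (n * n + 1) := by
    rw [hone]
    exact Submodule.smul_of_tower_mem _ _
      (orbitEval_mem_orbitFiltration (Nat.lt_succ_of_le totalDegree_lagrangeAtOne_le))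
  exact (Submodule.eq_top_iff').2 fun x => by simpa using Submodule.smul_mem _ x hmem

theorem orbitEval_homogeneousComponent_mul_mem {f : MvPolynomial (Fin n) ℂ} {j : ℕ}
    (hf : f.IsHomogeneous j) (hj : 0 < j) (hsym : f.IsSymmetric) (q : MvPolynomial (Fin n) ℂ)
    (d : ℕ) : orbitEval n (homogeneousComponent d (q * f)) ∈ orbitFiltration n d := by
  rw [q.as_sum, sum_mul, map_sum, map_sum]
  refine Submodule.sum_mem _ fun β _ => ?_
  have hhom := (isHomogeneous_monomial (d := β) (coeff β q) rfl).mul hf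
  rw [homogeneousComponent_of_mem ((mem_homogeneousSubmodule _ _).2 hhom)]
  split_ifs with hd
  · rw [orbitEval_mul_of_isSymmetric hsym]
    refine Submodule.smul_of_tower_mem _ _ (orbitEval_mem_orbitFiltration ?_)
    exact ((isHomogeneous_monomial _ rfl).totalDegree_le).trans_lt (by omega)
  · simp

theorem orbitEval_homogeneousComponent_mem {p : MvPolynomial (Fin n) ℂ} (hp : p ∈ symIdeal n)
    (d : ℕ) : orbitEval n (homogeneousComponent d p) ∈ orbitFiltration n d := by
  obtain ⟨m, r, g, rfl⟩ := Submodule.mem_span_set'.1 hp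
  rw [map_sum, map_sum]
  refine Submodule.sum_mem _ fun i _ => ?_
  obtain ⟨hsym, hcc⟩ := (g i).2
  rw [smul_eq_mul, ← sum_homogeneousComponent (g i : MvPolynomial (Fin n) ℂ), mul_sum, map_sum,
    map_sum]
  refine Submodule.sum_mem _ fun j _ => ?_
  rcases Nat.eq_zero_or_pos j with rfl | hj
  · simp [homogeneousComponent_zero, ← constantCoeff_eq, hcc]
  · exact orbitEval_homogeneousComponent_mul_mem (homogeneousComponent_isHomogeneous j _) hj
      (IsSymmetric.homogeneousComponent hsym j) _ d

-- A `ℂ[Σₙ]`-linear projection exists by Maschke's theorem, i.e. the `IsSemisimpleModule`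
-- instance on `ℂ[Σₙ]`.
variable (n) in
noncomputable def filtrationProj (d : ℕ) :
    ℂ[Equiv.Perm (Fin n)] →ₗ[ℂ[Equiv.Perm (Fin n)]] ℂ[Equiv.Perm (Fin n)] :=
  (Submodule.exists_isProj (orbitFiltration n d)).choose

theorem isProj_filtrationProj (d : ℕ) :
    LinearMap.IsProj (orbitFiltration n d) (filtrationProj n d) :=
  (Submodule.exists_isProj (orbitFiltration n d)).choose_spec

-- Truncating at `n * n + 1` loses nothing: from there on the filtration is everything
-- (`orbitFiltration_eq_top`), so the projections are the identity.
variable (n) in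
noncomputable def gradedOrbitEval : MvPolynomial (Fin n) ℂ →ₗ[ℂ] ℂ[Equiv.Perm (Fin n)] :=
  ∑ d ∈ range (n * n + 1), (LinearMap.id - filtrationProj n d).restrictScalars ℂ ∘ₗ
    orbitEval n ∘ₗ homogeneousComponent d

theorem gradedOrbitEval_apply (p : MvPolynomial (Fin n) ℂ) :
    gradedOrbitEval n p = ∑ d ∈ range (n * n + 1), (orbitEval n (homogeneousComponent d p) -
      filtrationProj n d (orbitEval n (homogeneousComponent d p))) := by
  simp [gradedOrbitEval]

theorem gradedOrbitEval_rename (σ : Equiv.Perm (Fin n)) (p : MvPolynomial (Fin n) ℂ) :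
    gradedOrbitEval n (rename σ p) = MonoidAlgebra.single σ 1 * gradedOrbitEval n p := by
  rw [gradedOrbitEval_apply, gradedOrbitEval_apply, mul_sum]
  refine sum_congr rfl fun d _ => ?_
  have hproj := (filtrationProj n d).map_smul (MonoidAlgebra.single σ 1)
    (orbitEval n (homogeneousComponent d p))
  rw [smul_eq_mul, smul_eq_mul] at hproj
  rw [homogeneousComponent_rename, orbitEval_rename, hproj, mul_sub]

theorem gradedOrbitEval_eq_zero_of_mem {p : MvPolynomial (Fin n) ℂ} (hp : p ∈ symIdeal n) :
    gradedOrbitEval n p = 0 := by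
  rw [gradedOrbitEval_apply]
  refine sum_eq_zero fun d _ => ?_
  rw [(isProj_filtrationProj d).map_id _ (orbitEval_homogeneousComponent_mem hp d), sub_self]

theorem sum_filtrationProj_mem {p : MvPolynomial (Fin n) ℂ} {d : ℕ} (hp : p.totalDegree ≤ d) :
    ∑ e ∈ range (n * n + 1), filtrationProj n e (orbitEval n (homogeneousComponent e p)) ∈
      orbitFiltration n d := by
  refine Submodule.sum_mem _ fun e _ => ?_
  rcases le_or_gt e d with hed | hde
  · exact orbitFiltration_mono hed ((isProj_filtrationProj e).map_mem _)
  · simp [homogeneousComponent_eq_zero e p (hp.trans_lt hde)]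

theorem orbitFiltration_le_range {d : ℕ} (hd : d ≤ n * n + 1) {x : ℂ[Equiv.Perm (Fin n)]}
    (hx : x ∈ orbitFiltration n d) : x ∈ LinearMap.range (gradedOrbitEval n) := by
  let W := MonoidAlgebra.submoduleOfSmulMem (G := Equiv.Perm (Fin n))
    (LinearMap.range (gradedOrbitEval n)) <| by
      rintro σ _ ⟨p, rfl⟩
      exact ⟨rename σ p, by rw [gradedOrbitEval_rename, MonoidAlgebra.of_apply, smul_eq_mul]⟩
  change x ∈ W
  induction d generalizing x with
  | zero =>
    rw [orbitFiltration, Submodule.mem_span] at hx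
    exact hx W (by simp)
  | succ d ih =>
    refine Submodule.span_le.2 ?_ hx
    rintro _ ⟨p, hp, rfl⟩
    have hsplit : orbitEval n p = gradedOrbitEval n p +
        ∑ e ∈ range (n * n + 1), filtrationProj n e (orbitEval n (homogeneousComponent e p)) := by
      rw [gradedOrbitEval_apply, sum_sub_distrib, ← map_sum,
        sum_range_homogeneousComponent (lt_of_lt_of_le hp hd), sub_add_cancel]
    rw [SetLike.mem_coe, hsplit]
    exact W.add_mem ⟨p, rfl⟩ (ih (by omega) (sum_filtrationProj_mem (Nat.le_of_lt_succ hp)))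

theorem gradedOrbitEval_surjective : Function.Surjective (gradedOrbitEval n) := fun _ =>
  orbitFiltration_le_range le_rfl (orbitFiltration_eq_top ▸ Submodule.mem_top)

variable (n) in
noncomputable def coinvariantMap :
    (MvPolynomial (Fin n) ℂ ⧸ symIdeal n) →ₗ[ℂ] ℂ[Equiv.Perm (Fin n)] :=
  ((symIdeal n).restrictScalars ℂ).liftQ (gradedOrbitEval n)
      (fun _ hp => gradedOrbitEval_eq_zero_of_mem hp) ∘ₗ
    (Submodule.Quotient.restrictScalarsEquiv ℂ (symIdeal n)).symm.toLinearMap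

theorem coinvariantMap_mk (p : MvPolynomial (Fin n) ℂ) :
    coinvariantMap n (Ideal.Quotient.mk _ p) = gradedOrbitEval n p := rfl

theorem finrank_monoidAlgebra_perm :
    Module.finrank ℂ ℂ[Equiv.Perm (Fin n)] = n.factorial := by
  rw [(MonoidAlgebra.coeffLinearEquiv ℂ).finrank_eq]
  simp [Fintype.card_perm]

theorem coinvariantMap_bijective : Function.Bijective (coinvariantMap n) := by
  refine OrzechProperty.bijective_of_surjective_of_finrank_le _ (fun x => ?_)
    (finrank_le_factorial.trans_eq finrank_monoidAlgebra_perm.symm)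
  obtain ⟨p, rfl⟩ := gradedOrbitEval_surjective x
  exact ⟨_, coinvariantMap_mk p⟩

end Coinvariant

/-- Chevalley's theorem: the coinvariant algebra `ℂ[x₁,…,xₙ] / (ℂ[x₁,…,xₙ]₊^{Σₙ})`
carries the regular representation of `Σₙ` (there is a linear isomorphism with the group
algebra intertwining the permutation action with left translation); in particular its
dimension is `n!`. -/
theorem stmt_14 (n : ℕ) :
    (∃ e : (MvPolynomial (Fin n) ℂ ⧸ symIdeal n) ≃ₗ[ℂ]
        MonoidAlgebra ℂ (Equiv.Perm (Fin n)),
      ∀ (σ : Equiv.Perm (Fin n)) (p : MvPolynomial (Fin n) ℂ),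
        e (Ideal.Quotient.mk (symIdeal n) (MvPolynomial.rename ⇑σ p)) =
          MonoidAlgebra.single σ (1 : ℂ) *
            e (Ideal.Quotient.mk (symIdeal n) p)) ∧
    Module.finrank ℂ (MvPolynomial (Fin n) ℂ ⧸ symIdeal n) = Nat.factorial n := by
  let e := LinearEquiv.ofBijective (Coinvariant.coinvariantMap n)
    Coinvariant.coinvariantMap_bijective
  refine ⟨⟨e, fun σ p => ?_⟩, e.finrank_eq.trans Coinvariant.finrank_monoidAlgebra_perm⟩
  simp only [e, LinearEquiv.ofBijective_apply, Coinvariant.coinvariantMap_mk,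
    Coinvariant.gradedOrbitEval_rename]
end

section
/- For each nonnegative integer n, let A_n be the set of sequences (a₁,...,aₙ) of integers with a_i ≥ 0, a₁+...+aₙ = n and a₁+...+a_k ≥ k for all k; then Σ_{(a₁,...,aₙ) ∈ A_n} n!/(a₁!···aₙ!) = (n+1)^{n-1}, the number of parking functions of length n. -/
open Finset Nat

set_option linter.unusedSectionVars false

variable {α : Type*} [Fintype α] [DecidableEq α]

lemma fiber_card_split {m : ℕ} (f : Fin (m+1) → α) (j : α) :
    (univ.filter (fun b => f b = j)).card
      = (if f 0 = j then 1 else 0) + (univ.filter (fun b : Fin m => f b.succ = j)).card := by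
  simp only [Finset.card_filter]
  rw [Fin.sum_univ_succ]

lemma multinomial_rec (a : α → ℕ) (m : ℕ) (h : ∑ i, a i = m + 1) :
    ∑ i, (if a i = 0 then 0 else Nat.multinomial univ (Function.update a i (a i - 1)))
      = Nat.multinomial univ a := by
  have hK : 0 < ∏ j, (a j)! := Finset.prod_pos (fun _ _ => Nat.factorial_pos _)
  apply Nat.eq_of_mul_eq_mul_right hK
  rw [Finset.sum_mul]
  have hterm : ∀ i ∈ (univ : Finset α),
      (if a i = 0 then 0 else Nat.multinomial univ (Function.update a i (a i - 1))) * ∏ j, (a j)!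
        = m ! * a i := by
    intro i _
    by_cases hi : a i = 0
    · simp [hi]
    · rw [if_neg hi]
      have hpos : 0 < a i := Nat.pos_of_ne_zero hi
      have hprodsplit : ∏ j, (a j)! = a i * ∏ j, ((Function.update a i (a i - 1)) j)! := by
        rw [← Finset.mul_prod_erase univ (fun j => (a j)!) (Finset.mem_univ i),
            ← Finset.mul_prod_erase univ (fun j => ((Function.update a i (a i - 1)) j)!)
              (Finset.mem_univ i)]
        have h1 : ∏ j ∈ univ.erase i, ((Function.update a i (a i - 1)) j)!
            = ∏ j ∈ univ.erase i, (a j)! := by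
          apply Finset.prod_congr rfl
          intro j hj
          rw [Function.update_of_ne (Finset.mem_erase.1 hj).1]
        rw [h1, Function.update_self, ← mul_assoc, Nat.mul_factorial_pred hi]
      have hsum' : ∑ j, (Function.update a i (a i - 1)) j = m := by
        rw [Finset.sum_update_of_mem (Finset.mem_univ i)]
        have h2 := Finset.sum_erase_add univ a (Finset.mem_univ i)
        have h3 : univ \ {i} = univ.erase i := by
          rw [Finset.sdiff_singleton_eq_erase]
        rw [h3]
        omega
      have hspec := Nat.multinomial_spec (univ : Finset α) (Function.update a i (a i - 1))
      rw [hsum'] at hspec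
      rw [hprodsplit]
      calc Nat.multinomial univ (Function.update a i (a i - 1)) *
            (a i * ∏ j, ((Function.update a i (a i - 1)) j)!)
          = ((∏ j, ((Function.update a i (a i - 1)) j)!) *
              Nat.multinomial univ (Function.update a i (a i - 1))) * a i := by ring
        _ = m ! * a i := by rw [hspec]
  rw [Finset.sum_congr rfl hterm, ← Finset.mul_sum, h]
  have hspec := Nat.multinomial_spec (univ : Finset α) a
  rw [h] at hspec
  rw [show Nat.multinomial univ a * ∏ j, (a j)! = (m+1)! from by rw [mul_comm]; exact hspec,
    Nat.factorial_succ]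
  ring

lemma count_fibers (m : ℕ) (a : α → ℕ) (h : ∑ i, a i = m) :
    (univ.filter (fun f : Fin m → α => ∀ i, (univ.filter (fun b => f b = i)).card = a i)).card
      = Nat.multinomial univ a := by
  induction m generalizing a with
  | zero =>
    have ha : ∀ i, a i = 0 := by
      intro i
      have := Finset.sum_eq_zero_iff.1 h i (Finset.mem_univ i)
      exact this
    have hM : Nat.multinomial univ a = 1 := by
      have hspec := Nat.multinomial_spec (univ : Finset α) a
      rw [h] at hspec
      have := Nat.eq_one_of_mul_eq_one_left hspec
      exact this
    rw [hM]
    have hfil : (univ.filter (fun f : Fin 0 → α =>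
        ∀ i, (univ.filter (fun b => f b = i)).card = a i)) = univ := by
      apply Finset.filter_true_of_mem
      intro f _ i
      simp [ha i]
    rw [hfil, Finset.card_univ]
    simp
  | succ m ih =>
    rw [Finset.card_eq_sum_card_fiberwise (f := fun f : Fin (m+1) → α => f 0)
      (t := univ) (fun f _ => Finset.mem_univ _)]
    have hterm : ∀ i ∈ (univ : Finset α),
        ((univ.filter (fun f : Fin (m+1) → α =>
            ∀ j, (univ.filter (fun b => f b = j)).card = a j)).filter (fun f => f 0 = i)).card
          = (if a i = 0 then 0 else Nat.multinomial univ (Function.update a i (a i - 1))) := by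
      intro i _
      by_cases hi : a i = 0
      · rw [if_pos hi]
        rw [Finset.card_eq_zero, Finset.eq_empty_iff_forall_notMem]
        intro f hf
        simp only [Finset.mem_filter, Finset.mem_univ, true_and] at hf
        obtain ⟨hfib, hf0⟩ := hf
        have h1 := hfib i
        have h2 : (0 : Fin (m+1)) ∈ univ.filter (fun b => f b = i) := by
          simp [hf0]
        have := Finset.card_pos.2 ⟨0, h2⟩
        omega
      · rw [if_neg hi]
        have hsum' : ∑ j, Function.update a i (a i - 1) j = m := by
          rw [Finset.sum_update_of_mem (Finset.mem_univ i)]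
          have h2 := Finset.sum_erase_add univ a (Finset.mem_univ i)
          have h3 : (univ : Finset α) \ {i} = univ.erase i := by
            rw [Finset.sdiff_singleton_eq_erase]
          rw [h3]
          omega
        rw [← ih (Function.update a i (a i - 1)) hsum']
        apply Finset.card_bij' (i := fun f _ => f ∘ Fin.succ) (j := fun g _ => Fin.cases i g)
        · intro f hf
          simp only [Finset.mem_filter, Finset.mem_univ, true_and] at hf ⊢
          obtain ⟨hfib, hf0⟩ := hf
          intro j
          have hsplit := fiber_card_split f j
          rw [hfib j] at hsplit
          by_cases hj : j = i
          · subst hj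
            rw [if_pos hf0] at hsplit
            rw [Function.update_self]
            simp only [Function.comp] at *
            omega
          · rw [Function.update_of_ne hj]
            rw [if_neg (by simpa [hf0] using (Ne.symm hj))] at hsplit
            simpa using hsplit.symm
        · intro g hg
          simp only [Finset.mem_filter, Finset.mem_univ, true_and] at hg ⊢
          constructor
          · intro j
            have hsplit := fiber_card_split (Fin.cases i g : Fin (m+1) → α) j
            have hrest : (univ.filter (fun b : Fin m => (Fin.cases i g : Fin (m+1) → α) b.succ = j)).card
                = Function.update a i (a i - 1) j := by
              rw [← hg j]
              rfl
            rw [hrest] at hsplit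
            by_cases hj : j = i
            · subst hj
              rw [if_pos (by simp)] at hsplit
              rw [Function.update_self] at hsplit
              omega
            · rw [if_neg (by simpa using (Ne.symm hj))] at hsplit
              rw [Function.update_of_ne hj] at hsplit
              omega
          · simp
        · intro f hf
          simp only [Finset.mem_filter] at hf
          funext b
          cases b using Fin.cases with
          | zero => simpa using hf.2.symm
          | succ b => simp
        · intro g hg
          funext b
          simp
    rw [Finset.sum_congr rfl hterm]
    exact multinomial_rec a m h
open Finset Nat
open scoped Fin.NatCast Fin.CommRing

/-- fiber counts -/
def pcnt (n : ℕ) (g : Fin n → Fin (n+1)) (s : Fin (n+1)) : ℕ :=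
  (univ.filter fun j => g j = s).card

/-- prefix-sum minus length -/
def pFz (n : ℕ) (g : Fin n → Fin (n+1)) (t : ℕ) : ℤ :=
  (∑ u ∈ range t, (pcnt n g ((u : ℕ) : Fin (n+1)) : ℤ)) - t

lemma sum_pcnt (n : ℕ) (g : Fin n → Fin (n+1)) : ∑ s : Fin (n+1), pcnt n g s = n := by
  have := Finset.card_eq_sum_card_fiberwise
    (s := (univ : Finset (Fin n))) (t := univ) (f := g) (fun j _ => Finset.mem_univ _)
  simp only [Finset.card_univ, Fintype.card_fin] at this
  exact this.symm

lemma pFz_period (n : ℕ) (g : Fin n → Fin (n+1)) (t : ℕ) :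
    pFz n g (t + (n+1)) = pFz n g t - 1 := by
  have hsum : ∑ u ∈ range (n+1), (pcnt n g (((t + u : ℕ)) : Fin (n+1)) : ℤ) = (n : ℤ) := by
    have h1 : ∑ u ∈ range (n+1), (pcnt n g (((t + u : ℕ)) : Fin (n+1)) : ℤ)
        = ∑ u : Fin (n+1), (pcnt n g (((t + (u : ℕ) : ℕ)) : Fin (n+1)) : ℤ) :=
      (Fin.sum_univ_eq_sum_range (fun u => (pcnt n g (((t + u : ℕ)) : Fin (n+1)) : ℤ)) (n+1)).symm
    rw [h1]
    have h2 : ∀ u : Fin (n+1), (((t + (u : ℕ) : ℕ)) : Fin (n+1)) = (t : Fin (n+1)) + u := by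
      intro u
      push_cast
      rfl
    have h3 : ∑ u : Fin (n+1), (pcnt n g (((t + (u : ℕ) : ℕ)) : Fin (n+1)) : ℤ)
        = ∑ s : Fin (n+1), (pcnt n g s : ℤ) := by
      apply Fintype.sum_equiv (Equiv.addLeft ((t : ℕ) : Fin (n+1)))
      intro u
      rw [h2 u]
      rfl
    rw [h3, ← Nat.cast_sum, sum_pcnt]
  unfold pFz
  rw [Finset.sum_range_add, hsum]
  push_cast
  ring

lemma count_shift (n : ℕ) (g : Fin n → Fin (n+1)) (c : Fin (n+1)) (k : ℕ) (hk : k ≤ n+1) :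
    (((univ.filter fun j : Fin n => ((g j + c) : Fin (n+1)).val < k).card : ℤ))
      = pFz n g ((-c).val + k) - pFz n g ((-c).val) + k := by
  have hstep1 : (univ.filter fun j : Fin n => ((g j + c) : Fin (n+1)).val < k).card
      = ∑ u ∈ range k, pcnt n g ((((-c).val + u : ℕ)) : Fin (n+1)) := by
    rw [Finset.card_eq_sum_card_fiberwise (f := fun j => ((g j + c) : Fin (n+1)).val)
      (t := range k) (fun j hj => by
        simp only [Finset.mem_coe, Finset.mem_filter] at hj
        exact Finset.mem_range.2 hj.2)]
    apply Finset.sum_congr rfl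
    intro u hu
    have hu' : u < k := Finset.mem_range.1 hu
    congr 1
    ext j
    simp only [Finset.mem_filter, Finset.mem_univ, true_and]
    have hcast : ((((-c).val + u : ℕ)) : Fin (n+1)) = (u : Fin (n+1)) - c := by
      push_cast
      ring
    have hval : ((u : Fin (n+1)) : ℕ) = u := Fin.val_cast_of_lt (lt_of_lt_of_le hu' hk)
    constructor
    · rintro ⟨-, h2⟩
      rw [hcast, eq_sub_iff_add_eq]
      apply Fin.ext
      rw [hval, h2]
    · intro h
      rw [hcast, eq_sub_iff_add_eq] at h
      have : ((g j + c) : Fin (n+1)).val = u := by rw [h, hval]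
      exact ⟨by omega, this⟩
  rw [hstep1]
  unfold pFz
  rw [Finset.sum_range_add]
  push_cast
  ring

lemma park_iff (n : ℕ) (g : Fin n → Fin (n+1)) (c : Fin (n+1)) :
    (∀ k, k ≤ n → (k : ℕ) ≤ (univ.filter fun j : Fin n => ((g j + c) : Fin (n+1)).val < k).card)
      ↔ ∀ k, k ≤ n → pFz n g ((-c).val) ≤ pFz n g ((-c).val + k) := by
  constructor
  · intro h k hk
    have h1 := h k hk
    have h2 := count_shift n g c k (by omega)
    have : ((k : ℤ)) ≤ ((univ.filter fun j : Fin n => ((g j + c) : Fin (n+1)).val < k).card : ℤ) :=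
      by exact_mod_cast h1
    omega
  · intro h k hk
    have h1 := h k hk
    have h2 := count_shift n g c k (by omega)
    have : ((k : ℤ)) ≤ ((univ.filter fun j : Fin n => ((g j + c) : Fin (n+1)).val < k).card : ℤ) :=
      by omega
    exact_mod_cast this

lemma first_argmin (F : ℕ → ℤ) (N : ℕ) (hN : 0 < N) :
    ∃! r, r < N ∧ (∀ s, r ≤ s → s < N → F r ≤ F s) ∧ (∀ s, s < r → F r < F s) := by
  classical
  set A := (range N).filter (fun r => ∀ s ∈ range N, F r ≤ F s) with hA
  have hne : A.Nonempty := by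
    obtain ⟨r, hr, hmin⟩ := Finset.exists_min_image (range N) F ⟨0, Finset.mem_range.2 hN⟩
    exact ⟨r, by simp only [hA, Finset.mem_filter]; exact ⟨hr, hmin⟩⟩
  set r := A.min' hne with hr
  have hrA : r ∈ A := A.min'_mem hne
  simp only [hA, Finset.mem_filter, Finset.mem_range] at hrA
  obtain ⟨hrN, hrmin⟩ := hrA
  refine ⟨r, ⟨hrN, fun s _ hsN => hrmin s hsN, fun s hs => ?_⟩, ?_⟩
  · have hsN : s < N := lt_trans hs hrN
    have h1 : F r ≤ F s := hrmin s hsN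
    rcases lt_or_eq_of_le h1 with h | h
    · exact h
    · exfalso
      have hsA : s ∈ A := by
        simp only [hA, Finset.mem_filter, Finset.mem_range]
        exact ⟨hsN, fun t ht => h ▸ hrmin t ht⟩
      have := A.min'_le s hsA
      omega
  · rintro r' ⟨hr'N, h1, h2⟩
    by_contra hne'
    rcases lt_trichotomy r' r with h | h | h
    · have ha := h2  -- r' properties
      have hb := hrmin r' hr'N  -- F r ≤ F r'
      have hc := h1 r (le_of_lt h) hrN
      -- r' < r : from r' first-min: ∀ s < r', F r' < F s; and F r' ≤ F r for r ∈ [r', N)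
      -- also F r ≤ F r' since r is global min. But r' < r and r's second clause? r is min' of A.
      -- F r' ≤ F r (hc) and F r ≤ F r' (hb) so F r' = F r, then r' ∈ A, min' ≤ r', contra.
      have heq : F r' = F r := le_antisymm hc hb
      have hr'A : r' ∈ A := by
        simp only [hA, Finset.mem_filter, Finset.mem_range]
        refine ⟨hr'N, fun t ht => heq ▸ hrmin t ht⟩
      have := A.min'_le r' hr'A
      omega
    · exact hne' h
    · -- r < r' : r''s second clause at s = r: F r' < F r, but F r ≤ F r' since r global min
      have := h2 r h
      have := hrmin r' hr'N
      omega

lemma periodic_argmin (F : ℕ → ℤ) (n : ℕ) (hper : ∀ t, F (t + (n+1)) = F t - 1)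
    (r : ℕ) (hr : r < n+1) :
    (∀ k, k ≤ n → F r ≤ F (r+k)) ↔
      ((∀ s, r ≤ s → s < n+1 → F r ≤ F s) ∧ (∀ s, s < r → F r < F s)) := by
  constructor
  · intro h
    refine ⟨fun s hrs hsN => ?_, fun s hs => ?_⟩
    · have := h (s - r) (by omega)
      rwa [show r + (s-r) = s by omega] at this
    · have hk := h (s + (n+1) - r) (by omega)
      rw [show r + (s + (n+1) - r) = s + (n+1) by omega, hper s] at hk
      omega
  · rintro ⟨h1, h2⟩ k hk
    by_cases hcase : r + k < n+1
    · exact h1 _ (Nat.le_add_right _ _) hcase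
    · have hs : r + k = (r + k - (n+1)) + (n+1) := by omega
      rw [hs, hper]
      have := h2 (r + k - (n+1)) (by omega)
      omega

lemma exists_unique_shift (n : ℕ) (g : Fin n → Fin (n+1)) :
    ∃! c : Fin (n+1), ∀ k, k ≤ n →
      (k : ℕ) ≤ (univ.filter fun j : Fin n => ((g j + c) : Fin (n+1)).val < k).card := by
  obtain ⟨r, ⟨hrN, hmin1, hmin2⟩, huniq⟩ := first_argmin (pFz n g) (n+1) (Nat.succ_pos n)
  refine ⟨-((r : ℕ) : Fin (n+1)), ?_, ?_⟩
  · refine (park_iff n g _).2 ?_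
    rw [show ((- -((r : ℕ) : Fin (n+1))).val) = r from by rw [neg_neg, Fin.val_cast_of_lt hrN]]
    exact (periodic_argmin (pFz n g) n (pFz_period n g) r hrN).2 ⟨hmin1, hmin2⟩
  · intro c' hc'
    have h2 := (park_iff n g c').1 hc'
    have h3 := (periodic_argmin (pFz n g) n (pFz_period n g) ((-c').val) (Fin.is_lt _)).1 h2
    have h4 := huniq ((-c').val) ⟨Fin.is_lt _, h3.1, h3.2⟩
    have h5 : -c' = ((r : ℕ) : Fin (n+1)) := by
      rw [← h4, Fin.cast_val_eq_self]
    rw [← h5, neg_neg]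

lemma card_park_shift (n : ℕ) :
    (univ.filter (fun h : Fin n → Fin (n+1) =>
        ∀ k, k ≤ n → (k : ℕ) ≤ (univ.filter fun j => (h j).val < k).card)).card * (n+1)
      = (n+1)^n := by
  classical
  have key := fun g : Fin n → Fin (n+1) => exists_unique_shift n g
  choose C hC hCuniq using key
  have hcard : (univ : Finset (Fin n → Fin (n+1))).card = (n+1)^n := by
    simp [Finset.card_univ]
  have h0 := Finset.card_eq_sum_card_fiberwise (s := (univ : Finset (Fin n → Fin (n+1))))
    (f := C) (t := univ) (fun g _ => Finset.mem_univ _)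
  rw [hcard] at h0
  have hfib : ∀ c : Fin (n+1),
      (univ.filter fun g : Fin n → Fin (n+1) => C g = c).card
        = (univ.filter (fun h : Fin n → Fin (n+1) =>
            ∀ k, k ≤ n → (k : ℕ) ≤ (univ.filter fun j => (h j).val < k).card)).card := by
    intro c
    apply Finset.card_nbij' (i := fun g => fun j => g j + c) (j := fun h => fun j => h j - c)
    · intro g hg
      simp only [Finset.mem_coe, Finset.mem_filter, Finset.mem_univ, true_and] at hg ⊢
      intro k hk
      have := hC g k hk
      rw [hg] at this
      exact this
    · intro h hh
      simp only [Finset.mem_coe, Finset.mem_filter, Finset.mem_univ, true_and] at hh ⊢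
      have hpark : ∀ k, k ≤ n →
          (k : ℕ) ≤ (univ.filter fun j : Fin n =>
            (((fun j => h j - c) j + c) : Fin (n+1)).val < k).card := by
        intro k hk
        have heq : ∀ j : Fin n, (h j - c) + c = h j := by intro j; ring
        simp only [heq]
        exact hh k hk
      exact (hCuniq (fun j => h j - c) c hpark).symm
    · intro g _
      funext j
      ring
    · intro h _
      funext j
      ring
  rw [Finset.sum_congr rfl (fun c _ => hfib c), Finset.sum_const, Finset.card_univ] at h0
  rw [h0, Fintype.card_fin, smul_eq_mul, mul_comm]

lemma park_val_lt (n : ℕ) (h : Fin n → Fin (n+1))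
    (hh : ∀ k, k ≤ n → (k : ℕ) ≤ (univ.filter fun j => (h j).val < k).card) :
    ∀ j, (h j).val < n := by
  have h1 := hh n le_rfl
  have h2 : (univ.filter fun j : Fin n => (h j).val < n).card ≤ (univ : Finset (Fin n)).card :=
    Finset.card_le_card (Finset.filter_subset _ _)
  rw [Finset.card_univ, Fintype.card_fin] at h2
  have h3 : (univ.filter fun j : Fin n => (h j).val < n) = univ := by
    apply Finset.eq_univ_of_card
    rw [Fintype.card_fin]
    omega
  intro j
  have := Finset.mem_filter.1 (h3 ▸ Finset.mem_univ j)
  exact this.2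

lemma card_park_eq (n : ℕ) :
    (univ.filter (fun f : Fin n → Fin n =>
        ∀ k, k ≤ n → (k : ℕ) ≤ (univ.filter fun j => (f j).val < k).card)).card
      = (univ.filter (fun h : Fin n → Fin (n+1) =>
          ∀ k, k ≤ n → (k : ℕ) ≤ (univ.filter fun j => (h j).val < k).card)).card := by
  apply Finset.card_bij' (i := fun f _ => fun j => Fin.castSucc (f j))
    (j := fun h hh => fun j =>
      ⟨(h j).val, park_val_lt n h (by simpa using (Finset.mem_filter.1 hh).2) j⟩)
  case hi =>
    intro f hf
    simp only [Finset.mem_filter, Finset.mem_univ, true_and] at hf ⊢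
    simpa using hf
  case hj =>
    intro h hh
    simp only [Finset.mem_filter, Finset.mem_univ, true_and] at hh ⊢
    simpa using hh
  case left_inv =>
    intro f _
    funext j
    apply Fin.ext
    simp
  case right_inv =>
    intro h _
    funext j
    apply Fin.ext
    simp

lemma sum_fibers (n : ℕ) (f : Fin n → Fin n) :
    ∑ i : Fin n, (univ.filter fun j => f j = i).card = n := by
  have := Finset.card_eq_sum_card_fiberwise
    (s := (univ : Finset (Fin n))) (t := univ) (f := f) (fun j _ => Finset.mem_univ _)
  simp only [Finset.card_univ, Fintype.card_fin] at this
  exact this.symm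

lemma partial_sum_fibers (n k : ℕ) (f : Fin n → Fin n) :
    ∑ i ∈ univ.filter (fun i : Fin n => (i : ℕ) < k), (univ.filter (fun j => f j = i)).card
      = (univ.filter (fun j : Fin n => ((f j) : ℕ) < k)).card := by
  rw [Finset.card_eq_sum_card_fiberwise (s := univ.filter fun j : Fin n => ((f j) : ℕ) < k)
      (t := univ.filter fun i : Fin n => (i : ℕ) < k) (f := f)
      (fun j hj => by
        simp only [Finset.mem_coe, Finset.mem_filter, Finset.mem_univ, true_and] at hj ⊢
        exact hj)]
  apply Finset.sum_congr rfl
  intro i hi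
  simp only [Finset.mem_filter, Finset.mem_univ, true_and] at hi
  congr 1
  ext j
  simp only [Finset.mem_filter, Finset.mem_univ, true_and]
  constructor
  · intro h
    exact ⟨h ▸ hi, h⟩
  · intro h
    exact h.2

/-- The sum, over all sequences `(a₁,…,aₙ)` of nonnegative integers with `∑ aᵢ = n` and
all partial sums `a₁ + ⋯ + a_k ≥ k`, of the multinomial coefficients `n!/(a₁!⋯aₙ!)`,
equals `(n+1)^(n-1)`, the number of parking functions. -/
theorem stmt_16 (n : ℕ) :
    ∑ a ∈ Finset.univ.filter (fun a : Fin n → Fin (n + 1) =>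
        (∑ i, (a i : ℕ)) = n ∧
        ∀ k < n + 1, k ≤ ∑ i ∈ Finset.univ.filter (fun i : Fin n => (i : ℕ) < k), (a i : ℕ)),
      (Nat.factorial n / ∏ i, Nat.factorial (a i : ℕ)) = (n + 1) ^ (n - 1) := by
  classical
  rcases Nat.eq_zero_or_pos n with hn | hn
  · subst hn
    decide
  set T := Finset.univ.filter (fun a : Fin n → Fin (n + 1) =>
      (∑ i, (a i : ℕ)) = n ∧
      ∀ k < n + 1, k ≤ ∑ i ∈ Finset.univ.filter (fun i : Fin n => (i : ℕ) < k), (a i : ℕ))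
    with hT
  have hsummand : ∀ a ∈ T, n ! / ∏ i, ((a i : ℕ))!
      = Nat.multinomial univ (fun i => ((a i : ℕ))) := by
    intro a ha
    rw [hT, Finset.mem_filter] at ha
    have hsum : ∑ i, (a i : ℕ) = n := ha.2.1
    have hspec := Nat.multinomial_spec (univ : Finset (Fin n)) (fun i => ((a i : ℕ)))
    rw [hsum] at hspec
    rw [← hspec, Nat.mul_div_cancel_left _ (Finset.prod_pos (fun _ _ => Nat.factorial_pos _))]
  rw [Finset.sum_congr rfl hsummand]
  -- the parking set
  set P := univ.filter (fun f : Fin n → Fin n =>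
      ∀ k, k ≤ n → (k : ℕ) ≤ (univ.filter fun j => (f j).val < k).card) with hP
  set A : (Fin n → Fin n) → (Fin n → Fin (n+1)) := fun f i =>
    ⟨(univ.filter fun j => f j = i).card, by
      have : (univ.filter fun j : Fin n => f j = i).card ≤ (univ : Finset (Fin n)).card :=
        Finset.card_le_card (Finset.filter_subset _ _)
      rw [Finset.card_univ, Fintype.card_fin] at this
      omega⟩ with hA
  have hmaps : ∀ f ∈ P, A f ∈ T := by
    intro f hf
    rw [hP, Finset.mem_filter] at hf
    rw [hT, Finset.mem_filter]
    refine ⟨Finset.mem_univ _, ?_, ?_⟩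
    · show (∑ i, ((A f i : ℕ))) = n
      simp only [hA]
      exact sum_fibers n f
    · intro k hk
      have h1 : ∑ i ∈ univ.filter (fun i : Fin n => (i : ℕ) < k), ((A f i : ℕ))
          = (univ.filter (fun j : Fin n => ((f j) : ℕ) < k)).card := by
        simp only [hA]
        exact partial_sum_fibers n k f
      rw [h1]
      exact hf.2 k (by omega)
  have hcard := Finset.card_eq_sum_card_fiberwise (s := P) (t := T) (f := A) hmaps
  have hfibeq : ∀ a ∈ T,
      (P.filter (fun f => A f = a)).card = Nat.multinomial univ (fun i => ((a i : ℕ))) := by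
    intro a ha
    rw [hT, Finset.mem_filter] at ha
    have heq : P.filter (fun f => A f = a)
        = univ.filter (fun f : Fin n → Fin n =>
            ∀ i, (univ.filter fun j => f j = i).card = (a i : ℕ)) := by
      ext f
      simp only [Finset.mem_filter, Finset.mem_univ, true_and, hP]
      constructor
      · rintro ⟨-, h2⟩ i
        have := congrFun h2 i
        rw [hA] at this
        exact congrArg Fin.val this
      · intro hfib
        refine ⟨?_, ?_⟩
        · intro k hk
          have h1 := partial_sum_fibers n k f
          rw [← h1]
          have h2 : ∑ i ∈ univ.filter (fun i : Fin n => (i : ℕ) < k),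
              (univ.filter (fun j => f j = i)).card
              = ∑ i ∈ univ.filter (fun i : Fin n => (i : ℕ) < k), (a i : ℕ) :=
            Finset.sum_congr rfl (fun i _ => hfib i)
          rw [h2]
          exact ha.2.2 k (by omega)
        · funext i
          apply Fin.ext
          simp only [hA]
          exact hfib i
    rw [heq]
    have hcf := count_fibers n (fun i => ((a i : ℕ))) ha.2.1
    convert hcf using 2
    ext f
    simp [Finset.mem_filter]
  rw [Finset.sum_congr rfl (fun a ha => (hfibeq a ha).symm), ← hcard]
  -- now P.card = (n+1)^(n-1)
  rw [hP, card_park_eq n]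
  have hps := card_park_shift n
  have hpow : (n+1)^n = (n+1)^(n-1) * (n+1) := by
    rw [← pow_succ, Nat.sub_add_cancel hn]
  apply Nat.eq_of_mul_eq_mul_right (Nat.succ_pos n)
  rw [hps, hpow]
end

section
/- There is a bijection between the set R_{n+1}^{r+1} of Raney sequences and the set of pairs ((a₁,...,aₙ), (subsets)) as follows: the sets H ∈ R_{n+1}^{r+1} are in bijection with tuples consisting of a sequence (a₁,...,aₙ) ∈ A_n together with, for each s, a subset of size a_s of {1,...,r+1}; equivalently, |R_{n+1}^{r+1}| = Σ_{(a₁,...,aₙ) ∈ A_n} Π_{s=1}^n C(r+1, a_s). -/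
namespace Stmt17


def emb (r s j : ℕ) : ℕ := (r+1)*s+1+j

def blockSet (r : ℕ) (H : Finset ℕ) (s : ℕ) : Finset ℕ :=
  (H.filter fun x => (r+1)*s+2 ≤ x ∧ x ≤ (r+1)*s+r+2).image fun x => x - ((r+1)*s+1)

def pbuild (n r c : ℕ) (f : Fin n → Finset ℕ) : Finset ℕ :=
  insert 1 ((Finset.univ.filter fun s : Fin n => (s:ℕ) < c).biUnion fun s => (f s).image (emb r s))

lemma emb_inj (r s : ℕ) : Function.Injective (emb r s) := by
  intro a b h; simpa [emb] using h

lemma mem_emb_range {r s j : ℕ} (hj : j ∈ Finset.Icc 1 (r+1)) :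
    (r+1)*s+2 ≤ emb r s j ∧ emb r s j ≤ (r+1)*s+r+2 := by
  simp only [Finset.mem_Icc] at hj; unfold emb; omega

lemma blocks_eq {r x s t : ℕ} (h1 : (r+1)*s+2 ≤ x) (h2 : x ≤ (r+1)*s+r+2)
    (h3 : (r+1)*t+2 ≤ x) (h4 : x ≤ (r+1)*t+r+2) : s = t := by
  rcases lt_trichotomy s t with h | h | h
  · have hm : (r+1)*(s+1) ≤ (r+1)*t := Nat.mul_le_mul_left _ h
    rw [Nat.mul_add, Nat.mul_one] at hm; omega
  · exact h
  · have hm : (r+1)*(t+1) ≤ (r+1)*s := Nat.mul_le_mul_left _ h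
    rw [Nat.mul_add, Nat.mul_one] at hm; omega

lemma pbuild_card (n r c : ℕ) (f : Fin n → Finset ℕ) (hf : ∀ s, f s ⊆ Finset.Icc 1 (r+1)) :
    (pbuild n r c f).card
      = 1 + ∑ s ∈ Finset.univ.filter (fun s : Fin n => (s:ℕ) < c), (f s).card := by
  classical
  have h1 : (1:ℕ) ∉ (Finset.univ.filter fun s : Fin n => (s:ℕ) < c).biUnion
      (fun s => (f s).image (emb r s)) := by
    simp only [Finset.mem_biUnion, Finset.mem_image, Finset.mem_filter]
    rintro ⟨s, -, j, hj, hej⟩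
    have := mem_emb_range (s := (s:ℕ)) (hf s hj)
    omega
  rw [pbuild, Finset.card_insert_of_notMem h1, Finset.card_biUnion, add_comm]
  · congr 1
    exact Finset.sum_congr rfl fun s _ => Finset.card_image_of_injective _ (emb_inj r s)
  · intro s _ t _ hst
    apply Finset.disjoint_left.2
    rintro x hx hx'
    simp only [Finset.mem_image] at hx hx'
    obtain ⟨j, hj, rfl⟩ := hx
    obtain ⟨j', hj', he⟩ := hx'
    have h1 := mem_emb_range (s := (s:ℕ)) (hf s hj)
    have h2 := mem_emb_range (s := (t:ℕ)) (hf t hj')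
    rw [he] at h2
    exact hst (Fin.ext (blocks_eq h1.1 h1.2 h2.1 h2.2))

lemma blockSet_pbuild (n r c : ℕ) (f : Fin n → Finset ℕ) (hf : ∀ s, f s ⊆ Finset.Icc 1 (r+1))
    (t : Fin n) (htc : (t:ℕ) < c) : blockSet r (pbuild n r c f) t = f t := by
  classical
  ext j
  simp only [blockSet, Finset.mem_image, Finset.mem_filter, pbuild, Finset.mem_insert,
    Finset.mem_biUnion, Finset.mem_univ, true_and]
  constructor
  · rintro ⟨x, ⟨hx, hx1, hx2⟩, rfl⟩
    rcases hx with rfl | ⟨s, hs, j', hj', rfl⟩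
    · omega
    · have h1 := mem_emb_range (s := (s:ℕ)) (hf s hj')
      have hst : s = t := Fin.ext (blocks_eq h1.1 h1.2 hx1 hx2)
      subst hst
      have : emb r (s:ℕ) j' - ((r+1)*(s:ℕ)+1) = j' := by unfold emb; omega
      rwa [this]
  · intro hj
    refine ⟨emb r t j, ⟨Or.inr ⟨t, htc, j, hj, rfl⟩, ?_, ?_⟩, ?_⟩
    · exact (mem_emb_range (s := (t:ℕ)) (hf t hj)).1
    · exact (mem_emb_range (s := (t:ℕ)) (hf t hj)).2
    · have hj' := hf t hj; simp only [Finset.mem_Icc] at hj'; unfold emb; omega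

-- structural facts
lemma one_mem_raney {n r : ℕ} {H : Finset ℕ} (hH : H ∈ RaneySet (r+1) (n+1)) : 1 ∈ H := by
  obtain ⟨-, -, hcond⟩ := hH
  have h := hcond 1 le_rfl (by nlinarith)
  have hpos : 0 < (H ∩ Finset.Icc 1 1).card := by
    rcases Nat.eq_zero_or_pos (H ∩ Finset.Icc 1 1).card with h0 | h0
    · rw [h0] at h; omega
    · exact h0
  obtain ⟨x, hx⟩ := Finset.card_pos.mp hpos
  obtain ⟨hxH, hxI⟩ := Finset.mem_inter.mp hx
  simp only [Finset.mem_Icc] at hxI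
  have : x = 1 := by omega
  rwa [this] at hxH

lemma raney_subset {n r : ℕ} {H : Finset ℕ} (hH : H ∈ RaneySet (r+1) (n+1)) :
    H ⊆ Finset.Icc 1 ((r+1)*n+1) := by
  obtain ⟨hsub, hcard, hcond⟩ := hH
  have hM : (r+1)*n+1 ≤ (r+1)*(n+1) := by rw [Nat.mul_add, Nat.mul_one]; omega
  have h := hcond ((r+1)*n+1) (by omega) hM
  have hle : (H ∩ Finset.Icc 1 ((r+1)*n+1)).card ≤ n+1 := by
    calc (H ∩ Finset.Icc 1 ((r+1)*n+1)).card ≤ H.card := Finset.card_le_card Finset.inter_subset_left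
    _ = n+1 := hcard
  have hge : n+1 ≤ (H ∩ Finset.Icc 1 ((r+1)*n+1)).card := by
    by_contra hlt
    push_neg at hlt
    have : (r+1) * (H ∩ Finset.Icc 1 ((r+1)*n+1)).card ≤ (r+1)*n := Nat.mul_le_mul_left _ (by omega)
    omega
  have heq : H ∩ Finset.Icc 1 ((r+1)*n+1) = H :=
    Finset.eq_of_subset_of_card_le Finset.inter_subset_left (by omega)
  intro x hx
  rw [← heq] at hx
  exact (Finset.mem_inter.mp hx).2

lemma recon {n r : ℕ} {H : Finset ℕ} (hH : H ∈ RaneySet (r+1) (n+1)) :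
    H = pbuild n r n (fun s => blockSet r H s) := by
  have h1 := one_mem_raney hH
  have hsub := raney_subset hH
  ext x
  simp only [pbuild, Finset.mem_insert, Finset.mem_biUnion, Finset.mem_filter, Finset.mem_univ,
    true_and, blockSet, Finset.mem_image]
  constructor
  · intro hx
    rcases eq_or_ne x 1 with rfl | hx1
    · exact Or.inl rfl
    refine Or.inr ?_
    have hxI := hsub hx
    simp only [Finset.mem_Icc] at hxI
    set s := (x-2)/(r+1) with hs
    have hdm : (r+1)*s + (x-2) % (r+1) = x-2 := by rw [hs]; exact Nat.div_add_mod _ _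
    have hmlt : (x-2) % (r+1) < r+1 := Nat.mod_lt _ (by omega)
    have hsn : s < n := by
      by_contra hge
      push_neg at hge
      have : (r+1)*n ≤ (r+1)*s := Nat.mul_le_mul_left _ hge
      omega
    refine ⟨⟨s, hsn⟩, hsn, x - ((r+1)*s+1), ⟨x, ⟨hx, ?_, ?_⟩, rfl⟩, ?_⟩
    · show (r+1)*s+2 ≤ x; omega
    · show x ≤ (r+1)*s+r+2; omega
    · show emb r s (x - ((r+1)*s+1)) = x; unfold emb; omega
  · rintro (rfl | ⟨s, hs, j, ⟨y, ⟨hy, hy1, hy2⟩, rfl⟩, rfl⟩)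
    · exact h1
    · have : emb r (s:ℕ) (y - ((r+1)*(s:ℕ)+1)) = y := by unfold emb; omega
      rwa [this]

lemma pbuild_mono {n r c c' : ℕ} (f : Fin n → Finset ℕ) (h : c ≤ c') :
    pbuild n r c f ⊆ pbuild n r c' f := by
  apply Finset.insert_subset_insert
  apply Finset.biUnion_subset_biUnion_of_subset_left
  intro s hs
  simp only [Finset.mem_filter, Finset.mem_univ, true_and] at hs ⊢
  omega

lemma pbuild_subset_Icc {n r c : ℕ} (f : Fin n → Finset ℕ)
    (hf : ∀ s, f s ⊆ Finset.Icc 1 (r+1)) :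
    pbuild n r c f ⊆ Finset.Icc 1 ((r+1)*c+1) := by
  intro x hx
  simp only [pbuild, Finset.mem_insert, Finset.mem_biUnion, Finset.mem_filter, Finset.mem_univ,
    Finset.mem_image, true_and] at hx
  simp only [Finset.mem_Icc]
  rcases hx with rfl | ⟨s, hs, j, hj, rfl⟩
  · omega
  · have h := mem_emb_range (s := (s:ℕ)) (hf s hj)
    have : (r+1)*((s:ℕ)+1) ≤ (r+1)*c := Nat.mul_le_mul_left _ (by omega)
    rw [Nat.mul_add, Nat.mul_one] at this
    unfold emb at *
    omega

lemma pbuild_inter {n r k : ℕ} (f : Fin n → Finset ℕ)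
    (hf : ∀ s, f s ⊆ Finset.Icc 1 (r+1)) (hk : k ≤ n) :
    pbuild n r n f ∩ Finset.Icc 1 ((r+1)*k+1) = pbuild n r k f := by
  apply Finset.Subset.antisymm
  · intro x hx
    obtain ⟨hx1, hx2⟩ := Finset.mem_inter.mp hx
    simp only [Finset.mem_Icc] at hx2
    simp only [pbuild, Finset.mem_insert, Finset.mem_biUnion, Finset.mem_filter, Finset.mem_univ,
      true_and] at hx1 ⊢ 
    rcases hx1 with rfl | ⟨s, hs, hxim⟩
    · exact Or.inl rfl
    · obtain ⟨j, hj, rfl⟩ := Finset.mem_image.mp hxim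
      refine Or.inr ⟨s, ?_, Finset.mem_image.mpr ⟨j, hj, rfl⟩⟩
      have h := mem_emb_range (s := (s:ℕ)) (hf s hj)
      by_contra hge
      push_neg at hge
      have : (r+1)*k ≤ (r+1)*(s:ℕ) := Nat.mul_le_mul_left _ hge
      omega
  · intro x hx
    refine Finset.mem_inter.mpr ⟨pbuild_mono f hk hx, ?_⟩
    exact pbuild_subset_Icc f hf hx

lemma filter_lt_n_eq_univ (n : ℕ) :
    (Finset.univ.filter fun s : Fin n => (s:ℕ) < n) = Finset.univ :=
  Finset.filter_true_of_mem fun s _ => s.isLt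

lemma build_mem (n r : ℕ) (f : Fin n → Finset ℕ) (hf : ∀ s, f s ⊆ Finset.Icc 1 (r+1))
    (hsum : ∑ s, (f s).card = n)
    (hpart : ∀ k < n + 1, k ≤ ∑ i ∈ Finset.univ.filter (fun i : Fin n => (i:ℕ) < k), (f i).card) :
    pbuild n r n f ∈ RaneySet (r+1) (n+1) := by
  have hMN : (r+1)*n+1 ≤ (r+1)*(n+1) := by
    have : (r+1)*(n+1) = (r+1)*n + (r+1) := by ring
    omega
  refine ⟨?_, ?_, ?_⟩
  · exact (pbuild_subset_Icc f hf).trans (Finset.Icc_subset_Icc le_rfl hMN)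
  · rw [pbuild_card n r n f hf, filter_lt_n_eq_univ, hsum]; omega
  · intro k hk1 hk2
    have hq : (r+1) * ((k+r)/(r+1)) + (k+r) % (r+1) = k+r := Nat.div_add_mod _ _
    have hm : (k+r) % (r+1) < r+1 := Nat.mod_lt _ (by omega)
    have hc1 : 1 ≤ (k+r)/(r+1) := by
      rcases Nat.eq_zero_or_pos ((k+r)/(r+1)) with h0 | h0
      · rw [h0, Nat.mul_zero] at hq; omega
      · exact h0
    obtain ⟨c', hc'⟩ : ∃ c', (k+r)/(r+1) = c'+1 := ⟨(k+r)/(r+1) - 1, by omega⟩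
    rw [hc'] at hq
    have hexp : (r+1)*(c'+1) = (r+1)*c' + (r+1) := by ring
    have hklow : (r+1)*c' < k := by omega
    have hkhigh : k ≤ (r+1)*(c'+1) := by omega
    have hc'n : c' ≤ n := by
      have h2 : (r+1)*c' < (r+1)*(n+1) := lt_of_lt_of_le hklow hk2
      have := Nat.lt_of_mul_lt_mul_left h2
      omega
    have hsub : pbuild n r c' f ⊆ pbuild n r n f ∩ Finset.Icc 1 k := by
      intro x hx
      refine Finset.mem_inter.mpr ⟨pbuild_mono f hc'n hx, ?_⟩
      have := pbuild_subset_Icc f hf hx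
      exact Finset.Icc_subset_Icc le_rfl (by omega) this
    have hcard : c' + 1 ≤ (pbuild n r n f ∩ Finset.Icc 1 k).card := by
      calc c' + 1 ≤ 1 + ∑ s ∈ Finset.univ.filter (fun s : Fin n => (s:ℕ) < c'), (f s).card := by
            have := hpart c' (by omega); omega
        _ = (pbuild n r c' f).card := (pbuild_card n r c' f hf).symm
        _ ≤ _ := Finset.card_le_card hsub
    calc k ≤ (r+1)*(c'+1) := hkhigh
      _ ≤ (r+1)*(pbuild n r n f ∩ Finset.Icc 1 k).card := Nat.mul_le_mul_left _ hcard


lemma blockSet_subset (r : ℕ) (H : Finset ℕ) (s : ℕ) :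
    blockSet r H s ⊆ Finset.Icc 1 (r+1) := by
  intro x hx
  simp only [blockSet, Finset.mem_image, Finset.mem_filter] at hx
  obtain ⟨y, ⟨-, h1, h2⟩, rfl⟩ := hx
  simp only [Finset.mem_Icc]; omega

open Classical in
noncomputable def raneyFinset (n r : ℕ) : Finset (Finset ℕ) :=
  (Finset.Icc 1 ((r+1)*(n+1))).powerset.filter
    (fun H => H.card = n+1 ∧
      ∀ k ∈ Finset.Icc 1 ((r+1)*(n+1)), k ≤ (r+1)*(H ∩ Finset.Icc 1 k).card)

lemma mem_raneyFinset {n r : ℕ} {H : Finset ℕ} :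
    H ∈ raneyFinset n r ↔ H ∈ RaneySet (r+1) (n+1) := by
  classical
  simp only [raneyFinset, Finset.mem_filter, Finset.mem_powerset, Finset.mem_Icc, and_imp]
  show _ ↔ H ⊆ _ ∧ H.card = n+1 ∧ ∀ k, 1 ≤ k → k ≤ (r+1)*(n+1) → _
  constructor
  · rintro ⟨h1, h2, h3⟩
    exact ⟨fun x hx => h1 hx, h2, fun k hk1 hk2 => h3 k hk1 hk2⟩
  · rintro ⟨h1, h2, h3⟩
    exact ⟨fun x hx => h1 hx, h2, fun k hk1 hk2 => h3 k hk1 hk2⟩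

lemma raney_props {n r : ℕ} {H : Finset ℕ} (hH : H ∈ RaneySet (r+1) (n+1)) :
    (∑ s : Fin n, (blockSet r H s).card) = n ∧
    ∀ k < n + 1,
      k ≤ ∑ i ∈ Finset.univ.filter (fun i : Fin n => (i:ℕ) < k), (blockSet r H i).card := by
  have hre := recon hH
  have hbs : ∀ s : Fin n, blockSet r H (s:ℕ) ⊆ Finset.Icc 1 (r+1) :=
    fun s => blockSet_subset r H s
  have hcard := hH.2.1
  have hsum : (∑ s : Fin n, (blockSet r H (s:ℕ)).card) = n := by
    have h1 : H.card = (pbuild n r n fun s => blockSet r H s).card := by rw [← hre]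
    rw [pbuild_card n r n _ hbs, filter_lt_n_eq_univ] at h1
    omega
  refine ⟨hsum, ?_⟩
  intro k hk
  rcases Nat.eq_zero_or_pos k with rfl | hk1
  · simp
  have hcond := hH.2.2 ((r+1)*k+1) (by omega) (by
      have h2 : (r+1)*(k+1) ≤ (r+1)*(n+1) := Nat.mul_le_mul_left _ (by omega)
      have h3 : (r+1)*(k+1) = (r+1)*k + (r+1) := by ring
      omega)
  have hint : H ∩ Finset.Icc 1 ((r+1)*k+1) = pbuild n r k fun s => blockSet r H s := by
    conv_lhs => rw [hre]
    exact pbuild_inter _ hbs (by omega)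
  rw [hint, pbuild_card n r k _ hbs] at hcond
  have hmul : (r+1)*k < (r+1)*(1 + ∑ i ∈ Finset.univ.filter (fun i : Fin n => (i:ℕ) < k),
      (blockSet r H i).card) := by omega
  have := Nat.lt_of_mul_lt_mul_left hmul
  omega

end Stmt17

open Stmt17 in
/-- Raney sequences in `R_{n+1}^{r+1}` correspond bijectively to a sequence
`(a₁,…,aₙ) ∈ A_n` together with, for each `s`, a subset of `{1,…,r+1}` of size `a_s`;
equivalently `|R_{n+1}^{r+1}| = ∑_{(a₁,…,aₙ) ∈ A_n} ∏_{s=1}^n C(r+1, a_s)`. -/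
theorem stmt_17 (n r : ℕ) :
    Nat.card (RaneySet (r + 1) (n + 1)) =
      ∑ a ∈ Finset.univ.filter (fun a : Fin n → Fin (n + 1) =>
          (∑ i, (a i : ℕ)) = n ∧
          ∀ k < n + 1, k ≤ ∑ i ∈ Finset.univ.filter (fun i : Fin n => (i : ℕ) < k), (a i : ℕ)),
        ∏ s, Nat.choose (r + 1) (a s : ℕ) := by
  classical
  have hset : RaneySet (r+1) (n+1) = ↑(raneyFinset n r) := by
    ext H
    rw [Finset.mem_coe, mem_raneyFinset]
  rw [hset, Nat.card_coe_set_eq, Set.ncard_coe_finset]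
  have hT : ((Finset.univ.filter (fun a : Fin n → Fin (n + 1) =>
          (∑ i, (a i : ℕ)) = n ∧
          ∀ k < n + 1, k ≤ ∑ i ∈ Finset.univ.filter (fun i : Fin n => (i : ℕ) < k),
            (a i : ℕ))).sigma
      (fun a => Fintype.piFinset fun s => (Finset.Icc 1 (r+1)).powersetCard (a s : ℕ))).card
      = ∑ a ∈ Finset.univ.filter (fun a : Fin n → Fin (n + 1) =>
          (∑ i, (a i : ℕ)) = n ∧
          ∀ k < n + 1, k ≤ ∑ i ∈ Finset.univ.filter (fun i : Fin n => (i : ℕ) < k), (a i : ℕ)),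
        ∏ s, Nat.choose (r + 1) (a s : ℕ) := by
    rw [Finset.card_sigma]
    refine Finset.sum_congr rfl fun a _ => ?_
    rw [Fintype.card_piFinset]
    refine Finset.prod_congr rfl fun s _ => ?_
    rw [Finset.card_powersetCard, Nat.card_Icc]
    norm_num
  rw [← hT]
  refine Finset.card_bij (fun H _ => (⟨fun s => ⟨min (blockSet r H s).card n, Nat.lt_succ_of_le (min_le_right _ _)⟩,
      fun s => blockSet r H s⟩ :
      Σ _ : Fin n → Fin (n + 1), Fin n → Finset ℕ)) ?_ ?_ ?_
  · intro H hH
    obtain ⟨hsum, hpart⟩ := raney_props (mem_raneyFinset.mp hH)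
    have hle : ∀ s : Fin n, (blockSet r H (s:ℕ)).card ≤ n := fun s => by
      calc (blockSet r H (s:ℕ)).card
          ≤ ∑ t : Fin n, (blockSet r H (t:ℕ)).card :=
            Finset.single_le_sum (f := fun t : Fin n => (blockSet r H (t:ℕ)).card)
              (fun i _ => Nat.zero_le _) (Finset.mem_univ s)
        _ = n := hsum
    have hmin : ∀ s : Fin n, min (blockSet r H (s:ℕ)).card n = (blockSet r H (s:ℕ)).card :=
      fun s => min_eq_left (hle s)
    refine Finset.mem_sigma.mpr ⟨Finset.mem_filter.mpr ⟨Finset.mem_univ _, ?_, ?_⟩, ?_⟩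
    · simpa only [hmin] using hsum
    · intro k hk
      simpa only [hmin] using hpart k hk
    · refine Fintype.mem_piFinset.mpr fun s => ?_
      refine Finset.mem_powersetCard.mpr ⟨blockSet_subset r H s, ?_⟩
      exact (hmin s).symm
  · intro H1 h1 H2 h2 heq
    have hsnd : (fun s : Fin n => blockSet r H1 (s:ℕ)) = fun s : Fin n => blockSet r H2 (s:ℕ) :=
      congrArg Sigma.snd heq
    have e1 := recon (mem_raneyFinset.mp h1)
    have e2 := recon (mem_raneyFinset.mp h2)
    rw [e1, e2, hsnd]
  · rintro ⟨a, f⟩ hb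
    rw [Finset.mem_sigma, Finset.mem_filter] at hb
    obtain ⟨⟨-, hsum, hpart⟩, hf⟩ := hb
    rw [Fintype.mem_piFinset] at hf
    have hfsub : ∀ s, f s ⊆ Finset.Icc 1 (r+1) := fun s => (Finset.mem_powersetCard.mp (hf s)).1
    have hfcard : ∀ s, (f s).card = (a s : ℕ) := fun s => (Finset.mem_powersetCard.mp (hf s)).2
    have hmem : pbuild n r n f ∈ RaneySet (r+1) (n+1) := by
      apply build_mem n r f hfsub
      · rw [Finset.sum_congr rfl (fun s _ => hfcard s)]
        exact hsum
      · intro k hk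
        calc k ≤ ∑ i ∈ Finset.univ.filter (fun i : Fin n => (i:ℕ) < k), (a i : ℕ) := hpart k hk
          _ = ∑ i ∈ Finset.univ.filter (fun i : Fin n => (i:ℕ) < k), (f i).card :=
            Finset.sum_congr rfl fun i _ => (hfcard i).symm
    refine ⟨pbuild n r n f, mem_raneyFinset.mpr hmem, ?_⟩
    have hbl : ∀ s : Fin n, blockSet r (pbuild n r n f) (s:ℕ) = f s :=
      fun s => blockSet_pbuild n r n f hfsub s s.isLt
    apply Sigma.ext
    · funext s
      apply Fin.ext
      show min (blockSet r (pbuild n r n f) (s:ℕ)).card n = (a s : ℕ)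
      rw [hbl s, hfcard s]
      exact min_eq_left (Nat.le_of_lt_succ (a s).isLt)
    · exact heq_of_eq (funext hbl)
end
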